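/- arXiv:0901.3577 — 6 statements merged into one kernel-verified Lean document; each statement's English description precedes it below -/
import Mathlib

section
/- Suppose Assumptions 1 and 2 hold for the system ẋ = f(x,λ,t), λ̇ = g(x,λ,t). Suppose there exist a function ψ of class K that is continuously differentiable and a constant a > 0 such that ψ'(V)·[α(V) + β(V)·φ(ψ(V))] + δ(α̲⁻¹(V)) + ξ(ψ(V)) ≤ 0 for all V ∈ [0,a], where α̲⁻¹ denotes the inverse of α̲. Then the set Ω_a = {(x,λ) ∈ ℝⁿ×ℝ : 0 ≤ V(x) ≤ a and ψ(V(x)) ≤ λ ≤ ψ(a)} is forward invariant: every solution (x(·),λ(·)) of the system with (x(t₀),λ(t₀)) ∈ Ω_a satisfies (x(t),λ(t)) ∈ Ω_a for all t ≥ t₀ in its interval of existence; in particular ‖x(t)‖ ≤ α̲⁻¹(a) and 0 ≤ λ(t) ≤ ψ(a) for all such t. -/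
open Set Filter Topology

noncomputable section

/-- A function of class K: continuous on `[0,∞)`, strictly increasing there, vanishing at `0`. -/
def ClassK (κ : ℝ → ℝ) : Prop :=
  ContinuousOn κ (Set.Ici 0) ∧ StrictMonoOn κ (Set.Ici 0) ∧ κ 0 = 0

/-- A function of class K∞. -/
def ClassKInf (κ : ℝ → ℝ) : Prop :=
  ClassK κ ∧ Filter.Tendsto κ Filter.atTop Filter.atTop


/-- If a function has nonpositive derivative on the interior of `[s,e]`, it decreases. -/
lemma aux_decr {w w' : ℝ → ℝ} {s e : ℝ} (hse : s ≤ e)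
    (hw : ∀ u ∈ Icc s e, HasDerivAt w (w' u) u)
    (h0 : ∀ u ∈ Ioo s e, w' u ≤ 0) : w e ≤ w s := by
  have hcont : ContinuousOn w (Icc s e) := fun u hu =>
    ((hw u hu).continuousAt).continuousWithinAt
  have hanti : AntitoneOn w (Icc s e) := by
    apply antitoneOn_of_deriv_nonpos (convex_Icc s e) hcont
    · intro u hu
      rw [interior_Icc] at hu
      exact ((hw u (Ioo_subset_Icc_self hu)).differentiableAt).differentiableWithinAt
    · intro u hu
      rw [interior_Icc] at hu
      rw [(hw u (Ioo_subset_Icc_self hu)).deriv]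
      exact h0 u hu
  exact hanti (left_mem_Icc.2 hse) (right_mem_Icc.2 hse) hse

/-- Gronwall-type lemma: if `w s ≤ 0` and `w' ≤ C * |w|`, then `w ≤ 0` on `[s,e]`. -/
lemma aux_nonpos {w w' : ℝ → ℝ} {C s e : ℝ} (hse : s ≤ e)
    (hw : ∀ u ∈ Icc s e, HasDerivAt w (w' u) u)
    (h0 : w s ≤ 0)
    (hb : ∀ u ∈ Icc s e, w' u ≤ C * |w u|) :
    ∀ u ∈ Icc s e, w u ≤ 0 := by
  by_contra hcon
  push_neg at hcon
  obtain ⟨u₁, hu₁, hpos⟩ := hcon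
  have hcont : ContinuousOn w (Icc s e) := fun u hu =>
    ((hw u hu).continuousAt).continuousWithinAt
  set S := Icc s u₁ ∩ w ⁻¹' (Iic 0) with hSdef
  have hSne : S.Nonempty := ⟨s, ⟨left_mem_Icc.2 hu₁.1, h0⟩⟩
  have hSbdd : BddAbove S := ⟨u₁, fun u hu => hu.1.2⟩
  have hIccsub : Icc s u₁ ⊆ Icc s e := Icc_subset_Icc le_rfl hu₁.2
  have hSclosed : IsClosed S :=
    (hcont.mono hIccsub).preimage_isClosed_of_isClosed isClosed_Icc isClosed_Iic
  set m := sSup S with hm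
  have hmS : m ∈ S := hSclosed.csSup_mem hSne hSbdd
  have hmu₁ : m < u₁ := by
    rcases lt_or_eq_of_le hmS.1.2 with h | h
    · exact h
    · exact absurd (h ▸ hmS.2) (not_le.2 hpos)
  have hgt : ∀ u ∈ Ioc m u₁, 0 < w u := by
    intro u hu
    by_contra h
    push_neg at h
    have huS : u ∈ S := ⟨⟨le_trans hmS.1.1 (le_of_lt hu.1), hu.2⟩, h⟩
    exact absurd (le_csSup hSbdd huS) (not_le.2 hu.1)
  -- consider v u = w u * exp (-C * u)
  set v : ℝ → ℝ := fun u => w u * Real.exp (-C * u) with hv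
  have hsubIcc : Icc m u₁ ⊆ Icc s e := Icc_subset_Icc hmS.1.1 hu₁.2
  have hvd : ∀ u ∈ Icc m u₁, HasDerivAt v
      (w' u * Real.exp (-C * u) + w u * (-C * Real.exp (-C * u))) u := by
    intro u hu
    have h1 : HasDerivAt (fun u : ℝ => Real.exp (-C * u)) (-C * Real.exp (-C * u)) u := by
      have h := ((hasDerivAt_id u).const_mul (-C)).exp
      simp only [id] at h
      convert h using 1
      ring
    exact (hw u (hsubIcc hu)).mul h1
  have hvle : v u₁ ≤ v m := by
    apply aux_decr hmu₁.le hvd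
    intro u hu
    have hwpos : 0 < w u := hgt u ⟨hu.1, hu.2.le⟩
    have hb' := hb u (hsubIcc (Ioo_subset_Icc_self hu))
    rw [abs_of_pos hwpos] at hb'
    have hE : 0 < Real.exp (-C * u) := Real.exp_pos _
    nlinarith
  have hvm : v m ≤ 0 := mul_nonpos_of_nonpos_of_nonneg hmS.2 (Real.exp_pos _).le
  have hvu₁ : 0 < v u₁ := mul_pos hpos (Real.exp_pos _)
  linarith

/-- Continuity of `κ ∘ h` at a point when `κ` is continuous on `[0,∞)` and `h ≥ 0`. -/
lemma aux_contAt {κ : ℝ → ℝ} (hκ : ContinuousOn κ (Ici 0)) {h : ℝ → ℝ} {t : ℝ}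
    (hh : ContinuousAt h t) (h0 : ∀ u, 0 ≤ h u) :
    ContinuousAt (fun u => κ (h u)) t := by
  have h1 : Tendsto h (𝓝 t) (𝓝[Ici 0] (h t)) :=
    tendsto_nhdsWithin_of_tendsto_nhds_of_eventually_within _ hh
      (Eventually.of_forall fun u => h0 u)
  exact (hκ (h t) (h0 t)).tendsto.comp h1

/-- Nonnegativity of the derivative of a `C¹` function strictly monotone on `[0,∞)`. -/
lemma aux_deriv_nonneg {ψ : ℝ → ℝ} (hmono : StrictMonoOn ψ (Ici 0)) (hψ : ContDiff ℝ 1 ψ)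
    {v : ℝ} (hv : 0 ≤ v) : 0 ≤ deriv ψ v := by
  have hd : HasDerivAt ψ (deriv ψ v) v := (hψ.differentiable one_ne_zero v).hasDerivAt
  have hslope := hasDerivAt_iff_tendsto_slope.1 hd
  have hslope' : Tendsto (slope ψ v) (𝓝[>] v) (𝓝 (deriv ψ v)) :=
    hslope.mono_left (nhdsWithin_mono v fun y hy => ne_of_gt hy)
  refine ge_of_tendsto hslope' ?_
  filter_upwards [self_mem_nhdsWithin] with y hy
  have hlt : ψ v < ψ y := hmono hv (le_trans hv (le_of_lt hy)) hy
  rw [slope_def_field]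
  apply div_nonneg (by linarith)
  simp only [mem_Ioi] at hy
  linarith


/-- **Boundedness Lemma 1 (forward invariance part).**
Under Assumptions 1 and 2, if there are a `C¹` class-K function `ψ` and `a > 0` with
`ψ'(V)[α(V)+β(V)φ(ψ(V))] + δ(α̲⁻¹(V)) + ξ(ψ(V)) ≤ 0` on `[0,a]`, then the set
`Ω_a = {(x,λ) : 0 ≤ V(x) ≤ a, ψ(V(x)) ≤ λ ≤ ψ(a)}` is forward invariant; in particular
`‖x(t)‖ ≤ α̲⁻¹(a)` and `0 ≤ λ(t) ≤ ψ(a)` along solutions starting in `Ω_a`. -/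
theorem boundedness_lemma_one_invariance
    {n : ℕ}
    (f : EuclideanSpace ℝ (Fin n) → ℝ → ℝ → EuclideanSpace ℝ (Fin n))
    (g : EuclideanSpace ℝ (Fin n) → ℝ → ℝ → ℝ)
    (hf_cont : Continuous fun q : EuclideanSpace ℝ (Fin n) × ℝ × ℝ => f q.1 q.2.1 q.2.2)
    (hg_cont : Continuous fun q : EuclideanSpace ℝ (Fin n) × ℝ × ℝ => g q.1 q.2.1 q.2.2)
    (hf_lip : ∀ p : EuclideanSpace ℝ (Fin n) × ℝ, ∃ s ∈ nhds p, ∃ L : NNReal,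
      ∀ t : ℝ, LipschitzOnWith L (fun q : EuclideanSpace ℝ (Fin n) × ℝ => f q.1 q.2 t) s)
    (hg_lip : ∀ p : EuclideanSpace ℝ (Fin n) × ℝ, ∃ s ∈ nhds p, ∃ L : NNReal,
      ∀ t : ℝ, LipschitzOnWith L (fun q : EuclideanSpace ℝ (Fin n) × ℝ => g q.1 q.2 t) s)
    -- Assumption 1
    (V : EuclideanSpace ℝ (Fin n) → ℝ) (hV : ContDiff ℝ 1 V)
    (αlow αhigh : ℝ → ℝ) (hαlow : ClassKInf αlow) (hαhigh : ClassKInf αhigh)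
    (α β : ℝ → ℝ) (hα : Continuous α) (hβ : Continuous β)
    (φ : ℝ → ℝ) (hφ : ClassK φ)
    (hVbound : ∀ x, αlow ‖x‖ ≤ V x ∧ V x ≤ αhigh ‖x‖)
    (hVdot : ∀ x lam t, fderiv ℝ V x (f x lam t) ≤ α (V x) + β (V x) * φ |lam|)
    -- Assumption 2
    (δ ξ : ℝ → ℝ) (hδ : ClassK δ) (hξ : ClassK ξ)
    (hg_bound : ∀ (x : EuclideanSpace ℝ (Fin n)) (t : ℝ), ∀ lam ≥ (0:ℝ),
      -ξ |lam| - δ ‖x‖ ≤ g x lam t ∧ g x lam t ≤ 0)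
    -- the inverse of α̲ on `[0,∞)`
    (αlowInv : ℝ → ℝ)
    (hinv1 : ∀ s ∈ Set.Ici (0:ℝ), αlowInv (αlow s) = s)
    (hinv2 : ∀ s ∈ Set.Ici (0:ℝ), αlow (αlowInv s) = s)
    -- the function ψ and the constant a
    (ψ : ℝ → ℝ) (hψK : ClassK ψ) (hψC1 : ContDiff ℝ 1 ψ)
    (a : ℝ) (ha : 0 < a)
    (hcond : ∀ v ∈ Set.Icc (0:ℝ) a,
      deriv ψ v * (α v + β v * φ (ψ v)) + δ (αlowInv v) + ξ (ψ v) ≤ 0)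
    -- a solution on [t₀, T)
    (t₀ T : ℝ) (x : ℝ → EuclideanSpace ℝ (Fin n)) (lam : ℝ → ℝ)
    (hsol : ∀ t ∈ Set.Ico t₀ T,
      HasDerivAt x (f (x t) (lam t) t) t ∧ HasDerivAt lam (g (x t) (lam t) t) t)
    -- with initial condition in Ω_a
    (hinit : V (x t₀) ∈ Set.Icc (0:ℝ) a ∧ ψ (V (x t₀)) ≤ lam t₀ ∧ lam t₀ ≤ ψ a) :
    ∀ t ∈ Set.Ico t₀ T,
      (V (x t) ∈ Set.Icc (0:ℝ) a ∧ ψ (V (x t)) ≤ lam t ∧ lam t ≤ ψ a) ∧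
      ‖x t‖ ≤ αlowInv a ∧ 0 ≤ lam t ∧ lam t ≤ ψ a := by
  classical
  obtain ⟨⟨hαlowC, hαlowM, hαlow0⟩, hαlowT⟩ := hαlow
  obtain ⟨hφC, hφM, hφ0⟩ := hφ
  obtain ⟨hδC, hδM, hδ0⟩ := hδ
  obtain ⟨hξC, hξM, hξ0⟩ := hξ
  obtain ⟨hψMC, hψM, hψ0⟩ := hψK
  obtain ⟨hV0a, hVψ0, hVψa⟩ := hinit
  -- basic positivity facts
  have hVnonneg : ∀ y, 0 ≤ V y := by
    intro y
    have h1 : αlow 0 ≤ αlow ‖y‖ :=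
      hαlowM.monotoneOn self_mem_Ici (norm_nonneg y) (norm_nonneg y)
    have h2 := (hVbound y).1
    rw [hαlow0] at h1
    linarith
  have hψnn : ∀ v, 0 ≤ v → 0 ≤ ψ v := by
    intro v hv
    rcases eq_or_lt_of_le hv with h | h
    · rw [← h, hψ0]
    · rw [← hψ0]; exact (hψM self_mem_Ici hv h).le
  have hξnn : ∀ v, 0 ≤ v → 0 ≤ ξ v := by
    intro v hv
    rcases eq_or_lt_of_le hv with h | h
    · rw [← h, hξ0]
    · rw [← hξ0]; exact (hξM self_mem_Ici hv h).le
  have hψa_pos : 0 < ψ a := by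
    rw [← hψ0]; exact hψM self_mem_Ici ha.le ha
  -- αlowInv facts
  have hsurj : ∀ c, 0 ≤ c → ∃ s, 0 ≤ s ∧ αlow s = c := by
    intro c hc
    obtain ⟨M, hMc, hM0⟩ := ((hαlowT.eventually_ge_atTop c).and (eventually_ge_atTop 0)).exists
    have hmem : c ∈ Icc (αlow 0) (αlow M) := ⟨by rw [hαlow0]; exact hc, hMc⟩
    obtain ⟨s, hs, hseq⟩ := intermediate_value_Icc hM0 (hαlowC.mono Icc_subset_Ici_self) hmem
    exact ⟨s, hs.1, hseq⟩
  have hinvnn : ∀ c, 0 ≤ c → 0 ≤ αlowInv c := by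
    intro c hc
    obtain ⟨s, hs0, hseq⟩ := hsurj c hc
    rw [← hseq, hinv1 s hs0]
    exact hs0
  have hle_inv : ∀ s c, 0 ≤ s → 0 ≤ c → αlow s ≤ c → s ≤ αlowInv c := by
    intro s c hs hc hsc
    by_contra h
    push_neg at h
    have h2 := hαlowM (hinvnn c hc) hs h
    rw [hinv2 c hc] at h2
    linarith
  have hnorm_le : ∀ (y) (c : ℝ), 0 ≤ c → V y ≤ c → ‖y‖ ≤ αlowInv c := by
    intro y c hc hyc
    exact hle_inv ‖y‖ c (norm_nonneg y) hc (le_trans (hVbound y).1 hyc)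
  have hδnorm : ∀ y, δ ‖y‖ ≤ δ (αlowInv (V y)) := by
    intro y
    exact hδM.monotoneOn (norm_nonneg y) (hinvnn _ (hVnonneg y))
      (hnorm_le y (V y) (hVnonneg y) le_rfl)
  have hψd : ∀ v, 0 ≤ v → 0 ≤ deriv ψ v := fun v hv => aux_deriv_nonneg hψM hψC1 hv
  -- strict negativity at a
  have hinva_pos : 0 < αlowInv a := by
    rcases eq_or_lt_of_le (hinvnn a ha.le) with h | h
    · exfalso
      have h2 := hinv2 a ha.le
      rw [← h, hαlow0] at h2
      linarith
    · exact h
  have hδa_pos : 0 < δ (αlowInv a) := by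
    rw [← hδ0]; exact hδM self_mem_Ici hinva_pos.le hinva_pos
  have hha : α a + β a * φ (ψ a) < 0 := by
    by_contra hcc
    push_neg at hcc
    have h1 := hcond a ⟨ha.le, le_rfl⟩
    have h2 := hξnn (ψ a) hψa_pos.le
    have h3 := mul_nonneg (hψd a ha.le) hcc
    linarith
  -- continuity/differentiability along the solution
  have hxc : ∀ u ∈ Ico t₀ T, ContinuousAt x u := fun u hu => ((hsol u hu).1).continuousAt
  have hlamc : ∀ u ∈ Ico t₀ T, ContinuousAt lam u := fun u hu => ((hsol u hu).2).continuousAt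
  have hVxc : ∀ u ∈ Ico t₀ T, ContinuousAt (fun u => V (x u)) u := fun u hu =>
    (hV.continuous.continuousAt).comp (hxc u hu)
  have hμc : ∀ u ∈ Ico t₀ T, ContinuousAt (fun u => ψ (V (x u))) u := fun u hu =>
    (hψC1.continuous.continuousAt).comp (hVxc u hu)
  have hVd : ∀ u ∈ Ico t₀ T, HasDerivAt (fun u => V (x u))
      (fderiv ℝ V (x u) (f (x u) (lam u) u)) u := fun u hu =>
    ((hV.differentiable one_ne_zero (x u)).hasFDerivAt).comp_hasDerivAt u (hsol u hu).1
  have hμd : ∀ u ∈ Ico t₀ T, HasDerivAt (fun u => ψ (V (x u)))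
      (deriv ψ (V (x u)) * fderiv ℝ V (x u) (f (x u) (lam u) u)) u := by
    intro u hu
    have h1 : HasDerivAt ψ (deriv ψ (V (x u))) (V (x u)) :=
      (hψC1.differentiable one_ne_zero (V (x u))).hasDerivAt
    exact h1.comp u (hVd u hu)
  -- Step 1 : λ ≤ ψ a globally on [t₀, T)
  have hlam_le : ∀ u ∈ Ico t₀ T, lam u ≤ ψ a := by
    intro t₄ ht₄
    by_contra hgt
    push_neg at hgt
    have hIccT : Icc t₀ t₄ ⊆ Ico t₀ T := fun u hu => ⟨hu.1, lt_of_le_of_lt hu.2 ht₄.2⟩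
    have hlamcont : ContinuousOn lam (Icc t₀ t₄) := fun u hu =>
      (hlamc u (hIccT hu)).continuousWithinAt
    have hS1closed : IsClosed (Icc t₀ t₄ ∩ lam ⁻¹' (Iic (ψ a))) :=
      hlamcont.preimage_isClosed_of_isClosed isClosed_Icc isClosed_Iic
    have hS1ne : (Icc t₀ t₄ ∩ lam ⁻¹' (Iic (ψ a))).Nonempty :=
      ⟨t₀, left_mem_Icc.2 ht₄.1, hVψa⟩
    have hS1bdd : BddAbove (Icc t₀ t₄ ∩ lam ⁻¹' (Iic (ψ a))) := ⟨t₄, fun u hu => hu.1.2⟩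
    set m := sSup (Icc t₀ t₄ ∩ lam ⁻¹' (Iic (ψ a))) with hm
    have hmS : m ∈ Icc t₀ t₄ ∩ lam ⁻¹' (Iic (ψ a)) := hS1closed.csSup_mem hS1ne hS1bdd
    have hmlt : m < t₄ := by
      rcases lt_or_eq_of_le hmS.1.2 with h | h
      · exact h
      · exfalso
        have : lam t₄ ≤ ψ a := h ▸ hmS.2
        linarith
    have hpos : ∀ u ∈ Ioc m t₄, ψ a < lam u := by
      intro u hu
      by_contra h
      push_neg at h
      exact absurd (le_csSup hS1bdd ⟨⟨le_trans hmS.1.1 hu.1.le, hu.2⟩, h⟩) (not_le.2 hu.1)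
    have hdecr : lam t₄ ≤ lam m := by
      apply aux_decr (w' := fun u => g (x u) (lam u) u) hmlt.le
      · intro u hu
        exact (hsol u (hIccT ⟨le_trans hmS.1.1 hu.1, hu.2⟩)).2
      · intro u hu
        have h1 : 0 ≤ lam u := le_trans hψa_pos.le (hpos u ⟨hu.1, hu.2.le⟩).le
        exact (hg_bound (x u) u (lam u) h1).2
    have h2 := hpos t₄ ⟨hmlt, le_rfl⟩
    have h3 : lam m ≤ ψ a := hmS.2
    linarith
  -- main induction: forward invariance of { V ≤ a, ψ(V) ≤ λ }
  have key : ∀ b ∈ Ico t₀ T, ∀ τ ∈ Icc t₀ b, V (x τ) ≤ a ∧ ψ (V (x τ)) ≤ lam τ := by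
    intro b hb
    have hbT : b < T := hb.2
    have ht₀b : t₀ ≤ b := hb.1
    set S : Set ℝ :=
      {τ | τ ∈ Icc t₀ b ∧ ∀ u ∈ Icc t₀ τ, V (x u) ≤ a ∧ ψ (V (x u)) ≤ lam u} with hS
    have hPt₀ : V (x t₀) ≤ a ∧ ψ (V (x t₀)) ≤ lam t₀ := ⟨hV0a.2, hVψ0⟩
    have ht₀S : t₀ ∈ S := by
      refine ⟨left_mem_Icc.2 ht₀b, fun u hu => ?_⟩
      have h1 : u = t₀ := le_antisymm hu.2 hu.1
      rw [h1]; exact hPt₀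
    have hSne : S.Nonempty := ⟨t₀, ht₀S⟩
    have hSbdd : BddAbove S := ⟨b, fun τ hτ => hτ.1.2⟩
    set m := sSup S with hm
    have hmt₀ : t₀ ≤ m := le_csSup hSbdd ht₀S
    have hmb : m ≤ b := csSup_le hSne fun τ hτ => hτ.1.2
    have hmT : m ∈ Ico t₀ T := ⟨hmt₀, lt_of_le_of_lt hmb hbT⟩
    have hlt : ∀ u ∈ Ico t₀ m, V (x u) ≤ a ∧ ψ (V (x u)) ≤ lam u := by
      intro u hu
      obtain ⟨τ, hτS, hτu⟩ := exists_lt_of_lt_csSup hSne hu.2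
      exact hτS.2 u ⟨hu.1, hτu.le⟩
    have hPm : V (x m) ≤ a ∧ ψ (V (x m)) ≤ lam m := by
      rcases eq_or_lt_of_le hmt₀ with heq | hlt₀
      · rw [← heq]; exact hPt₀
      · have hmem : Ioo t₀ m ∈ 𝓝[<] m := Ioo_mem_nhdsLT_of_mem ⟨hlt₀, le_rfl⟩
        constructor
        · refine le_of_tendsto ((hVxc m hmT).tendsto.mono_left (nhdsWithin_le_nhds : 𝓝[<] m ≤ 𝓝 m)) ?_
          filter_upwards [hmem] with u hu
          exact (hlt u ⟨hu.1.le, hu.2⟩).1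
        · have htd : Tendsto (fun u => ψ (V (x u)) - lam u) (𝓝[<] m)
              (𝓝 (ψ (V (x m)) - lam m)) :=
            (((hμc m hmT).sub (hlamc m hmT)).tendsto).mono_left (nhdsWithin_le_nhds : 𝓝[<] m ≤ 𝓝 m)
          have h0 : ψ (V (x m)) - lam m ≤ 0 := by
            refine le_of_tendsto htd ?_
            filter_upwards [hmem] with u hu
            have h1 := (hlt u ⟨hu.1.le, hu.2⟩).2
            linarith
          linarith
    have hmain : m = b := by
      by_contra hne'
      have hmb' : m < b := lt_of_le_of_ne hmb hne'
      -- Step (i) : V ∘ x ≤ a on a right-neighborhood of m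
      obtain ⟨η₀, hη₀, hVa⟩ : ∃ η₀ > 0, ∀ u ∈ Icc m (min (m + η₀) b), V (x u) ≤ a := by
        rcases lt_or_eq_of_le hPm.1 with hlt' | heq'
        · have hnb : {u | V (x u) < a} ∈ 𝓝 m :=
            (hVxc m hmT).preimage_mem_nhds (Iio_mem_nhds hlt')
          obtain ⟨ε, hε, hball⟩ := Metric.mem_nhds_iff.1 hnb
          refine ⟨ε / 2, by linarith, ?_⟩
          intro u hu
          have h1 : dist u m < ε := by
            rw [Real.dist_eq, abs_of_nonneg (by linarith [hu.1] : (0:ℝ) ≤ u - m)]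
            have h2 : u ≤ m + ε/2 := le_trans hu.2 (min_le_left _ _)
            linarith
          have h3 := hball (Metric.mem_ball.2 h1)
          simp only [mem_setOf_eq] at h3
          exact h3.le
        · -- corner case : V (x m) = a
          have hlamm : lam m = ψ a := by
            have h1 := hlam_le m hmT
            have h2 := hPm.2
            rw [heq'] at h2
            linarith
          have hqc : ContinuousAt (fun u => α (V (x u)) + β (V (x u)) * φ |lam u|) m := by
            have h1 : ContinuousAt (fun u => |lam u|) m :=
              (continuous_abs.continuousAt).comp (hlamc m hmT)
            have h2 : ContinuousAt (fun u => φ |lam u|) m :=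
              aux_contAt hφC h1 (fun u => abs_nonneg _)
            exact (hα.continuousAt.comp (hVxc m hmT)).add
              ((hβ.continuousAt.comp (hVxc m hmT)).mul h2)
          have hqm : α (V (x m)) + β (V (x m)) * φ |lam m| < 0 := by
            rw [heq', hlamm, abs_of_pos hψa_pos]
            exact hha
          have hnb : {u | α (V (x u)) + β (V (x u)) * φ |lam u| < 0} ∈ 𝓝 m :=
            hqc.preimage_mem_nhds (Iio_mem_nhds hqm)
          obtain ⟨ε, hε, hball⟩ := Metric.mem_nhds_iff.1 hnb
          refine ⟨ε / 2, by linarith, ?_⟩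
          intro u hu
          have hIcoT : Icc m u ⊆ Ico t₀ T := fun u' hu' =>
            ⟨le_trans hmt₀ hu'.1,
              lt_of_le_of_lt (le_trans hu'.2 (le_trans hu.2 (min_le_right _ _))) hbT⟩
          have hdecr : V (x u) ≤ V (x m) := by
            apply aux_decr (w' := fun u' => fderiv ℝ V (x u') (f (x u') (lam u') u')) hu.1
            · intro u' hu'
              exact hVd u' (hIcoT hu')
            · intro u' hu'
              have hmem : u' ∈ Metric.ball m ε := by
                rw [Metric.mem_ball, Real.dist_eq,
                  abs_of_nonneg (by linarith [hu'.1.le] : (0:ℝ) ≤ u' - m)]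
                have h2 : u' ≤ m + ε/2 := le_trans hu'.2.le (le_trans hu.2 (min_le_left _ _))
                linarith
              have hq := hball hmem
              simp only [mem_setOf_eq] at hq
              exact le_of_lt (lt_of_le_of_lt (hVdot (x u') (lam u') u') hq)
          rw [heq'] at hdecr
          exact hdecr
      -- Step (ii) : barrier ψ(V) ≤ λ on a right-neighborhood of m
      obtain ⟨η₁, hη₁, hη₁₀, hbar⟩ : ∃ η₁ > 0, η₁ ≤ η₀ ∧
          ∀ u ∈ Icc m (min (m + η₁) b), ψ (V (x u)) ≤ lam u := by
        rcases lt_or_eq_of_le hPm.2 with hlt' | heq'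
        · have hc : ContinuousAt (fun u => ψ (V (x u)) - lam u) m :=
            (hμc m hmT).sub (hlamc m hmT)
          have hnb : {u | ψ (V (x u)) - lam u < 0} ∈ 𝓝 m :=
            hc.preimage_mem_nhds (Iio_mem_nhds (by linarith : ψ (V (x m)) - lam m < 0))
          obtain ⟨ε, hε, hball⟩ := Metric.mem_nhds_iff.1 hnb
          refine ⟨min (ε/2) η₀, lt_min (by linarith) hη₀, min_le_right _ _, ?_⟩
          intro u hu
          have hmem : u ∈ Metric.ball m ε := by
            rw [Metric.mem_ball, Real.dist_eq,
              abs_of_nonneg (by linarith [hu.1] : (0:ℝ) ≤ u - m)]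
            have h2 : u ≤ m + min (ε/2) η₀ := le_trans hu.2 (min_le_left _ _)
            have h3 : min (ε/2) η₀ ≤ ε/2 := min_le_left _ _
            linarith
          have h4 := hball hmem
          simp only [mem_setOf_eq] at h4
          linarith
        · -- core case : the trajectory touches the barrier at time m
          obtain ⟨sf, hsf, Lf, hLf⟩ := hf_lip (x m, lam m)
          obtain ⟨sg, hsg, Lg, hLg⟩ := hg_lip (x m, lam m)
          obtain ⟨r, hr, hrsub⟩ := Metric.mem_nhds_iff.1 (inter_mem hsf hsg)
          have hc1 : ContinuousAt (fun u => deriv ψ (V (x u)) * ‖fderiv ℝ V (x u)‖) m := by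
            have h1 : ContinuousAt (fun u => deriv ψ (V (x u))) m :=
              ((hψC1.continuous_deriv le_rfl).continuousAt).comp (hVxc m hmT)
            have h2 : ContinuousAt (fun u => ‖fderiv ℝ V (x u)‖) m :=
              (((hV.continuous_fderiv one_ne_zero).continuousAt).comp (hxc m hmT)).norm
            exact h1.mul h2
          have hnb1 : {u | deriv ψ (V (x u)) * ‖fderiv ℝ V (x u)‖
              < deriv ψ (V (x m)) * ‖fderiv ℝ V (x m)‖ + 1} ∈ 𝓝 m :=
            hc1.preimage_mem_nhds (Iio_mem_nhds (by linarith))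
          have hc2 : ContinuousAt (fun u => ((x u, lam u) : EuclideanSpace ℝ (Fin n) × ℝ)) m :=
            (hxc m hmT).prodMk (hlamc m hmT)
          have hc3 : ContinuousAt
              (fun u => ((x u, ψ (V (x u))) : EuclideanSpace ℝ (Fin n) × ℝ)) m :=
            (hxc m hmT).prodMk (hμc m hmT)
          have hnb2 : {u | (x u, lam u) ∈ Metric.ball ((x m, lam m) :
              EuclideanSpace ℝ (Fin n) × ℝ) r} ∈ 𝓝 m :=
            hc2.preimage_mem_nhds (Metric.ball_mem_nhds _ hr)
          have hnb3 : {u | (x u, ψ (V (x u))) ∈ Metric.ball ((x m, lam m) :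
              EuclideanSpace ℝ (Fin n) × ℝ) r} ∈ 𝓝 m := by
            apply hc3.preimage_mem_nhds
            rw [heq']
            exact Metric.ball_mem_nhds _ hr
          obtain ⟨ε, hε, hball⟩ :=
            Metric.mem_nhds_iff.1 (inter_mem hnb1 (inter_mem hnb2 hnb3))
          refine ⟨min (ε/2) η₀, lt_min (by linarith) hη₀, min_le_right _ _, ?_⟩
          set η := min (ε/2) η₀ with hηdef
          set z := min (m + η) b with hzdef
          have hηpos : 0 < η := lt_min (by linarith) hη₀
          have hmz : m ≤ z := le_min (by linarith) hmb'.le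
          have husub : ∀ u ∈ Icc m z, u ∈ Ico t₀ T := fun u hu =>
            ⟨le_trans hmt₀ hu.1, lt_of_le_of_lt (le_trans hu.2 (min_le_right _ _)) hbT⟩
          have huball : ∀ u ∈ Icc m z, u ∈ Metric.ball m ε := by
            intro u hu
            rw [Metric.mem_ball, Real.dist_eq,
              abs_of_nonneg (by linarith [hu.1] : (0:ℝ) ≤ u - m)]
            have h2 : u ≤ m + η := le_trans hu.2 (min_le_left _ _)
            have h3 : η ≤ ε/2 := min_le_left _ _
            linarith
          have hVua : ∀ u ∈ Icc m z, V (x u) ≤ a := by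
            intro u hu
            apply hVa u
            refine ⟨hu.1, le_trans hu.2 (min_le_min ?_ le_rfl)⟩
            have := min_le_right (ε/2) η₀
            linarith
          have hwD : ∀ u ∈ Icc m z, HasDerivAt (fun u' => ψ (V (x u')) - lam u')
              (deriv ψ (V (x u)) * fderiv ℝ V (x u) (f (x u) (lam u) u)
                - g (x u) (lam u) u) u := fun u hu =>
            (hμd u (husub u hu)).sub (hsol u (husub u hu)).2
          have hwm : ψ (V (x m)) - lam m ≤ 0 := by rw [heq']; simp
          have hkey : ∀ u ∈ Icc m z,
              deriv ψ (V (x u)) * fderiv ℝ V (x u) (f (x u) (lam u) u)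
                - g (x u) (lam u) u
              ≤ ((deriv ψ (V (x m)) * ‖fderiv ℝ V (x m)‖ + 1) * Lf + Lg)
                * |ψ (V (x u)) - lam u| := by
            intro u hu
            obtain ⟨hcond1, hcond2, hcond3⟩ := hball (huball u hu)
            simp only [mem_setOf_eq] at hcond1 hcond2 hcond3
            have hv0 : 0 ≤ V (x u) := hVnonneg (x u)
            have hva : V (x u) ≤ a := hVua u hu
            have hμ0 : 0 ≤ ψ (V (x u)) := hψnn _ hv0
            have hdψ : 0 ≤ deriv ψ (V (x u)) := hψd _ hv0
            have hball1 : ((x u, lam u) : EuclideanSpace ℝ (Fin n) × ℝ) ∈ sf ∩ sg :=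
              hrsub hcond2
            have hball2 : ((x u, ψ (V (x u))) : EuclideanSpace ℝ (Fin n) × ℝ) ∈ sf ∩ sg :=
              hrsub hcond3
            have hdistp : dist ((x u, lam u) : EuclideanSpace ℝ (Fin n) × ℝ)
                ((x u, ψ (V (x u))) : EuclideanSpace ℝ (Fin n) × ℝ)
                = |ψ (V (x u)) - lam u| := by
              rw [Prod.dist_eq, dist_self, Real.dist_eq, abs_sub_comm]
              exact max_eq_right (abs_nonneg _)
            have hfd : ‖f (x u) (lam u) u - f (x u) (ψ (V (x u))) u‖
                ≤ Lf * |ψ (V (x u)) - lam u| := by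
              have h1 := (hLf u).dist_le_mul _ hball1.1 _ hball2.1
              rw [hdistp] at h1
              simpa [dist_eq_norm] using h1
            have hgd : |g (x u) (lam u) u - g (x u) (ψ (V (x u))) u|
                ≤ Lg * |ψ (V (x u)) - lam u| := by
              have h1 := (hLg u).dist_le_mul _ hball1.2 _ hball2.2
              rw [hdistp] at h1
              simpa [Real.dist_eq] using h1
            have hA1 : fderiv ℝ V (x u) (f (x u) (lam u) u)
                ≤ fderiv ℝ V (x u) (f (x u) (ψ (V (x u))) u)
                  + ‖fderiv ℝ V (x u)‖ * (Lf * |ψ (V (x u)) - lam u|) := by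
              have h1 : fderiv ℝ V (x u) (f (x u) (lam u) u)
                  - fderiv ℝ V (x u) (f (x u) (ψ (V (x u))) u)
                  = fderiv ℝ V (x u) (f (x u) (lam u) u - f (x u) (ψ (V (x u))) u) :=
                (map_sub _ _ _).symm
              have h2 : fderiv ℝ V (x u) (f (x u) (lam u) u - f (x u) (ψ (V (x u))) u)
                  ≤ ‖fderiv ℝ V (x u)‖ * ‖f (x u) (lam u) u - f (x u) (ψ (V (x u))) u‖ := by
                refine le_trans (le_abs_self _) ?_
                rw [← Real.norm_eq_abs]
                exact (fderiv ℝ V (x u)).le_opNorm _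
              have h3 : ‖fderiv ℝ V (x u)‖ * ‖f (x u) (lam u) u - f (x u) (ψ (V (x u))) u‖
                  ≤ ‖fderiv ℝ V (x u)‖ * (Lf * |ψ (V (x u)) - lam u|) :=
                mul_le_mul_of_nonneg_left hfd (norm_nonneg _)
              linarith
            have hA2 : fderiv ℝ V (x u) (f (x u) (ψ (V (x u))) u)
                ≤ α (V (x u)) + β (V (x u)) * φ (ψ (V (x u))) := by
              have h1 := hVdot (x u) (ψ (V (x u))) u
              rwa [abs_of_nonneg hμ0] at h1
            have hA3 := hcond (V (x u)) ⟨hv0, hva⟩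
            have hA5 : -g (x u) (ψ (V (x u))) u ≤ ξ (ψ (V (x u))) + δ ‖x u‖ := by
              have h1 := (hg_bound (x u) u (ψ (V (x u))) hμ0).1
              rw [abs_of_nonneg hμ0] at h1
              linarith
            have hA6 := hδnorm (x u)
            have hC₁u : deriv ψ (V (x u)) * ‖fderiv ℝ V (x u)‖
                ≤ deriv ψ (V (x m)) * ‖fderiv ℝ V (x m)‖ + 1 := hcond1.le
            have e1 : deriv ψ (V (x u)) * fderiv ℝ V (x u) (f (x u) (lam u) u)
                ≤ deriv ψ (V (x u)) * (α (V (x u)) + β (V (x u)) * φ (ψ (V (x u))))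
                  + (deriv ψ (V (x m)) * ‖fderiv ℝ V (x m)‖ + 1)
                    * (Lf * |ψ (V (x u)) - lam u|) := by
              have h1 := mul_le_mul_of_nonneg_left hA1 hdψ
              have h2 := mul_le_mul_of_nonneg_left hA2 hdψ
              rw [mul_add, ← mul_assoc] at h1
              have h3 : deriv ψ (V (x u)) * ‖fderiv ℝ V (x u)‖
                    * (Lf * |ψ (V (x u)) - lam u|)
                  ≤ (deriv ψ (V (x m)) * ‖fderiv ℝ V (x m)‖ + 1)
                    * (Lf * |ψ (V (x u)) - lam u|) :=
                mul_le_mul_of_nonneg_right hC₁u (mul_nonneg Lf.coe_nonneg (abs_nonneg _))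
              linarith
            have e2 : -g (x u) (lam u) u
                ≤ -g (x u) (ψ (V (x u))) u + Lg * |ψ (V (x u)) - lam u| := by
              have h1 : g (x u) (ψ (V (x u))) u - g (x u) (lam u) u
                  ≤ Lg * |ψ (V (x u)) - lam u| := by
                refine le_trans (le_abs_self _) ?_
                rw [abs_sub_comm]
                exact hgd
              linarith
            have hfinal : deriv ψ (V (x u)) * (α (V (x u)) + β (V (x u)) * φ (ψ (V (x u))))
                + ξ (ψ (V (x u))) + δ ‖x u‖ ≤ 0 := by linarith
            have hring : ((deriv ψ (V (x m)) * ‖fderiv ℝ V (x m)‖ + 1) * Lf + Lg)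
                * |ψ (V (x u)) - lam u|
                = (deriv ψ (V (x m)) * ‖fderiv ℝ V (x m)‖ + 1)
                  * (Lf * |ψ (V (x u)) - lam u|) + Lg * |ψ (V (x u)) - lam u| := by ring
            rw [hring]
            linarith
          have hgron := aux_nonpos hmz hwD hwm hkey
          intro u hu
          have h1 : ψ (V (x u)) - lam u ≤ 0 := hgron u hu
          linarith
      -- extend beyond m : contradiction with sup
      have hmzlt : m < min (m + η₁) b := lt_min (by linarith) hmb'
      have hzS : min (m + η₁) b ∈ S := by
        refine ⟨⟨le_trans hmt₀ hmzlt.le, min_le_right _ _⟩, ?_⟩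
        intro u hu
        rcases lt_or_ge u m with h | h
        · exact hlt u ⟨hu.1, h⟩
        · constructor
          · apply hVa u
            refine ⟨h, le_trans hu.2 (min_le_min (by linarith) le_rfl)⟩
          · exact hbar u ⟨h, hu.2⟩
      exact absurd (le_csSup hSbdd hzS) (not_le.2 hmzlt)
    intro τ hτ
    rcases lt_or_eq_of_le hτ.2 with h | h
    · exact hlt τ ⟨hτ.1, by rw [hmain]; exact h⟩
    · have hτm : τ = m := h.trans hmain.symm
      rw [hτm]
      exact hPm
  -- conclusion
  intro t ht
  have hP : V (x t) ≤ a ∧ ψ (V (x t)) ≤ lam t := key t ht t (right_mem_Icc.2 ht.1)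
  have hlam0 : 0 ≤ lam t := le_trans (hψnn _ (hVnonneg (x t))) hP.2
  have hlamψa := hlam_le t ht
  exact ⟨⟨⟨hVnonneg (x t), hP.1⟩, hP.2, hlamψa⟩,
    hnorm_le (x t) a ha.le hP.1, hlam0, hlamψa⟩
end
end

section
/- Consider the system ẋ = f(x,λ,t), λ̇ = u, where u is a control input, and suppose f satisfies Assumption 1 with the function φ of class K being locally Lipschitz and with α(V) = −α₀(V) for some function α₀ of class P. Then there exist a continuous function g : ℝⁿ×ℝ×ℝ → ℝ, a function ψ of class K∞ and a constant a > 0 such that, for the closed-loop system ẋ = f(x,λ,t), λ̇ = g(x,λ,t), the set Ω_a = {(x,λ) : 0 ≤ V(x) ≤ a and ψ(V(x)) ≤ λ ≤ ψ(a)} is forward invariant, all solutions passing through Ω_a are bounded in forward time, and every such solution defined on [t₀,∞) satisfies λ(t) → λ' for some λ' ∈ [0,ψ(a)] and ‖x(t)‖ → 0 as t → ∞. -/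
open Set Filter Topology

noncomputable section

/-- A function of class P: continuous on `[0,∞)`, vanishing at `0`, positive on `(0,∞)`. -/
def ClassP (p : ℝ → ℝ) : Prop :=
  ContinuousOn p (Set.Ici 0) ∧ p 0 = 0 ∧ ∀ s > (0:ℝ), 0 < p s

open MeasureTheory intervalIntegral

private lemma psi_construction (α₀ β : ℝ → ℝ) (hα₀ : ClassP α₀) (hβ : Continuous β)
    (L r₀ : ℝ) (hL : 0 < L) (hr₀ : 0 < r₀) :
    ∃ ψ : ℝ → ℝ, ClassKInf ψ ∧
      ∀ s ∈ Set.Ioc (0:ℝ) (1/2),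
        (0 < ψ s ∧ ψ s ≤ r₀ ∧ |β s| * (L * ψ s) ≤ α₀ s / 2) ∧
        ∃ d, HasDerivAt ψ d s ∧ 0 < d ∧ ψ s < d * (α₀ s / 2) := by
  obtain ⟨hα₀c, hα₀0, hα₀pos⟩ := hα₀
  have hα₀nn : ∀ σ, 0 ≤ σ → 0 ≤ α₀ σ := by
    intro σ hσ
    rcases eq_or_lt_of_le hσ with h | h
    · simp [← h, hα₀0]
    · exact (hα₀pos σ h).le
  set ρ : ℝ → ℝ := fun σ => min r₀ (α₀ σ / (2 * (1 + L * |β σ|))) with hρdef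
  have hden : ∀ σ, 0 < 2 * (1 + L * |β σ|) := by
    intro σ
    have : 0 ≤ L * |β σ| := mul_nonneg hL.le (abs_nonneg _)
    linarith
  have hρnn : ∀ σ, 0 ≤ σ → 0 ≤ ρ σ := fun σ hσ =>
    le_min hr₀.le (div_nonneg (hα₀nn σ hσ) (hden σ).le)
  have hρpos : ∀ σ, 0 < σ → 0 < ρ σ := fun σ hσ =>
    lt_min hr₀ (div_pos (hα₀pos σ hσ) (hden σ))
  have hρcont : ContinuousOn ρ (Ici 0) := by
    have h2 : ContinuousOn (fun σ => α₀ σ / (2 * (1 + L * |β σ|))) (Ici 0) :=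
      hα₀c.div ((continuous_const.mul
        (continuous_const.add (continuous_const.mul hβ.abs))).continuousOn)
        (fun σ _ => (hden σ).ne')
    exact continuousOn_const.inf h2
  have hkey : ∀ s z, 0 ≤ s → 0 ≤ z → z ≤ ρ s → |β s| * (L * z) ≤ α₀ s / 2 := by
    intro s z hs hz hzρ
    have h1 : |β s| * (L * z) = (L * |β s|) * z := by ring
    have h2 : (L * |β s|) * z ≤ (L * |β s|) * (α₀ s / (2 * (1 + L * |β s|))) := by
      apply mul_le_mul_of_nonneg_left (le_trans hzρ (min_le_right _ _))
      exact mul_nonneg hL.le (abs_nonneg _)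
    have h3 : (L * |β s|) * (α₀ s / (2 * (1 + L * |β s|))) ≤ α₀ s / 2 := by
      rw [mul_div_assoc', div_le_div_iff₀ (hden s) (by norm_num : (0:ℝ) < 2)]
      have hB : 0 ≤ L * |β s| := mul_nonneg hL.le (abs_nonneg _)
      have := hα₀nn s hs
      nlinarith
    linarith [h1 ▸ le_trans h2 h3]
  -- the monotone minorant
  set m : ℝ → ℝ := fun s => sInf (ρ '' Icc s 1) with hmdef
  have hmne : ∀ s : ℝ, s ≤ 1 → (ρ '' Icc s 1).Nonempty :=
    fun s hs => (nonempty_Icc.2 hs).image ρ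
  have hmbdd : ∀ s : ℝ, 0 ≤ s → BddBelow (ρ '' Icc s 1) := by
    intro s hs
    refine ⟨0, ?_⟩
    rintro _ ⟨σ, hσ, rfl⟩
    exact hρnn σ (le_trans hs hσ.1)
  have hmle : ∀ s ∈ Icc (0:ℝ) 1, m s ≤ ρ s := fun s hs =>
    csInf_le (hmbdd s hs.1) (mem_image_of_mem ρ ⟨le_rfl, hs.2⟩)
  have hmnn : ∀ s ∈ Icc (0:ℝ) 1, 0 ≤ m s := by
    intro s hs
    apply le_csInf (hmne s hs.2)
    rintro _ ⟨σ, hσ, rfl⟩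
    exact hρnn σ (le_trans hs.1 hσ.1)
  have hmmono : MonotoneOn m (Icc (0:ℝ) 1) := by
    intro s hs t ht hst
    exact csInf_le_csInf (hmbdd s hs.1) (hmne t ht.2)
      (image_mono (f := ρ) (Icc_subset_Icc_left hst))
  have hmpos : ∀ s ∈ Ioc (0:ℝ) 1, 0 < m s := by
    intro s hs
    obtain ⟨σ₀, hσ₀, hmin⟩ := isCompact_Icc.exists_isMinOn (nonempty_Icc.2 hs.2)
      (hρcont.mono (fun u hu => le_trans hs.1.le hu.1))
    have : ρ σ₀ ≤ m s := by
      apply le_csInf (hmne s hs.2)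
      rintro _ ⟨σ, hσ, rfl⟩
      exact hmin hσ
    exact lt_of_lt_of_le (hρpos σ₀ (lt_of_lt_of_le hs.1 hσ₀.1)) this
  have hmint : ∀ c d : ℝ, 0 ≤ c → c ≤ d → d ≤ 1 → IntervalIntegrable m volume c d := by
    intro c d hc hcd hd
    apply MonotoneOn.intervalIntegrable
    apply hmmono.mono
    rw [uIcc_of_le hcd]
    exact Icc_subset_Icc hc hd
  -- first primitive
  set m₁ : ℝ → ℝ := fun σ => ∫ t in (0:ℝ)..σ, m t with hm₁def
  have hm₁nn : ∀ σ ∈ Icc (0:ℝ) 1, 0 ≤ m₁ σ := by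
    intro σ hσ
    exact intervalIntegral.integral_nonneg hσ.1 (fun u hu => hmnn u ⟨hu.1, le_trans hu.2 hσ.2⟩)
  have hm₁mono : MonotoneOn m₁ (Icc (0:ℝ) 1) := by
    intro s hs t ht hst
    have hsplit : m₁ s + ∫ u in s..t, m u = m₁ t :=
      intervalIntegral.integral_add_adjacent_intervals (hmint 0 s le_rfl hs.1 hs.2)
        (hmint s t hs.1 hst ht.2)
    have hpos : 0 ≤ ∫ u in s..t, m u :=
      intervalIntegral.integral_nonneg hst (fun u hu => hmnn u ⟨le_trans hs.1 hu.1, le_trans hu.2 ht.2⟩)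
    linarith
  have hm₁lem : ∀ σ ∈ Ioc (0:ℝ) 1, m₁ σ ≤ m σ := by
    intro σ hσ
    have h1 : m₁ σ ≤ ∫ _ in (0:ℝ)..σ, m σ := by
      apply intervalIntegral.integral_mono_on hσ.1.le (hmint 0 σ le_rfl hσ.1.le hσ.2)
        intervalIntegrable_const
      intro u hu
      exact hmmono ⟨hu.1, le_trans hu.2 hσ.2⟩ ⟨hσ.1.le, hσ.2⟩ hu.2
    rw [intervalIntegral.integral_const, smul_eq_mul, sub_zero] at h1
    have h2 := hmnn σ ⟨hσ.1.le, hσ.2⟩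
    have h3 := hσ.2
    nlinarith
  have hm₁pos : ∀ σ ∈ Ioc (0:ℝ) 1, 0 < m₁ σ := by
    intro σ hσ
    have hhalf : (0:ℝ) < σ / 2 := by linarith [hσ.1]
    have hσ2 : σ / 2 ≤ σ := by linarith [hσ.1]
    have hsplit : (∫ u in (0:ℝ)..(σ/2), m u) + ∫ u in (σ/2)..σ, m u = m₁ σ :=
      intervalIntegral.integral_add_adjacent_intervals
        (hmint 0 (σ/2) le_rfl hhalf.le (le_trans hσ2 hσ.2))
        (hmint (σ/2) σ hhalf.le hσ2 hσ.2)
    have h1 : 0 ≤ ∫ u in (0:ℝ)..(σ/2), m u :=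
      intervalIntegral.integral_nonneg hhalf.le
        (fun u hu => hmnn u ⟨hu.1, le_trans (le_trans hu.2 hσ2) hσ.2⟩)
    have h2 : (∫ _ in (σ/2)..σ, m (σ/2)) ≤ ∫ u in (σ/2)..σ, m u := by
      apply intervalIntegral.integral_mono_on hσ2 intervalIntegrable_const
        (hmint (σ/2) σ hhalf.le hσ2 hσ.2)
      intro u hu
      exact hmmono ⟨hhalf.le, le_trans hσ2 hσ.2⟩ ⟨le_trans hhalf.le hu.1, le_trans hu.2 hσ.2⟩ hu.1
    rw [intervalIntegral.integral_const, smul_eq_mul] at h2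
    have h3 : 0 < (σ - σ/2) * m (σ/2) :=
      mul_pos (by linarith [hσ.1]) (hmpos (σ/2) ⟨hhalf, le_trans hσ2 hσ.2⟩)
    linarith
  have hmIntOn : IntegrableOn m (Icc (0:ℝ) 1) volume :=
    MonotoneOn.integrableOn_isCompact isCompact_Icc hmmono
  have hm₁cont : ContinuousOn m₁ (Icc (0:ℝ) 1) := by
    have := intervalIntegral.continuousOn_primitive_interval
      (f := m) (a := (0:ℝ)) (b := (1:ℝ)) (μ := volume) (by rwa [uIcc_of_le zero_le_one])
    rwa [uIcc_of_le zero_le_one] at this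
  have hm₁int : ∀ c d : ℝ, 0 ≤ c → c ≤ d → d ≤ 1 → IntervalIntegrable m₁ volume c d := by
    intro c d hc hcd hd
    apply ContinuousOn.intervalIntegrable
    apply hm₁cont.mono
    rw [uIcc_of_le hcd]
    exact Icc_subset_Icc hc hd
  -- second primitive
  set r : ℝ → ℝ := fun σ => ∫ t in (0:ℝ)..σ, m₁ t with hrdef
  have hrnn : ∀ σ ∈ Icc (0:ℝ) 1, 0 ≤ r σ := by
    intro σ hσ
    exact intervalIntegral.integral_nonneg hσ.1 (fun u hu => hm₁nn u ⟨hu.1, le_trans hu.2 hσ.2⟩)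
  have hrlem : ∀ σ ∈ Ioc (0:ℝ) 1, r σ ≤ m₁ σ := by
    intro σ hσ
    have h1 : r σ ≤ ∫ _ in (0:ℝ)..σ, m₁ σ := by
      apply intervalIntegral.integral_mono_on hσ.1.le (hm₁int 0 σ le_rfl hσ.1.le hσ.2)
        intervalIntegrable_const
      intro u hu
      exact hm₁mono ⟨hu.1, le_trans hu.2 hσ.2⟩ ⟨hσ.1.le, hσ.2⟩ hu.2
    rw [intervalIntegral.integral_const, smul_eq_mul, sub_zero] at h1
    have h2 := hm₁nn σ ⟨hσ.1.le, hσ.2⟩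
    have h3 := hσ.2
    nlinarith
  have hrpos : ∀ σ ∈ Ioc (0:ℝ) 1, 0 < r σ := by
    intro σ hσ
    have hhalf : (0:ℝ) < σ / 2 := by linarith [hσ.1]
    have hσ2 : σ / 2 ≤ σ := by linarith [hσ.1]
    have hsplit : (∫ u in (0:ℝ)..(σ/2), m₁ u) + ∫ u in (σ/2)..σ, m₁ u = r σ :=
      intervalIntegral.integral_add_adjacent_intervals
        (hm₁int 0 (σ/2) le_rfl hhalf.le (le_trans hσ2 hσ.2))
        (hm₁int (σ/2) σ hhalf.le hσ2 hσ.2)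
    have h1 : 0 ≤ ∫ u in (0:ℝ)..(σ/2), m₁ u :=
      intervalIntegral.integral_nonneg hhalf.le
        (fun u hu => hm₁nn u ⟨hu.1, le_trans (le_trans hu.2 hσ2) hσ.2⟩)
    have h2 : (∫ _ in (σ/2)..σ, m₁ (σ/2)) ≤ ∫ u in (σ/2)..σ, m₁ u := by
      apply intervalIntegral.integral_mono_on hσ2 intervalIntegrable_const
        (hm₁int (σ/2) σ hhalf.le hσ2 hσ.2)
      intro u hu
      exact hm₁mono ⟨hhalf.le, le_trans hσ2 hσ.2⟩ ⟨le_trans hhalf.le hu.1, le_trans hu.2 hσ.2⟩ hu.1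
    rw [intervalIntegral.integral_const, smul_eq_mul] at h2
    have h3 : 0 < (σ - σ/2) * m₁ (σ/2) :=
      mul_pos (by linarith [hσ.1]) (hm₁pos (σ/2) ⟨hhalf, le_trans hσ2 hσ.2⟩)
    linarith
  have hrcont : ContinuousOn r (Icc (0:ℝ) 1) := by
    have := intervalIntegral.continuousOn_primitive_interval
      (f := m₁) (a := (0:ℝ)) (b := (1:ℝ)) (μ := volume)
      (by rw [uIcc_of_le zero_le_one]; exact hm₁cont.integrableOn_Icc)
    rwa [uIcc_of_le zero_le_one] at this
  have hrderiv : ∀ s ∈ Ioo (0:ℝ) 1, HasDerivAt r (m₁ s) s := by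
    intro s hs
    apply intervalIntegral.integral_hasDerivAt_right (hm₁int 0 s le_rfl hs.1.le hs.2.le)
    · exact (ContinuousOn.stronglyMeasurableAtFilter isOpen_Ioo
        (hm₁cont.mono Ioo_subset_Icc_self)) s hs
    · exact hm₁cont.continuousAt (Icc_mem_nhds hs.1 hs.2)
  -- the exponential factor
  have h2cont : ∀ u : ℝ, 0 < u → ContinuousAt (fun t => 2 / α₀ t) u := by
    intro u hu
    exact continuousAt_const.div (hα₀c.continuousAt (mem_of_superset (Ioi_mem_nhds hu) Ioi_subset_Ici_self))
      (hα₀pos u hu).ne'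
  have h2contOn : ContinuousOn (fun t => 2 / α₀ t) (Ioi (0:ℝ)) :=
    fun u hu => (h2cont u hu).continuousWithinAt
  have hJint : ∀ s : ℝ, 0 < s → IntervalIntegrable (fun t => 2 / α₀ t) volume 1 s := by
    intro s hs
    apply ContinuousOn.intervalIntegrable
    apply h2contOn.mono
    intro u hu
    rcases le_total 1 s with h | h
    · rw [uIcc_of_le h] at hu; exact lt_of_lt_of_le one_pos hu.1
    · rw [uIcc_of_ge h] at hu; exact lt_of_lt_of_le hs hu.1
  set J : ℝ → ℝ := fun s => -(∫ t in (1:ℝ)..s, 2 / α₀ t) with hJdef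
  have hJderiv : ∀ s : ℝ, 0 < s → HasDerivAt J (-(2 / α₀ s)) s := by
    intro s hs
    apply HasDerivAt.neg
    apply intervalIntegral.integral_hasDerivAt_right (hJint s hs)
    · exact (ContinuousOn.stronglyMeasurableAtFilter isOpen_Ioi h2contOn) s hs
    · exact h2cont s hs
  have hJnn : ∀ s ∈ Ioc (0:ℝ) 1, 0 ≤ J s := by
    intro s hs
    have : J s = ∫ t in s..(1:ℝ), 2 / α₀ t := by
      rw [hJdef]; simp [intervalIntegral.integral_symm s 1]
    rw [this]
    exact intervalIntegral.integral_nonneg hs.2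
      (fun u hu => div_nonneg (by norm_num) (hα₀nn u (le_trans hs.1.le hu.1)))
  set E : ℝ → ℝ := fun s => Real.exp (-(J s)) with hEdef
  have hEpos : ∀ s, 0 < E s := fun s => Real.exp_pos _
  have hEderiv : ∀ s : ℝ, 0 < s → HasDerivAt E (E s * (2 / α₀ s)) s := by
    intro s hs
    have := ((hJderiv s hs).neg).exp
    simpa using this
  have hE1 : ∀ s ∈ Ioc (0:ℝ) 1, E s ≤ 1 := by
    intro s hs
    rw [hEdef]
    apply Real.exp_le_one_iff.mpr ?_ |>.trans le_rfl
    simp [hJnn s hs]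
  -- the function ψ
  set F : ℝ → ℝ := fun s => r s * E s with hFdef
  set ψ : ℝ → ℝ := fun s => if s ≤ 1 then F s else F 1 + (s - 1) with hψdef
  have hr0 : r 0 = 0 := intervalIntegral.integral_same
  have hF0 : F 0 = 0 := by simp [hFdef, hr0]
  have hψ0 : ψ 0 = 0 := by
    rw [hψdef]; simp only [zero_le_one, if_pos]; exact hF0
  have hFpos : ∀ s ∈ Ioc (0:ℝ) 1, 0 < F s := fun s hs => mul_pos (hrpos s hs) (hEpos s)
  have hFle : ∀ s ∈ Ioc (0:ℝ) 1, F s ≤ ρ s := by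
    intro s hs
    have h1 : F s ≤ r s := mul_le_of_le_one_right (hrnn s ⟨hs.1.le, hs.2⟩) (hE1 s hs)
    exact h1.trans ((hrlem s hs).trans ((hm₁lem s hs).trans (hmle s ⟨hs.1.le, hs.2⟩)))
  set dd : ℝ → ℝ := fun s => m₁ s * E s + r s * (E s * (2 / α₀ s)) with hdddef
  have hψderiv : ∀ s ∈ Ioo (0:ℝ) 1, HasDerivAt ψ (dd s) s := by
    intro s hs
    have hF : HasDerivAt F (dd s) s := (hrderiv s hs).mul (hEderiv s hs.1)
    apply hF.congr_of_eventuallyEq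
    filter_upwards [Iio_mem_nhds hs.2] with t ht
    exact if_pos ht.le
  have hddpos : ∀ s ∈ Ioo (0:ℝ) 1, 0 < dd s := by
    intro s hs
    have h1 : 0 < m₁ s * E s := mul_pos (hm₁pos s ⟨hs.1, hs.2.le⟩) (hEpos s)
    have h2 : 0 ≤ r s * (E s * (2 / α₀ s)) :=
      mul_nonneg (hrnn s ⟨hs.1.le, hs.2.le⟩)
        (mul_nonneg (hEpos s).le (div_nonneg (by norm_num) (hα₀nn s hs.1.le)))
    rw [hdddef]; dsimp only; linarith
  -- continuity of ψ on Ici 0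
  have hψcont : ContinuousOn ψ (Ici 0) := by
    intro s hs
    rcases eq_or_lt_of_le (show (0:ℝ) ≤ s from hs) with h0 | h0
    · -- s = 0 : squeeze
      subst h0
      have hrtend : Tendsto r (𝓝[Ici (0:ℝ)] 0) (𝓝 0) := by
        have h := hrcont 0 ⟨le_rfl, zero_le_one⟩
        rw [ContinuousWithinAt, hr0] at h
        rwa [nhdsWithin_Icc_eq_nhdsGE zero_lt_one] at h
      have : Tendsto ψ (𝓝[Ici (0:ℝ)] 0) (𝓝 0) := by
        apply tendsto_of_tendsto_of_tendsto_of_le_of_le' tendsto_const_nhds hrtend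
        · filter_upwards [self_mem_nhdsWithin,
            mem_nhdsWithin_of_mem_nhds (Iio_mem_nhds one_pos)] with t ht ht1
          have hψt : ψ t = F t := if_pos ht1.le
          rcases eq_or_lt_of_le (show (0:ℝ) ≤ t from ht) with h | h
          · rw [hψt, ← h, hF0]
          · rw [hψt]; exact (hFpos t ⟨h, ht1.le⟩).le
        · filter_upwards [self_mem_nhdsWithin,
            mem_nhdsWithin_of_mem_nhds (Iio_mem_nhds one_pos)] with t ht ht1
          have hψt : ψ t = F t := if_pos ht1.le
          rcases eq_or_lt_of_le (show (0:ℝ) ≤ t from ht) with h | h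
          · rw [hψt, ← h, hF0, hr0]
          · rw [hψt]
            exact mul_le_of_le_one_right (hrnn t ⟨ht, ht1.le⟩) (hE1 t ⟨h, ht1.le⟩)
      rwa [ContinuousWithinAt, hψ0]
    · rcases lt_trichotomy s 1 with h1 | h1 | h1
      · exact ((hψderiv s ⟨h0, h1⟩).continuousAt).continuousWithinAt
      · -- s = 1 : glue
        subst h1
        have hFcwa : ContinuousWithinAt F (Iic 1) 1 := by
          have hr1 : ContinuousWithinAt r (Iic (1:ℝ)) 1 := by
            have h := hrcont 1 ⟨zero_le_one, le_rfl⟩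
            rwa [ContinuousWithinAt, nhdsWithin_Icc_eq_nhdsLE zero_lt_one] at h
          exact hr1.mul ((hEderiv 1 one_pos).continuousAt.continuousWithinAt)
        have hle : ContinuousWithinAt ψ (Iic (1:ℝ)) 1 :=
          hFcwa.congr (fun y hy => if_pos hy) (if_pos le_rfl)
        have hgt : ContinuousWithinAt ψ (Ioi (1:ℝ)) 1 := by
          have hlin : ContinuousWithinAt (fun u : ℝ => F 1 + (u - 1)) (Ioi (1:ℝ)) 1 :=
            (continuous_const.add (continuous_id.sub continuous_const)).continuousWithinAt
          apply hlin.congr (fun y hy => if_neg (not_le.2 hy))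
          simp
        have := hle.union hgt
        rw [Iic_union_Ioi] at this
        exact (continuousWithinAt_univ ψ 1).mp this |>.continuousWithinAt
      · -- s > 1
        have hlin : ContinuousAt (fun u : ℝ => F 1 + (u - 1)) s :=
          (continuous_const.add (continuous_id.sub continuous_const)).continuousAt
        have hev : (fun u : ℝ => F 1 + (u - 1)) =ᶠ[𝓝 s] ψ := by
          filter_upwards [Ioi_mem_nhds h1] with t ht
          exact (if_neg (not_le.2 ht)).symm
        exact ((continuousAt_congr hev).mp hlin).continuousWithinAt
  have hmono1 : StrictMonoOn ψ (Icc (0:ℝ) 1) := by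
    apply strictMonoOn_of_deriv_pos (convex_Icc 0 1) (hψcont.mono Icc_subset_Ici_self)
    intro x hx
    rw [interior_Icc] at hx
    rw [(hψderiv x hx).deriv]
    exact hddpos x hx
  have hψmono : StrictMonoOn ψ (Ici (0:ℝ)) := by
    intro x hx y hy hxy
    rcases le_or_gt y 1 with h | h
    · exact hmono1 ⟨hx, hxy.le.trans h⟩ ⟨hy, h⟩ hxy
    · have hψy : ψ y = F 1 + (y - 1) := if_neg (not_le.2 h)
      have hψ1 : ψ 1 = F 1 := if_pos le_rfl
      rcases le_or_gt x 1 with h2 | h2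
      · have hle : ψ x ≤ ψ 1 := by
          rcases eq_or_lt_of_le h2 with h3 | h3
          · rw [h3]
          · exact (hmono1 ⟨hx, h2⟩ ⟨zero_le_one, le_rfl⟩ h3).le
        rw [hψy]; rw [hψ1] at hle; linarith
      · have hψx : ψ x = F 1 + (x - 1) := if_neg (not_le.2 h2)
        rw [hψx, hψy]; linarith
  have hψtop : Tendsto ψ atTop atTop := by
    have h1 : Tendsto (fun u : ℝ => F 1 + (u - 1)) atTop atTop := by
      apply tendsto_atTop_add_const_left
      simp only [sub_eq_add_neg]
      exact tendsto_atTop_add_const_right atTop (-1) tendsto_id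
    apply h1.congr'
    filter_upwards [eventually_gt_atTop (1:ℝ)] with t ht
    exact (if_neg (not_le.2 ht)).symm
  refine ⟨ψ, ⟨⟨hψcont, hψmono, hψ0⟩, hψtop⟩, ?_⟩
  intro s hs
  have hs1 : s ∈ Ioc (0:ℝ) 1 := ⟨hs.1, by linarith [hs.2]⟩
  have hsoo : s ∈ Ioo (0:ℝ) 1 := ⟨hs.1, by linarith [hs.2]⟩
  have hψs : ψ s = F s := if_pos hs1.2
  have hFles : F s ≤ ρ s := hFle s hs1
  have hFposs : 0 < F s := hFpos s hs1
  refine ⟨⟨by rw [hψs]; exact hFposs, ?_, ?_⟩, dd s, hψderiv s hsoo, hddpos s hsoo, ?_⟩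
  · rw [hψs]; exact hFles.trans (min_le_left _ _)
  · exact hkey s (ψ s) hs.1.le (by rw [hψs]; exact hFposs.le) (by rw [hψs]; exact hFles)
  · have hα₀s := hα₀pos s hs.1
    have hexp : dd s * (α₀ s / 2) = m₁ s * E s * (α₀ s / 2) + r s * E s := by
      rw [hdddef]; dsimp only; field_simp
    have hpos1 : 0 < m₁ s * E s * (α₀ s / 2) :=
      mul_pos (mul_pos (hm₁pos s hs1) (hEpos s)) (by linarith)
    rw [hψs, hexp]
    have : F s = r s * E s := rfl
    linarith

lemma sol_exp {lam : ℝ → ℝ} {t₀ t : ℝ} (h : t₀ ≤ t)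
    (hl : ∀ u ∈ Set.Icc t₀ t, HasDerivAt lam (-(lam u)) u) :
    lam t = lam t₀ * Real.exp (t₀ - t) := by
  have hcont : ContinuousOn (fun v => lam v * Real.exp v) (Icc t₀ t) :=
    fun u hu => (((hl u hu).mul (Real.hasDerivAt_exp u)).continuousAt).continuousWithinAt
  have hderiv : ∀ u ∈ Ico t₀ t, HasDerivWithinAt (fun v => lam v * Real.exp v) 0 (Ici u) u := by
    intro u hu
    have h1 := (hl u (Ico_subset_Icc_self hu)).mul (Real.hasDerivAt_exp u)
    have h2 : -lam u * Real.exp u + lam u * Real.exp u = 0 := by ring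
    rw [h2] at h1
    exact h1.hasDerivWithinAt
  have hconst := constant_of_has_deriv_right_zero hcont hderiv t ⟨h, le_rfl⟩
  have hexp : Real.exp t ≠ 0 := (Real.exp_pos t).ne'
  have h3 : lam t = (lam t₀ * Real.exp t₀) / Real.exp t := by
    rw [← hconst]; field_simp
  rw [h3, Real.exp_sub, mul_div_assoc]

lemma cross_pos {F : ℝ → ℝ} {τ d : ℝ} (h : HasDerivAt F d τ) (hd : 0 < d) :
    ∀ᶠ u in 𝓝[>] τ, F τ < F u := by
  have h1 := hasDerivAt_iff_tendsto_slope.1 h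
  have h2 : ∀ᶠ u in 𝓝[≠] τ, 0 < slope F τ u := h1.eventually (eventually_gt_nhds hd)
  have h3 : 𝓝[>] τ ≤ 𝓝[≠] τ := nhdsWithin_mono τ (fun u hu => ne_of_gt hu)
  filter_upwards [h3 h2, self_mem_nhdsWithin] with u hu hu2
  have hslope : 0 < (F u - F τ) / (u - τ) := by rwa [slope_def_field] at hu
  have h4 : 0 < u - τ := sub_pos.2 hu2
  have h5 := mul_pos hslope h4
  rw [div_mul_cancel₀ _ h4.ne'] at h5
  linarith

lemma cross_neg {F : ℝ → ℝ} {τ d : ℝ} (h : HasDerivAt F d τ) (hd : d < 0) :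
    ∀ᶠ u in 𝓝[>] τ, F u < F τ := by
  have h1 := hasDerivAt_iff_tendsto_slope.1 h
  have h2 : ∀ᶠ u in 𝓝[≠] τ, slope F τ u < 0 := h1.eventually (eventually_lt_nhds hd)
  have h3 : 𝓝[>] τ ≤ 𝓝[≠] τ := nhdsWithin_mono τ (fun u hu => ne_of_gt hu)
  filter_upwards [h3 h2, self_mem_nhdsWithin] with u hu hu2
  have hslope : (F u - F τ) / (u - τ) < 0 := by rwa [slope_def_field] at hu
  have h4 : 0 < u - τ := sub_pos.2 hu2
  have h5 := mul_neg_of_neg_of_pos hslope h4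
  rw [div_mul_cancel₀ _ h4.ne'] at h5
  linarith

/-- **Existence Corollary.**
For the control system `ẋ = f(x,λ,t)`, `λ̇ = u`, with `f` satisfying Assumption 1 with
locally Lipschitz `φ ∈ K` and `α(V) = -α₀(V)`, `α₀ ∈ P`, there exist a continuous feedback
`g`, a class-K∞ function `ψ` and `a > 0` such that the set
`Ω_a = {(x,λ) : 0 ≤ V(x) ≤ a, ψ(V(x)) ≤ λ ≤ ψ(a)}` is forward invariant for the closed-loop
system, all solutions passing through `Ω_a` are bounded in forward time, and every such
solution defined on `[t₀,∞)` satisfies `λ(t) → λ' ∈ [0,ψ(a)]` and `‖x(t)‖ → 0`. -/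
theorem existence_corollary
    {n : ℕ}
    (f : EuclideanSpace ℝ (Fin n) → ℝ → ℝ → EuclideanSpace ℝ (Fin n))
    (hf_cont : Continuous fun q : EuclideanSpace ℝ (Fin n) × ℝ × ℝ => f q.1 q.2.1 q.2.2)
    (hf_lip : ∀ p : EuclideanSpace ℝ (Fin n) × ℝ, ∃ s ∈ nhds p, ∃ L : NNReal,
      ∀ t : ℝ, LipschitzOnWith L (fun q : EuclideanSpace ℝ (Fin n) × ℝ => f q.1 q.2 t) s)
    -- Assumption 1 with α = -α₀, α₀ ∈ P, and φ locally Lipschitz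
    (V : EuclideanSpace ℝ (Fin n) → ℝ) (hV : ContDiff ℝ 1 V)
    (αlow αhigh : ℝ → ℝ) (hαlow : ClassKInf αlow) (hαhigh : ClassKInf αhigh)
    (α₀ β : ℝ → ℝ) (hα₀ : ClassP α₀) (hβ : Continuous β)
    (φ : ℝ → ℝ) (hφ : ClassK φ) (hφlip : LocallyLipschitz φ)
    (hVbound : ∀ x, αlow ‖x‖ ≤ V x ∧ V x ≤ αhigh ‖x‖)
    (hVdot : ∀ x lam t, fderiv ℝ V x (f x lam t) ≤ -α₀ (V x) + β (V x) * φ |lam|) :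
    ∃ g : EuclideanSpace ℝ (Fin n) → ℝ → ℝ → ℝ,
      (Continuous fun q : EuclideanSpace ℝ (Fin n) × ℝ × ℝ => g q.1 q.2.1 q.2.2) ∧
      ∃ ψ : ℝ → ℝ, ClassKInf ψ ∧ ∃ a : ℝ, 0 < a ∧
        -- forward invariance of Ω_a for the closed-loop system
        ((∀ (t₀ T : ℝ) (x : ℝ → EuclideanSpace ℝ (Fin n)) (lam : ℝ → ℝ),
          (∀ t ∈ Set.Ico t₀ T,
            HasDerivAt x (f (x t) (lam t) t) t ∧ HasDerivAt lam (g (x t) (lam t) t) t) →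
          (V (x t₀) ∈ Set.Icc (0:ℝ) a ∧ ψ (V (x t₀)) ≤ lam t₀ ∧ lam t₀ ≤ ψ a) →
          ∀ t ∈ Set.Ico t₀ T,
            V (x t) ∈ Set.Icc (0:ℝ) a ∧ ψ (V (x t)) ≤ lam t ∧ lam t ≤ ψ a) ∧
        -- boundedness and convergence for solutions on [t₀,∞) passing through Ω_a
        (∀ (t₀ : ℝ) (x : ℝ → EuclideanSpace ℝ (Fin n)) (lam : ℝ → ℝ),
          (∀ t ∈ Set.Ici t₀,
            HasDerivAt x (f (x t) (lam t) t) t ∧ HasDerivAt lam (g (x t) (lam t) t) t) →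
          (∃ t₁ ∈ Set.Ici t₀,
            V (x t₁) ∈ Set.Icc (0:ℝ) a ∧ ψ (V (x t₁)) ≤ lam t₁ ∧ lam t₁ ≤ ψ a) →
          (∃ M : ℝ, ∀ t ∈ Set.Ici t₀, ‖x t‖ ≤ M ∧ |lam t| ≤ M) ∧
          (∃ lam' ∈ Set.Icc (0:ℝ) (ψ a), Filter.Tendsto lam Filter.atTop (nhds lam')) ∧
          Filter.Tendsto (fun t => ‖x t‖) Filter.atTop (nhds 0))) := by
  classical
  -- Lipschitz data for φ near 0
  obtain ⟨K, tset, htset, hK⟩ := hφlip 0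
  set L : ℝ := (K : ℝ) + 1 with hLdef
  have hL : 0 < L := by positivity
  obtain ⟨ε, hε, hball⟩ := Metric.mem_nhds_iff.1 htset
  set r₀ : ℝ := ε / 2 with hr₀def
  have hr₀ : 0 < r₀ := by positivity
  have hφ0 : φ 0 = 0 := hφ.2.2
  have hφmono : MonotoneOn φ (Set.Ici 0) := hφ.2.1.monotoneOn
  have hφnn : ∀ z, 0 ≤ z → 0 ≤ φ z := by
    intro z hz
    have := hφmono (mem_Ici.2 le_rfl) (mem_Ici.2 hz) hz
    rwa [hφ0] at this
  have hφL : ∀ z, 0 ≤ z → z ≤ r₀ → φ z ≤ L * z := by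
    intro z hz hzr
    have h0t : (0:ℝ) ∈ tset := hball (Metric.mem_ball_self hε)
    have hzt : z ∈ tset := by
      apply hball
      rw [Metric.mem_ball, Real.dist_eq, sub_zero, abs_of_nonneg hz]
      rw [hr₀def] at hzr
      linarith
    have hd := hK.dist_le_mul z hzt 0 h0t
    rw [Real.dist_eq, Real.dist_eq, sub_zero, hφ0, sub_zero, abs_of_nonneg hz] at hd
    have h1 : φ z ≤ |φ z| := le_abs_self _
    have hK' : (K:ℝ) * z ≤ L * z := by
      apply mul_le_mul_of_nonneg_right _ hz
      rw [hLdef]; linarith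
    calc φ z ≤ |φ z| := h1
    _ ≤ K * z := hd
    _ ≤ L * z := hK'
  -- class K∞ lower bound facts
  obtain ⟨⟨hαlc, hαlm, hαl0⟩, hαltop⟩ := hαlow
  have hαlpos : ∀ z, 0 < z → 0 < αlow z := by
    intro z hz
    have := hαlm (mem_Ici.2 le_rfl) (mem_Ici.2 hz.le) hz
    rwa [hαl0] at this
  have hαlnn : ∀ z, 0 ≤ z → 0 ≤ αlow z := by
    intro z hz
    rcases eq_or_lt_of_le hz with h | h
    · rw [← h, hαl0]
    · exact (hαlpos z h).le
  have hα₀nn : ∀ σ, 0 ≤ σ → 0 ≤ α₀ σ := by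
    intro σ hσ
    rcases eq_or_lt_of_le hσ with h | h
    · rw [← h, hα₀.2.1]
    · exact (hα₀.2.2 σ h).le
  -- the class K∞ function ψ
  obtain ⟨ψ, hψKinf, hψP⟩ := psi_construction α₀ β hα₀ hβ L r₀ hL hr₀
  obtain ⟨⟨hψcont, hψmono, hψ0⟩, hψtop⟩ := hψKinf
  have hψnn : ∀ s, 0 ≤ s → 0 ≤ ψ s := by
    intro s hs
    rcases eq_or_lt_of_le hs with h | h
    · rw [← h, hψ0]
    · have := hψmono (mem_Ici.2 le_rfl) (mem_Ici.2 hs) h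
      rw [hψ0] at this; exact this.le
  have hψposs : ∀ s, 0 < s → 0 < ψ s := by
    intro s hs
    have := hψmono (mem_Ici.2 le_rfl) (mem_Ici.2 hs.le) hs
    rwa [hψ0] at this
  set a : ℝ := 1/2 with hadef
  have ha : (0:ℝ) < a := by norm_num
  have haIoc : a ∈ Set.Ioc (0:ℝ) (1/2) := ⟨ha, le_rfl⟩
  obtain ⟨⟨hψa_pos, hψa_r₀, hψa_β⟩, -⟩ := hψP a haIoc
  have hVnn : ∀ y, 0 ≤ V y := fun y => le_trans (hαlnn _ (norm_nonneg y)) (hVbound y).1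
  have hVdiff : Differentiable ℝ V := hV.differentiable one_ne_zero
  -- the invariance statement, proved once
  have INV : ∀ (t₀ T : ℝ) (x : ℝ → EuclideanSpace ℝ (Fin n)) (lam : ℝ → ℝ),
      (∀ t ∈ Set.Ico t₀ T,
        HasDerivAt x (f (x t) (lam t) t) t ∧ HasDerivAt lam (-(lam t)) t) →
      (V (x t₀) ∈ Set.Icc (0:ℝ) a ∧ ψ (V (x t₀)) ≤ lam t₀ ∧ lam t₀ ≤ ψ a) →
      ∀ t ∈ Set.Ico t₀ T,
        V (x t) ∈ Set.Icc (0:ℝ) a ∧ ψ (V (x t)) ≤ lam t ∧ lam t ≤ ψ a := by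
    intro t₀ T x lam hsol hinit
    obtain ⟨hV0, hl0, hl0'⟩ := hinit
    set W : ℝ → ℝ := fun u => V (x u) with hWdef
    set W' : ℝ → ℝ := fun u => (fderiv ℝ V (x u)) (f (x u) (lam u) u) with hW'def
    have hWnn : ∀ u, 0 ≤ W u := fun u => hVnn (x u)
    have hWd : ∀ u ∈ Set.Ico t₀ T, HasDerivAt W (W' u) u := by
      intro u hu
      exact (hVdiff (x u)).hasFDerivAt.comp_hasDerivAt u (hsol u hu).1
    have hW'le : ∀ u, W' u ≤ -α₀ (W u) + β (W u) * φ |lam u| :=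
      fun u => hVdot (x u) (lam u) u
    have hlamd : ∀ u ∈ Set.Ico t₀ T, HasDerivAt lam (-(lam u)) u := fun u hu => (hsol u hu).2
    have hlam_eq : ∀ u ∈ Set.Ico t₀ T, lam u = lam t₀ * Real.exp (t₀ - u) := by
      intro u hu
      exact sol_exp hu.1 (fun v hv => hlamd v ⟨hv.1, lt_of_le_of_lt hv.2 hu.2⟩)
    have hlamt₀nn : 0 ≤ lam t₀ := le_trans (hψnn _ (hWnn t₀)) hl0
    have hlam_nn : ∀ u ∈ Set.Ico t₀ T, 0 ≤ lam u := by
      intro u hu; rw [hlam_eq u hu]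
      exact mul_nonneg hlamt₀nn (Real.exp_pos _).le
    have hlam_le : ∀ u ∈ Set.Ico t₀ T, lam u ≤ ψ a := by
      intro u hu; rw [hlam_eq u hu]
      calc lam t₀ * Real.exp (t₀ - u) ≤ lam t₀ * 1 := by
            apply mul_le_mul_of_nonneg_left _ hlamt₀nn
            exact Real.exp_le_one_iff.mpr (by linarith [hu.1])
      _ = lam t₀ := mul_one _
      _ ≤ ψ a := hl0'
    -- claim A : W stays below a
    have claimA : ∀ u ∈ Set.Ico t₀ T, W u ≤ a := by
      by_contra hcon
      push_neg at hcon
      obtain ⟨t₂, ht₂, hat₂⟩ := hcon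
      have hsub : Set.Icc t₀ t₂ ⊆ Set.Ico t₀ T :=
        fun u hu => ⟨hu.1, lt_of_le_of_lt hu.2 ht₂.2⟩
      have hWcont : ∀ u ∈ Set.Icc t₀ t₂, ContinuousAt W u :=
        fun u hu => (hWd u (hsub hu)).continuousAt
      set S := {u ∈ Set.Icc t₀ t₂ | W u ≤ a} with hSdef
      have hSne : t₀ ∈ S := ⟨⟨le_rfl, ht₂.1⟩, hV0.2⟩
      have hSbdd : BddAbove S := ⟨t₂, fun u hu => hu.1.2⟩
      set τ := sSup S with hτdef
      have hτmem : τ ∈ Set.Icc t₀ t₂ :=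
        ⟨le_csSup hSbdd hSne, csSup_le ⟨t₀, hSne⟩ (fun u hu => hu.1.2)⟩
      have hWτ_le : W τ ≤ a := by
        by_contra hWτ
        push_neg at hWτ
        have hev : ∀ᶠ u in 𝓝 τ, a < W u :=
          (hWcont τ hτmem).eventually (eventually_gt_nhds hWτ)
        obtain ⟨δ, hδ, hδev⟩ := Metric.eventually_nhds_iff.1 hev
        obtain ⟨u, huS, hu⟩ := exists_lt_of_lt_csSup ⟨t₀, hSne⟩ (show τ - δ < τ by linarith)
        have hu_le : u ≤ τ := le_csSup hSbdd huS
        have hdist : dist u τ < δ := by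
          rw [Real.dist_eq, abs_sub_comm, abs_of_nonneg (by linarith)]
          linarith
        exact absurd huS.2 (not_le.2 (hδev hdist))
      have hτlt : τ < t₂ :=
        lt_of_le_of_ne hτmem.2 (fun h => absurd (h ▸ hWτ_le) (not_le.2 hat₂))
      have hafter : ∀ u, τ < u → u ≤ t₂ → a < W u := by
        intro u h1 h2
        by_contra h3
        push_neg at h3
        exact absurd (le_csSup hSbdd ⟨⟨le_trans hτmem.1 h1.le, h2⟩, h3⟩) (not_le.2 h1)
      have hWτ_eq : W τ = a := by
        rcases eq_or_lt_of_le hWτ_le with h | h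
        · exact h
        · exfalso
          have hev : ∀ᶠ u in 𝓝[>] τ, W u < a :=
            ((hWcont τ hτmem).eventually (eventually_lt_nhds h)).filter_mono nhdsWithin_le_nhds
          have hev2 : ∀ᶠ u in 𝓝[>] τ, u < t₂ :=
            (eventually_lt_nhds hτlt).filter_mono nhdsWithin_le_nhds
          obtain ⟨u, ⟨hu1, hu2⟩, hu3⟩ := ((hev.and hev2).and eventually_mem_nhdsWithin).exists
          linarith [hafter u hu3 hu2.le]
      have hτIco : τ ∈ Set.Ico t₀ T := hsub hτmem
      have hder := hWd τ hτIco
      have hbound : W' τ ≤ -(α₀ a / 2) := by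
        have h1 := hW'le τ
        rw [hWτ_eq] at h1
        have hlamτnn := hlam_nn τ hτIco
        rw [abs_of_nonneg hlamτnn] at h1
        have hφb : φ (lam τ) ≤ L * ψ a :=
          le_trans (hφmono (mem_Ici.2 hlamτnn) (mem_Ici.2 (hψnn a ha.le)) (hlam_le τ hτIco))
            (hφL (ψ a) (hψnn a ha.le) hψa_r₀)
        have hβb : β a * φ (lam τ) ≤ α₀ a / 2 := by
          calc β a * φ (lam τ) ≤ |β a| * φ (lam τ) :=
                mul_le_mul_of_nonneg_right (le_abs_self _) (hφnn _ hlamτnn)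
          _ ≤ |β a| * (L * ψ a) := mul_le_mul_of_nonneg_left hφb (abs_nonneg _)
          _ ≤ α₀ a / 2 := hψa_β
        linarith
      have hneg : W' τ < 0 := lt_of_le_of_lt hbound (by linarith [hα₀.2.2 a ha])
      have hev := cross_neg hder hneg
      have hev2 : ∀ᶠ u in 𝓝[>] τ, u < t₂ :=
        (eventually_lt_nhds hτlt).filter_mono nhdsWithin_le_nhds
      obtain ⟨u, ⟨hu1, hu2⟩, hu3⟩ := ((hev.and hev2).and eventually_mem_nhdsWithin).exists
      rw [hWτ_eq] at hu1
      linarith [hafter u hu3 hu2.le]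
    -- claim B : the barrier λ ≥ ψ(W)
    have claimB : ∀ u ∈ Set.Ico t₀ T, ψ (W u) ≤ lam u := by
      rcases eq_or_lt_of_le hlamt₀nn with hcase | hcase
      · -- λ(t₀) = 0
        have hlam0 : ∀ u ∈ Set.Ico t₀ T, lam u = 0 := by
          intro u hu; rw [hlam_eq u hu, ← hcase]; ring
        have hWt₀ : W t₀ = 0 := by
          have h1 : ψ (W t₀) ≤ 0 := hl0.trans_eq hcase.symm
          by_contra hne
          have hpos : 0 < W t₀ := lt_of_le_of_ne (hWnn t₀) (Ne.symm hne)
          linarith [hψposs _ hpos]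
        intro u hu
        have hanti : AntitoneOn W (Set.Icc t₀ u) := by
          apply antitoneOn_of_deriv_nonpos (convex_Icc t₀ u)
          · exact fun v hv =>
              ((hWd v ⟨hv.1, lt_of_le_of_lt hv.2 hu.2⟩).continuousAt).continuousWithinAt
          · intro v hv
            rw [interior_Icc] at hv
            exact ((hWd v ⟨hv.1.le, lt_trans hv.2 hu.2⟩).differentiableAt).differentiableWithinAt
          · intro v hv
            rw [interior_Icc] at hv
            have hvin : v ∈ Set.Ico t₀ T := ⟨hv.1.le, lt_trans hv.2 hu.2⟩
            rw [(hWd v hvin).deriv]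
            have h1 := hW'le v
            rw [hlam0 v hvin, abs_zero, hφ0, mul_zero, add_zero] at h1
            linarith [hα₀nn (W v) (hWnn v)]
        have hWu0 : W u = 0 := by
          have h2 := hanti (left_mem_Icc.2 hu.1) (right_mem_Icc.2 hu.1) hu.1
          rw [hWt₀] at h2
          exact le_antisymm h2 (hWnn u)
        rw [hWu0, hψ0, hlam0 u hu]
      · -- λ(t₀) > 0
        have hlampos : ∀ u ∈ Set.Ico t₀ T, 0 < lam u := by
          intro u hu; rw [hlam_eq u hu]
          exact mul_pos hcase (Real.exp_pos _)
        by_contra hcon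
        push_neg at hcon
        obtain ⟨t₂, ht₂, hDneg⟩ := hcon
        have hsub : Set.Icc t₀ t₂ ⊆ Set.Ico t₀ T :=
          fun u hu => ⟨hu.1, lt_of_le_of_lt hu.2 ht₂.2⟩
        set D : ℝ → ℝ := fun u => lam u - ψ (W u) with hDdef
        have hDcont : ∀ u ∈ Set.Icc t₀ t₂, ContinuousAt D u := by
          intro u hu
          have h1 : ContinuousAt lam u := (hlamd u (hsub hu)).continuousAt
          have h2 : ContinuousAt W u := (hWd u (hsub hu)).continuousAt
          have h3 : ContinuousAt (fun v => ψ (W v)) u := by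
            have hc : ContinuousWithinAt ψ (Set.Ici 0) (W u) := hψcont (W u) (hWnn u)
            have := hc.comp (s := Set.univ) h2.continuousWithinAt (fun v _ => hWnn v)
            rwa [continuousWithinAt_univ] at this
          exact h1.sub h3
        set S := {u ∈ Set.Icc t₀ t₂ | 0 ≤ D u} with hSdef
        have hSne : t₀ ∈ S := ⟨⟨le_rfl, ht₂.1⟩, sub_nonneg.2 hl0⟩
        have hSbdd : BddAbove S := ⟨t₂, fun u hu => hu.1.2⟩
        set τ := sSup S with hτdef
        have hτmem : τ ∈ Set.Icc t₀ t₂ :=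
          ⟨le_csSup hSbdd hSne, csSup_le ⟨t₀, hSne⟩ (fun u hu => hu.1.2)⟩
        have hDτnn : 0 ≤ D τ := by
          by_contra hDτ
          push_neg at hDτ
          have hev : ∀ᶠ u in 𝓝 τ, D u < 0 :=
            (hDcont τ hτmem).eventually (eventually_lt_nhds hDτ)
          obtain ⟨δ, hδ, hδev⟩ := Metric.eventually_nhds_iff.1 hev
          obtain ⟨u, huS, hu⟩ := exists_lt_of_lt_csSup ⟨t₀, hSne⟩ (show τ - δ < τ by linarith)
          have hu_le : u ≤ τ := le_csSup hSbdd huS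
          have hdist : dist u τ < δ := by
            rw [Real.dist_eq, abs_sub_comm, abs_of_nonneg (by linarith)]
            linarith
          linarith [huS.2, hδev hdist]
        have hτlt : τ < t₂ := by
          rcases eq_or_lt_of_le hτmem.2 with h | h
          · exfalso
            rw [h] at hDτnn
            have : D t₂ < 0 := sub_neg.2 hDneg
            linarith
          · exact h
        have hafter : ∀ u, τ < u → u ≤ t₂ → D u < 0 := by
          intro u h1 h2
          by_contra h3
          push_neg at h3
          exact absurd (le_csSup hSbdd ⟨⟨le_trans hτmem.1 h1.le, h2⟩, h3⟩) (not_le.2 h1)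
        have hDτ : D τ = 0 := by
          rcases eq_or_lt_of_le hDτnn with h | h
          · exact h.symm
          · exfalso
            have hev : ∀ᶠ u in 𝓝[>] τ, 0 < D u :=
              ((hDcont τ hτmem).eventually (eventually_gt_nhds h)).filter_mono nhdsWithin_le_nhds
            have hev2 : ∀ᶠ u in 𝓝[>] τ, u < t₂ :=
              (eventually_lt_nhds hτlt).filter_mono nhdsWithin_le_nhds
            obtain ⟨u, ⟨hu1, hu2⟩, hu3⟩ := ((hev.and hev2).and eventually_mem_nhdsWithin).exists
            linarith [hafter u hu3 hu2.le]
        have hτIco := hsub hτmem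
        have hlamτ : lam τ = ψ (W τ) := by
          have h1 : lam τ - ψ (W τ) = 0 := hDτ
          linarith
        have hlamτpos := hlampos τ hτIco
        have hWτpos : 0 < W τ := by
          rcases eq_or_lt_of_le (hWnn τ) with h | h
          · exfalso
            rw [← h, hψ0] at hlamτ
            linarith
          · exact h
        have hWτa : W τ ≤ a := claimA τ hτIco
        obtain ⟨⟨hψWpos, hψWr₀, hψWβ⟩, d, hdD, hdpos, hdkey⟩ := hψP (W τ) ⟨hWτpos, hWτa⟩
        have hcomp : HasDerivAt (fun u => ψ (W u)) (d * W' τ) τ := hdD.comp τ (hWd τ hτIco)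
        have hDd : HasDerivAt D (-(lam τ) - d * W' τ) τ := (hlamd τ hτIco).sub hcomp
        have hW'b : W' τ ≤ -(α₀ (W τ) / 2) := by
          have h1 := hW'le τ
          rw [abs_of_nonneg hlamτpos.le, hlamτ] at h1
          have hφb : φ (ψ (W τ)) ≤ L * ψ (W τ) := hφL _ (hψnn _ (hWnn τ)) hψWr₀
          have hβb : β (W τ) * φ (ψ (W τ)) ≤ α₀ (W τ) / 2 := by
            calc β (W τ) * φ (ψ (W τ)) ≤ |β (W τ)| * φ (ψ (W τ)) :=
                  mul_le_mul_of_nonneg_right (le_abs_self _) (hφnn _ (hψnn _ (hWnn τ)))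
            _ ≤ |β (W τ)| * (L * ψ (W τ)) := mul_le_mul_of_nonneg_left hφb (abs_nonneg _)
            _ ≤ α₀ (W τ) / 2 := hψWβ
          linarith
        have hD'pos : 0 < -(lam τ) - d * W' τ := by
          have h2 : d * W' τ ≤ d * (-(α₀ (W τ) / 2)) :=
            mul_le_mul_of_nonneg_left hW'b hdpos.le
          have h4 : d * (-(α₀ (W τ) / 2)) = -(d * (α₀ (W τ) / 2)) := by ring
          rw [h4] at h2
          rw [hlamτ]
          linarith [hdkey]
        have hev := cross_pos hDd hD'pos
        have hev2 : ∀ᶠ u in 𝓝[>] τ, u < t₂ :=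
          (eventually_lt_nhds hτlt).filter_mono nhdsWithin_le_nhds
        obtain ⟨u, ⟨hu1, hu2⟩, hu3⟩ := ((hev.and hev2).and eventually_mem_nhdsWithin).exists
        rw [hDτ] at hu1
        linarith [hafter u hu3 hu2.le]
    intro t ht
    exact ⟨⟨hWnn t, claimA t ht⟩, claimB t ht, hlam_le t ht⟩
  refine ⟨fun _ l _ => -l, (continuous_fst.comp continuous_snd).neg,
    ψ, ⟨⟨hψcont, hψmono, hψ0⟩, hψtop⟩, a, ha, INV, ?_⟩
  -- boundedness and convergence
  intro t₀ x lam hsol hpass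
  obtain ⟨t₁, ht₁, hΩ⟩ := hpass
  have hinv : ∀ t, t₁ ≤ t → V (x t) ∈ Set.Icc (0:ℝ) a ∧ ψ (V (x t)) ≤ lam t ∧ lam t ≤ ψ a := by
    intro t htt
    exact INV t₁ (t + 1) x lam (fun u hu => hsol u (le_trans ht₁ hu.1)) hΩ t ⟨htt, lt_add_one t⟩
  have hlam_eq : ∀ t, t₁ ≤ t → lam t = lam t₁ * Real.exp (t₁ - t) := by
    intro t htt
    exact sol_exp htt (fun u hu => (hsol u (le_trans ht₁ hu.1)).2)
  have hltend : Filter.Tendsto lam Filter.atTop (nhds 0) := by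
    have h1 : Tendsto (fun t : ℝ => t₁ - t) atTop atBot := by
      simp only [sub_eq_add_neg]
      exact tendsto_atBot_add_const_left _ t₁ tendsto_neg_atTop_atBot
    have h2 : Tendsto (fun t : ℝ => lam t₁ * Real.exp (t₁ - t)) atTop (𝓝 0) := by
      have := (Real.tendsto_exp_atBot.comp h1).const_mul (lam t₁)
      simpa using this
    apply h2.congr'
    filter_upwards [eventually_ge_atTop t₁] with t htt
    exact (hlam_eq t htt).symm
  have hlamnn : ∀ t, t₁ ≤ t → 0 ≤ lam t :=
    fun t htt => le_trans (hψnn _ (hVnn _)) (hinv t htt).2.1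
  have hxcont : ContinuousOn x (Set.Icc t₀ t₁) :=
    fun u hu => ((hsol u hu.1).1.continuousAt).continuousWithinAt
  have hlcont : ContinuousOn lam (Set.Icc t₀ t₁) :=
    fun u hu => ((hsol u hu.1).2.continuousAt).continuousWithinAt
  obtain ⟨C1, hC1⟩ := isCompact_Icc.exists_bound_of_continuousOn hxcont
  obtain ⟨C2, hC2⟩ := isCompact_Icc.exists_bound_of_continuousOn hlcont
  obtain ⟨B, hB⟩ := eventually_atTop.1 (hαltop.eventually_ge_atTop (a + 1))
  have hxbd : ∀ t, t₁ ≤ t → ‖x t‖ ≤ B := by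
    intro t htt
    by_contra hgt
    push_neg at hgt
    have h1 : a + 1 ≤ αlow ‖x t‖ := hB _ hgt.le
    have h2 : αlow ‖x t‖ ≤ V (x t) := (hVbound (x t)).1
    have h3 : V (x t) ≤ a := (hinv t htt).1.2
    linarith
  refine ⟨⟨max (max C1 C2) (max B (ψ a)), ?_⟩, ⟨0, ⟨le_rfl, hψnn a ha.le⟩, hltend⟩, ?_⟩
  · intro t htt
    rcases le_total t t₁ with h | h
    · constructor
      · exact le_trans (hC1 t ⟨htt, h⟩) (le_trans (le_max_left _ _) (le_max_left _ _))
      · have h2 := hC2 t ⟨htt, h⟩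
        rw [Real.norm_eq_abs] at h2
        exact le_trans h2 (le_trans (le_max_right C1 C2) (le_max_left _ _))
    · constructor
      · exact le_trans (hxbd t h) (le_trans (le_max_left B (ψ a)) (le_max_right _ _))
      · rw [abs_of_nonneg (hlamnn t h)]
        exact le_trans (hinv t h).2.2 (le_trans (le_max_right B (ψ a)) (le_max_right _ _))
  · -- convergence of ‖x t‖ to 0
    have hWsmall : ∀ ε, 0 < ε → ∃ N, ∀ t ≥ N, V (x t) < ε := by
      intro ε hε
      set δ := min ε a with hδdef
      have hδpos : 0 < δ := lt_min hε ha
      have hψδ : 0 < ψ δ := hψposs δ hδpos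
      obtain ⟨N, hN⟩ := Metric.tendsto_atTop.1 hltend (ψ δ) hψδ
      refine ⟨max N t₁, fun t htt => ?_⟩
      have h1 : dist (lam t) 0 < ψ δ := hN t (le_trans (le_max_left _ _) htt)
      rw [Real.dist_eq, sub_zero] at h1
      have ht₁' : t₁ ≤ t := le_trans (le_max_right _ _) htt
      have h2 : ψ (V (x t)) ≤ lam t := (hinv t ht₁').2.1
      have h3 : lam t ≤ |lam t| := le_abs_self _
      have h4 : ψ (V (x t)) < ψ δ := by linarith
      have h5 : V (x t) < δ :=
        (hψmono.lt_iff_lt (mem_Ici.2 (hVnn _)) (mem_Ici.2 hδpos.le)).1 h4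
      exact lt_of_lt_of_le h5 (min_le_left _ _)
    rw [Metric.tendsto_atTop]
    intro ε hε
    have hαε : 0 < αlow ε := hαlpos ε hε
    obtain ⟨N, hN⟩ := hWsmall (αlow ε) hαε
    refine ⟨N, fun t htt => ?_⟩
    have h1 : αlow ‖x t‖ ≤ V (x t) := (hVbound (x t)).1
    have h2 : V (x t) < αlow ε := hN t htt
    have h3 : ‖x t‖ < ε := by
      by_contra h4
      push_neg at h4
      have h5 := hαlm.monotoneOn (mem_Ici.2 hε.le) (mem_Ici.2 (norm_nonneg _)) h4
      linarith
    rw [Real.dist_eq, sub_zero, abs_of_nonneg (norm_nonneg _)]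
    exact h3
end
end

section
/- Let α₀ be a function of class P, let β : [0,∞) → ℝ be continuous, and let φ be a function of class K that is locally Lipschitz. Then there exist a constant a > 0 and functions ψ and γ of class P such that the epigraph of the restriction of ψ to [0,a] is star-shaped with respect to the origin and ψ(V)·[−α₀(V) + β(V)·φ(ψ(V))] + V·γ(V) ≤ 0 for all V ∈ [0,a]. -/
open Set Filter Topology

noncomputable section

/-- A set `S` is star-shaped with respect to a point `c ∈ S` when, for every `y ∈ S`,
the segment `[c,y]` lies in `S`. -/
def StarShapedWrt {E : Type*} [AddCommGroup E] [Module ℝ E] (S : Set E) (c : E) : Prop :=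
  c ∈ S ∧ ∀ y ∈ S, segment ℝ c y ⊆ S

/-- The running minimum of `f` over `[t,1]` is attained and equals the `sInf` of the image. -/
lemma minOn_spec (f : ℝ → ℝ) (hf : ContinuousOn f (Set.Icc 0 1))
    {t : ℝ} (ht : t ∈ Set.Icc (0:ℝ) 1) :
    ∃ s ∈ Set.Icc t 1, (∀ u ∈ Set.Icc t 1, f s ≤ f u) ∧ sInf (f '' Set.Icc t 1) = f s := by
  have hsub : Set.Icc t 1 ⊆ Set.Icc (0:ℝ) 1 := Set.Icc_subset_Icc ht.1 le_rfl
  obtain ⟨s, hs, hmin⟩ := isCompact_Icc.exists_isMinOn ⟨t, Set.mem_Icc.mpr ⟨le_rfl, ht.2⟩⟩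
    (hf.mono hsub)
  refine ⟨s, hs, fun u hu => hmin hu, ?_⟩
  exact IsLeast.csInf_eq ⟨Set.mem_image_of_mem f hs, by rintro _ ⟨u, hu, rfl⟩; exact hmin hu⟩

/-- For `α₀ ∈ P`, `β` continuous and `φ ∈ K` locally Lipschitz, there exist `a > 0` and
functions `ψ, γ ∈ P` such that the epigraph of the restriction of `ψ` to `[0,a]` is
star-shaped with respect to the origin and
`ψ(V)[−α₀(V) + β(V)φ(ψ(V))] + V·γ(V) ≤ 0` for all `V ∈ [0,a]`. -/
theorem exists_star_shaped_psi
    (α₀ : ℝ → ℝ) (hα₀ : ClassP α₀)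
    (β : ℝ → ℝ) (hβ : Continuous β)
    (φ : ℝ → ℝ) (hφ : ClassK φ) (hφlip : LocallyLipschitz φ) :
    ∃ a : ℝ, 0 < a ∧ ∃ ψ γ : ℝ → ℝ, ClassP ψ ∧ ClassP γ ∧
      StarShapedWrt {q : ℝ × ℝ | q.1 ∈ Set.Icc (0:ℝ) a ∧ ψ q.1 ≤ q.2} ((0:ℝ), (0:ℝ)) ∧
      ∀ v ∈ Set.Icc (0:ℝ) a, ψ v * (-α₀ v + β v * φ (ψ v)) + v * γ v ≤ 0 := by
  obtain ⟨hα₀c, hα₀0, hα₀pos⟩ := hα₀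
  obtain ⟨hφc, hφmono, hφ0⟩ := hφ
  -- α₀ is nonnegative on [0,∞)
  have hα₀nn : ∀ s : ℝ, 0 ≤ s → 0 ≤ α₀ s := by
    intro s hs
    rcases hs.eq_or_lt with h | h
    · rw [← h, hα₀0]
    · exact (hα₀pos s h).le
  -- φ is nonnegative on [0,∞)
  have hφnn : ∀ s : ℝ, 0 ≤ s → 0 ≤ φ s := by
    intro s hs
    rcases hs.eq_or_lt with h | h
    · rw [← h, hφ0]
    · rw [← hφ0]
      exact (hφmono (Set.self_mem_Ici) (Set.mem_Ici.mpr hs) h).le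
  -- Lipschitz bound near 0 : ∃ δ' > 0, ∃ K' ≥ 1, φ s ≤ K' s on [0, δ']
  obtain ⟨K, t, ht, hlip⟩ := hφlip 0
  obtain ⟨δ, hδpos, hball⟩ := Metric.mem_nhds_iff.mp ht
  set K' : ℝ := max (K : ℝ) 1 with hK'
  have hK1 : (1:ℝ) ≤ K' := le_max_right _ _
  have hK'pos : 0 < K' := lt_of_lt_of_le one_pos hK1
  set δ' : ℝ := δ / 2 with hδ'
  have hδ'pos : 0 < δ' := by positivity
  have hφlin : ∀ s : ℝ, 0 ≤ s → s ≤ δ' → φ s ≤ K' * s := by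
    intro s hs0 hsδ
    have hst : s ∈ t := hball (by
      simp only [Metric.mem_ball, Real.dist_eq, sub_zero, abs_of_nonneg hs0]
      linarith)
    have h0t : (0:ℝ) ∈ t := hball (Metric.mem_ball_self hδpos)
    have := hlip.dist_le_mul s hst 0 h0t
    rw [Real.dist_eq, Real.dist_eq, hφ0, sub_zero, sub_zero, abs_of_nonneg hs0] at this
    calc φ s ≤ |φ s| := le_abs_self _
      _ ≤ (K:ℝ) * s := this
      _ ≤ K' * s := by
          exact mul_le_mul_of_nonneg_right (le_max_left _ _) hs0
  -- bound on β over [0,1]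
  obtain ⟨C, hC⟩ := isCompact_Icc.exists_bound_of_continuousOn
    (hβ.continuousOn : ContinuousOn β (Set.Icc (0:ℝ) 1))
  set M : ℝ := max C 1 with hM
  have hM1 : (1:ℝ) ≤ M := le_max_right _ _
  have hMpos : 0 < M := lt_of_lt_of_le one_pos hM1
  have hβle : ∀ v ∈ Set.Icc (0:ℝ) 1, β v ≤ M := by
    intro v hv
    calc β v ≤ |β v| := le_abs_self _
      _ ≤ C := by simpa [Real.norm_eq_abs] using hC v hv
      _ ≤ M := le_max_left _ _
  -- the running minimum function
  set m : ℝ → ℝ := fun t => sInf (α₀ '' Set.Icc t 1) with hm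
  have hα₀c1 : ContinuousOn α₀ (Set.Icc (0:ℝ) 1) := hα₀c.mono (fun x hx => hx.1)
  have hspec : ∀ t ∈ Set.Icc (0:ℝ) 1, ∃ s ∈ Set.Icc t 1,
      (∀ u ∈ Set.Icc t 1, α₀ s ≤ α₀ u) ∧ m t = α₀ s := by
    intro t ht
    obtain ⟨s, hs, hmin, heq⟩ := minOn_spec α₀ hα₀c1 ht
    exact ⟨s, hs, hmin, heq⟩
  -- m t ≤ α₀ s for s ∈ [t,1]
  have hmle : ∀ t ∈ Set.Icc (0:ℝ) 1, ∀ s ∈ Set.Icc t 1, m t ≤ α₀ s := by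
    intro t ht s hs
    obtain ⟨u, hu, humin, heq⟩ := hspec t ht
    rw [heq]
    exact humin s hs
  -- m is monotone
  have hmono : ∀ t1 t2 : ℝ, 0 ≤ t1 → t1 ≤ t2 → t2 ≤ 1 → m t1 ≤ m t2 := by
    intro t1 t2 h0 h12 h21
    obtain ⟨u, hu, humin, heq⟩ := hspec t2 (Set.mem_Icc.mpr ⟨h0.trans h12, h21⟩)
    rw [heq]
    exact hmle t1 ⟨h0, h12.trans h21⟩ u ⟨h12.trans hu.1, hu.2⟩
  -- m is nonnegative
  have hmnn : ∀ t ∈ Set.Icc (0:ℝ) 1, 0 ≤ m t := by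
    intro t ht
    obtain ⟨u, hu, humin, heq⟩ := hspec t ht
    rw [heq]
    exact hα₀nn u (ht.1.trans hu.1)
  -- m is positive on (0,1]
  have hmpos : ∀ t : ℝ, 0 < t → t ≤ 1 → 0 < m t := by
    intro t h0 h1
    obtain ⟨u, hu, humin, heq⟩ := hspec t ⟨h0.le, h1⟩
    rw [heq]
    exact hα₀pos u (lt_of_lt_of_le h0 hu.1)
  -- m is continuous on [0,1]
  have hmcont : ContinuousOn m (Set.Icc (0:ℝ) 1) := by
    rw [Metric.continuousOn_iff]
    intro b hb ε hε
    have hu : UniformContinuousOn α₀ (Set.Icc (0:ℝ) 1) :=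
      isCompact_Icc.uniformContinuousOn_of_continuous hα₀c1
    obtain ⟨δ₀, hδ₀, hδ₀prop⟩ := Metric.uniformContinuousOn_iff.mp hu ε hε
    refine ⟨δ₀, hδ₀, ?_⟩
    -- key one-sided estimate
    have key : ∀ t1 ∈ Set.Icc (0:ℝ) 1, ∀ t2 ∈ Set.Icc (0:ℝ) 1,
        t1 ≤ t2 → t2 - t1 < δ₀ → m t2 < m t1 + ε := by
      intro t1 ht1 t2 ht2 h12 hd
      obtain ⟨s, hs, hsmin, heq1⟩ := hspec t1 ht1
      rcases le_or_gt t2 s with hcase | hcase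
      · have : m t2 ≤ α₀ s := hmle t2 ht2 s ⟨hcase, hs.2⟩
        have h2 : m t2 ≤ m t1 := by rw [heq1]; exact this
        linarith
      · have hs01 : s ∈ Set.Icc (0:ℝ) 1 := ⟨ht1.1.trans hs.1, hs.2⟩
        have hds : dist s t2 < δ₀ := by
          rw [Real.dist_eq, abs_of_nonpos (by linarith)]
          have : t1 ≤ s := hs.1
          linarith
        have := hδ₀prop s hs01 t2 ht2 hds
        rw [Real.dist_eq] at this
        have habs : α₀ t2 < α₀ s + ε := by
          have := abs_lt.mp this
          linarith [this.1, this.2]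
        have h2 : m t2 ≤ α₀ t2 := hmle t2 ht2 t2 ⟨le_rfl, ht2.2⟩
        have h1 : m t1 = α₀ s := heq1
        linarith
    intro x hx hxb
    rcases le_total x b with hxb' | hxb'
    · have h1 : m x ≤ m b := hmono x b hx.1 hxb' hb.2
      have h2 : m b < m x + ε := key x hx b hb hxb' (by
        rw [Real.dist_eq] at hxb
        have := abs_lt.mp hxb
        linarith [this.1])
      rw [Real.dist_eq, abs_of_nonpos (by linarith)]
      linarith
    · have h1 : m b ≤ m x := hmono b x hb.1 hxb' hx.2
      have h2 : m x < m b + ε := key b hb x hx hxb' (by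
        rw [Real.dist_eq] at hxb
        have := abs_lt.mp hxb
        linarith [this.2])
      rw [Real.dist_eq, abs_of_nonneg (by linarith)]
      linarith
  -- clamped version
  have hclamp : ∀ V : ℝ, 0 ≤ V → min V 1 ∈ Set.Icc (0:ℝ) 1 :=
    fun V hV => ⟨le_min hV zero_le_one, min_le_right _ _⟩
  have hmccont : ContinuousOn (fun V => m (min V 1)) (Set.Ici (0:ℝ)) :=
    hmcont.comp ((continuous_id.min continuous_const).continuousOn) (fun V hV => hclamp V hV)
  -- choice of constant
  have hα₀1pos : 0 < α₀ 1 := hα₀pos 1 one_pos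
  set k : ℝ := min (1 / (2 * M * K')) (δ' / (α₀ 1 + 1)) with hk
  have hkpos : 0 < k := lt_min (by positivity) (by positivity)
  -- the functions
  set ψ : ℝ → ℝ := fun V => k * (V * m (min V 1)) with hψ
  set γ : ℝ → ℝ := fun V => (k / 2) * (m (min V 1) * α₀ V) with hγ
  have hψ0 : ψ 0 = 0 := by simp [hψ]
  have hψnn : ∀ V : ℝ, 0 ≤ V → 0 ≤ ψ V := by
    intro V hV
    exact mul_nonneg hkpos.le (mul_nonneg hV (hmnn _ (hclamp V hV)))
  have hψpos : ∀ V : ℝ, 0 < V → 0 < ψ V := by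
    intro V hV
    exact mul_pos hkpos (mul_pos hV (hmpos _ (lt_min hV one_pos) (min_le_right _ _)))
  have hψP : ClassP ψ := by
    refine ⟨?_, hψ0, fun s hs => hψpos s hs⟩
    exact continuousOn_const.mul (continuousOn_id.mul hmccont)
  have hγP : ClassP γ := by
    refine ⟨?_, ?_, ?_⟩
    · exact continuousOn_const.mul (hmccont.mul hα₀c)
    · simp [hγ, hα₀0]
    · intro s hs
      exact mul_pos (by positivity)
        (mul_pos (hmpos _ (lt_min hs one_pos) (min_le_right _ _)) (hα₀pos s hs))
  -- bound ψ ≤ δ' on [0,1]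
  have hm1 : ∀ V : ℝ, 0 ≤ V → m (min V 1) ≤ α₀ 1 := by
    intro V hV
    calc m (min V 1) ≤ m 1 := hmono _ _ (hclamp V hV).1 (min_le_right _ _) le_rfl
      _ ≤ α₀ 1 := hmle 1 ⟨zero_le_one, le_rfl⟩ 1 ⟨le_rfl, le_rfl⟩
  have hψδ' : ∀ V ∈ Set.Icc (0:ℝ) 1, ψ V ≤ δ' := by
    intro V hV
    have h1 : ψ V ≤ k * α₀ 1 := by
      simp only [hψ]
      have : V * m (min V 1) ≤ 1 * α₀ 1 :=
        mul_le_mul hV.2 (hm1 V hV.1) (hmnn _ (hclamp V hV.1)) zero_le_one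
      nlinarith [hkpos]
    have h2 : k * α₀ 1 ≤ (δ' / (α₀ 1 + 1)) * α₀ 1 :=
      mul_le_mul_of_nonneg_right (min_le_right _ _) hα₀1pos.le
    have h3 : (δ' / (α₀ 1 + 1)) * α₀ 1 ≤ δ' := by
      rw [div_mul_eq_mul_div, div_le_iff₀ (by positivity)]
      nlinarith [hδ'pos]
    linarith
  -- the key estimate: β V * φ (ψ V) ≤ α₀ V / 2 for V ∈ (0,1]
  have hkey : ∀ V ∈ Set.Icc (0:ℝ) 1, β V * φ (ψ V) ≤ α₀ V / 2 := by
    intro V hV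
    have hψVnn : 0 ≤ ψ V := hψnn V hV.1
    have hφψnn : 0 ≤ φ (ψ V) := hφnn _ hψVnn
    rcases le_or_gt (β V) 0 with hβ0 | hβ0
    · have : β V * φ (ψ V) ≤ 0 := mul_nonpos_of_nonpos_of_nonneg hβ0 hφψnn
      have := hα₀nn V hV.1
      linarith
    · have hφlin' : φ (ψ V) ≤ K' * ψ V := hφlin _ hψVnn (hψδ' V hV)
      have hβM : β V ≤ M := hβle V hV
      have step1 : β V * φ (ψ V) ≤ M * (K' * ψ V) := by
        calc β V * φ (ψ V) ≤ M * φ (ψ V) := mul_le_mul_of_nonneg_right hβM hφψnn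
          _ ≤ M * (K' * ψ V) := mul_le_mul_of_nonneg_left hφlin' hMpos.le
      -- ψ V ≤ k * α₀ V
      have hminV : min V 1 = V := min_eq_left hV.2
      have step2 : ψ V ≤ k * α₀ V := by
        have hmV : m V ≤ α₀ V := hmle V hV V ⟨le_rfl, hV.2⟩
        have hmVnn : 0 ≤ m V := hmnn V hV
        have h4 : V * m V ≤ α₀ V := by
          calc V * m V ≤ 1 * m V := mul_le_mul_of_nonneg_right hV.2 hmVnn
            _ = m V := one_mul _
            _ ≤ α₀ V := hmV
        show k * (V * m (min V 1)) ≤ k * α₀ V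
        rw [hminV]
        exact mul_le_mul_of_nonneg_left h4 hkpos.le
      have hkb : k ≤ 1 / (2 * M * K') := min_le_left _ _
      have step3 : M * (K' * (k * α₀ V)) ≤ α₀ V / 2 := by
        have hα₀Vnn : 0 ≤ α₀ V := hα₀nn V hV.1
        have : M * K' * k ≤ 1 / 2 := by
          rw [hk]
          calc M * K' * min (1 / (2 * M * K')) (δ' / (α₀ 1 + 1))
              ≤ M * K' * (1 / (2 * M * K')) :=
                mul_le_mul_of_nonneg_left (min_le_left _ _) (by positivity)
            _ = 1 / 2 := by field_simp
        nlinarith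
      calc β V * φ (ψ V) ≤ M * (K' * ψ V) := step1
        _ ≤ M * (K' * (k * α₀ V)) := by
            have : K' * ψ V ≤ K' * (k * α₀ V) := mul_le_mul_of_nonneg_left step2 hK'pos.le
            exact mul_le_mul_of_nonneg_left this hMpos.le
        _ ≤ α₀ V / 2 := step3
  -- homogeneity-type bound for ψ
  have hψhom : ∀ θ V : ℝ, 0 ≤ θ → θ ≤ 1 → 0 ≤ V → V ≤ 1 → ψ (θ * V) ≤ θ * ψ V := by
    intro θ V hθ0 hθ1 hV0 hV1
    have hθV : θ * V ≤ V := by nlinarith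
    have hθVnn : 0 ≤ θ * V := mul_nonneg hθ0 hV0
    have hmm : m (min (θ * V) 1) ≤ m (min V 1) :=
      hmono _ _ (le_min hθVnn zero_le_one) (min_le_min hθV le_rfl) (min_le_right _ _)
    show k * ((θ * V) * m (min (θ * V) 1)) ≤ θ * (k * (V * m (min V 1)))
    calc k * ((θ * V) * m (min (θ * V) 1)) ≤ k * ((θ * V) * m (min V 1)) :=
        mul_le_mul_of_nonneg_left (mul_le_mul_of_nonneg_left hmm hθVnn) hkpos.le
      _ = θ * (k * (V * m (min V 1))) := by ring
  -- star-shapedness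
  have hstar : StarShapedWrt {q : ℝ × ℝ | q.1 ∈ Set.Icc (0:ℝ) 1 ∧ ψ q.1 ≤ q.2}
      ((0:ℝ), (0:ℝ)) := by
    refine ⟨⟨⟨le_rfl, zero_le_one⟩, by rw [hψ0]⟩, ?_⟩
    rintro ⟨V, μ⟩ ⟨hV, hμ⟩ z hz
    rw [segment_eq_image] at hz
    obtain ⟨θ, hθ, rfl⟩ := hz
    have hθ0 := hθ.1
    have hθ1 := hθ.2
    have hz1 : ((1 - θ) • (((0:ℝ), (0:ℝ)) : ℝ × ℝ) + θ • ((V, μ) : ℝ × ℝ))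
        = ((θ * V, θ * μ) : ℝ × ℝ) := by
      simp [Prod.ext_iff, smul_eq_mul]
    show ((1 - θ) • (((0:ℝ), (0:ℝ)) : ℝ × ℝ) + θ • ((V, μ) : ℝ × ℝ))
        ∈ {q : ℝ × ℝ | q.1 ∈ Set.Icc (0:ℝ) 1 ∧ ψ q.1 ≤ q.2}
    rw [hz1]
    refine ⟨⟨mul_nonneg hθ0 hV.1, ?_⟩, ?_⟩
    · calc θ * V ≤ 1 * V := mul_le_mul_of_nonneg_right hθ1 hV.1
        _ = V := one_mul V
        _ ≤ 1 := hV.2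
    · calc ψ (θ * V) ≤ θ * ψ V := hψhom θ V hθ0 hθ1 hV.1 hV.2
        _ ≤ θ * μ := mul_le_mul_of_nonneg_left hμ hθ0
  refine ⟨1, one_pos, ψ, γ, hψP, hγP, hstar, ?_⟩
  -- the main inequality
  intro V hV
  have hid : V * γ V = ψ V * (α₀ V / 2) := by simp only [hψ, hγ]; ring
  have hψVnn : 0 ≤ ψ V := hψnn V hV.1
  have hkeyV := hkey V hV
  calc ψ V * (-α₀ V + β V * φ (ψ V)) + V * γ V
      = ψ V * (β V * φ (ψ V) - α₀ V / 2) := by rw [hid]; ring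
    _ ≤ 0 := mul_nonpos_of_nonneg_of_nonpos hψVnn (by linarith)
end
end

section
/- Consider the system ẋ = f(x,t) + b(x,λ,t), λ̇ = −γ‖x‖ with γ > 0, where f : ℝⁿ×ℝ → ℝⁿ and b : ℝⁿ×ℝ×ℝ → ℝⁿ are continuous, b is Lipschitz in λ with constant B (‖b(x,λ,t) − b(x,λ',t)‖ ≤ B|λ − λ'|) and b(x,0,t) = 0, and there exists a quadratic function V(x) = xᵀPx with P = Pᵀ > 0 such that p̲‖x‖² ≤ V(x) ≤ p̄‖x‖², ‖Px‖ ≤ σ‖x‖, and ⟨∇V(x), f(x,t)⟩ ≤ −k·V(x) for some k > 0. If γ < k²·p̲/(16·σ·B), then every solution (x(·),λ(·)) with λ(t₀) ≥ ‖x(t₀)‖·k·√(p̲·p̄)/(4σB) is bounded in forward time and satisfies λ(t) ≥ ‖x(t)‖·k·p̲/(4σB) for all t ≥ t₀ in its interval of existence. -/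
open Set Filter Topology RealInnerProductSpace

noncomputable section

lemma hasDerivAt_mul_abs (a : ℝ) : HasDerivAt (fun u : ℝ => u * |u|) (2 * |a|) a := by
  rcases lt_trichotomy a 0 with h | h | h
  · have hD : HasDerivAt (fun u : ℝ => -(u * u)) (2 * |a|) a := by
      have := ((hasDerivAt_id a).mul (hasDerivAt_id a)).neg
      refine this.congr_deriv ?_
      rw [abs_of_neg h]; simp only [id]; ring
    refine hD.congr_of_eventuallyEq ?_
    filter_upwards [Iio_mem_nhds h] with u hu
    rw [abs_of_neg hu]; ring
  · subst h
    rw [hasDerivAt_iff_tendsto_slope]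
    have h1 : Filter.Tendsto (fun u : ℝ => |u|) (𝓝[≠] (0:ℝ)) (𝓝 0) := by
      simpa using (continuous_abs.tendsto (0:ℝ)).mono_left nhdsWithin_le_nhds
    simp only [abs_zero, mul_zero]
    refine h1.congr' ?_
    filter_upwards [self_mem_nhdsWithin] with u hu
    have hu' : u ≠ 0 := hu
    rw [slope_def_field]
    field_simp
    ring
  · have hD : HasDerivAt (fun u : ℝ => u * u) (2 * |a|) a := by
      have := (hasDerivAt_id a).mul (hasDerivAt_id a)
      refine this.congr_deriv ?_
      rw [abs_of_pos h]; simp only [id]; ring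
    refine hD.congr_of_eventuallyEq ?_
    filter_upwards [Ioi_mem_nhds h] with u hu
    rw [abs_of_pos hu]


lemma barrier_arith (k β c L X v E d : ℝ) (hk : 0 < k) (hβ : 0 < β) (hc : c < k * β)
    (hX : 0 ≤ X) (hE : 0 < E) (hβX : β ^ 2 * X ^ 2 ≤ v)
    (heq : v - L * |L| = E) (hd : d ≤ -(k * v) + c * (X * |L|)) : d < k * E := by
  rcases le_or_gt 0 L with hL | hL
  · rw [abs_of_nonneg hL] at heq hd
    nlinarith [mul_nonneg (mul_nonneg hL hX) (sub_pos.mpr hc).le,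
      mul_nonneg hk.le (sq_nonneg (L - β * X)), mul_pos hk hE,
      mul_le_mul_of_nonneg_left hβX hk.le]
  · rw [abs_of_neg hL] at heq hd
    nlinarith [mul_nonneg (mul_nonneg (neg_nonneg.mpr hL.le) hX) (sub_pos.mpr hc).le,
      mul_nonneg hk.le (sq_nonneg (L + β * X)), mul_pos hk hE,
      mul_le_mul_of_nonneg_left hβX hk.le,
      mul_nonneg hk.le (mul_nonneg (sq_nonneg β) (sq_nonneg X))]

set_option maxHeartbeats 1000000 in
/-- **Corollary (non-uniform small-gain condition).**
For `ẋ = f(x,t) + b(x,λ,t)`, `λ̇ = −γ‖x‖`, with `b` Lipschitz in `λ` with constant `B`,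
`b(x,0,t) = 0`, and a quadratic Lyapunov function `V(x) = ⟪x, Px⟫` with
`p̲‖x‖² ≤ V(x) ≤ p̄‖x‖²`, `‖Px‖ ≤ σ‖x‖` and `⟨∇V, f⟩ ≤ −kV`: if
`γ < k²p̲/(16σB)`, then every solution with `λ(t₀) ≥ ‖x(t₀)‖·k·√(p̲p̄)/(4σB)` is bounded
in forward time and satisfies `λ(t) ≥ ‖x(t)‖·k·p̲/(4σB)` on its interval of existence. -/
theorem nonuniform_small_gain
    {n : ℕ}
    (f : EuclideanSpace ℝ (Fin n) → ℝ → EuclideanSpace ℝ (Fin n))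
    (b : EuclideanSpace ℝ (Fin n) → ℝ → ℝ → EuclideanSpace ℝ (Fin n))
    (hf_cont : Continuous fun q : EuclideanSpace ℝ (Fin n) × ℝ => f q.1 q.2)
    (hb_cont : Continuous fun q : EuclideanSpace ℝ (Fin n) × ℝ × ℝ => b q.1 q.2.1 q.2.2)
    (B : ℝ) (hB : 0 < B)
    (hb_lip : ∀ (x : EuclideanSpace ℝ (Fin n)) (lam lam' t : ℝ),
      ‖b x lam t - b x lam' t‖ ≤ B * |lam - lam'|)
    (hb0 : ∀ (x : EuclideanSpace ℝ (Fin n)) (t : ℝ), b x 0 t = 0)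
    (γ : ℝ) (hγ : 0 < γ)
    -- the quadratic Lyapunov function V(x) = xᵀ P x with P = Pᵀ > 0
    (P : EuclideanSpace ℝ (Fin n) →L[ℝ] EuclideanSpace ℝ (Fin n))
    (hP_sym : ∀ x y : EuclideanSpace ℝ (Fin n), ⟪P x, y⟫ = ⟪x, P y⟫)
    (plow phigh σ k : ℝ)
    (hplow : 0 < plow) (hphigh : 0 < phigh) (hσ : 0 < σ) (hk : 0 < k)
    (hV_low : ∀ x : EuclideanSpace ℝ (Fin n), plow * ‖x‖ ^ 2 ≤ ⟪x, P x⟫)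
    (hV_high : ∀ x : EuclideanSpace ℝ (Fin n), ⟪x, P x⟫ ≤ phigh * ‖x‖ ^ 2)
    (hPx : ∀ x : EuclideanSpace ℝ (Fin n), ‖P x‖ ≤ σ * ‖x‖)
    (hVdot : ∀ (x : EuclideanSpace ℝ (Fin n)) (t : ℝ),
      fderiv ℝ (fun y : EuclideanSpace ℝ (Fin n) => ⟪y, P y⟫) x (f x t) ≤ -(k * ⟪x, P x⟫))
    -- the small-gain condition on γ
    (hsg : γ < k ^ 2 * plow / (16 * σ * B))
    -- a solution on [t₀, T)
    (t₀ T : ℝ) (x : ℝ → EuclideanSpace ℝ (Fin n)) (lam : ℝ → ℝ)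
    (hsol : ∀ t ∈ Set.Ico t₀ T,
      HasDerivAt x (f (x t) t + b (x t) (lam t) t) t ∧
      HasDerivAt lam (-(γ * ‖x t‖)) t)
    -- with initial condition in Ω_a'
    (hinit : ‖x t₀‖ * k * Real.sqrt (plow * phigh) / (4 * σ * B) ≤ lam t₀) :
    (∃ M : ℝ, ∀ t ∈ Set.Ico t₀ T, ‖x t‖ ≤ M ∧ |lam t| ≤ M) ∧
    ∀ t ∈ Set.Ico t₀ T, ‖x t‖ * k * plow / (4 * σ * B) ≤ lam t := by
  classical
  -- derivative of the quadratic form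
  have hq : ∀ x₀ : EuclideanSpace ℝ (Fin n),
      HasFDerivAt (fun y : EuclideanSpace ℝ (Fin n) => ⟪y, P y⟫)
        ((fderivInnerCLM ℝ (x₀, P x₀)).comp
          ((ContinuousLinearMap.id ℝ (EuclideanSpace ℝ (Fin n))).prod P)) x₀ := by
    intro x₀
    exact (hasFDerivAt_id x₀).inner ℝ P.hasFDerivAt
  have hVdot' : ∀ (x₀ : EuclideanSpace ℝ (Fin n)) (t : ℝ),
      ⟪x₀, P (f x₀ t)⟫ + ⟪f x₀ t, P x₀⟫ ≤ -(k * ⟪x₀, P x₀⟫) := by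
    intro x₀ t
    have h := hVdot x₀ t
    rw [(hq x₀).fderiv] at h
    simpa [fderivInnerCLM_apply] using h
  set Vt : ℝ → ℝ := fun s => ⟪x s, P (x s)⟫ with hVt_def
  set Vd : ℝ → ℝ := fun s =>
    ⟪x s, P (f (x s) s + b (x s) (lam s) s)⟫ + ⟪f (x s) s + b (x s) (lam s) s, P (x s)⟫
    with hVd_def
  have hVt : ∀ s ∈ Set.Ico t₀ T, HasDerivAt Vt (Vd s) s := by
    intro s hs
    exact HasDerivAt.inner ℝ (hsol s hs).1 (P.hasFDerivAt.comp_hasDerivAt s (hsol s hs).1)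
  have hVtnn : ∀ s, 0 ≤ Vt s := fun s =>
    le_trans (by positivity) (hV_low (x s))
  -- bound on Vd
  have hVd_le : ∀ s ∈ Set.Ico t₀ T,
      Vd s ≤ -(k * Vt s) + 2 * σ * B * ‖x s‖ * |lam s| := by
    intro s hs
    have hbb : ‖b (x s) (lam s) s‖ ≤ B * |lam s| := by
      simpa [hb0] using hb_lip (x s) (lam s) 0 s
    have h1 := hVdot' (x s) s
    have h2 : ⟪x s, P (b (x s) (lam s) s)⟫ ≤ ‖P (x s)‖ * ‖b (x s) (lam s) s‖ := by
      rw [← hP_sym]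
      exact real_inner_le_norm _ _
    have h3 : ⟪b (x s) (lam s) s, P (x s)⟫ ≤ ‖P (x s)‖ * ‖b (x s) (lam s) s‖ := by
      rw [real_inner_comm]
      exact real_inner_le_norm _ _
    have h4 : ‖P (x s)‖ * ‖b (x s) (lam s) s‖ ≤ (σ * ‖x s‖) * (B * |lam s|) :=
      mul_le_mul (hPx _) hbb (norm_nonneg _) (by positivity)
    have hexp : Vd s = (⟪x s, P (f (x s) s)⟫ + ⟪f (x s) s, P (x s)⟫) +
        (⟪x s, P (b (x s) (lam s) s)⟫ + ⟪b (x s) (lam s) s, P (x s)⟫) := by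
      simp only [hVd_def, map_add, inner_add_right, inner_add_left]
      ring
    rw [hexp]
    have : Vt s = ⟪x s, P (x s)⟫ := rfl
    nlinarith [h1, h2, h3, h4]
  -- constants
  set a : ℝ := k * Real.sqrt plow / (4 * σ * B) with ha_def
  set β : ℝ := k * plow / (4 * σ * B) with hβ_def
  have hapos : 0 < a := by
    rw [ha_def]; positivity
  have hβpos : 0 < β := by
    rw [hβ_def]; positivity
  have ha2' : a ^ 2 * (4 * σ * B) ^ 2 = k ^ 2 * plow := by
    rw [ha_def, div_pow, div_mul_cancel₀ _ (by positivity : ((4:ℝ) * σ * B) ^ 2 ≠ 0),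
      mul_pow, Real.sq_sqrt hplow.le]
  have hβ' : β * (4 * σ * B) = k * plow := by
    rw [hβ_def, div_mul_cancel₀ _ (by positivity : (4:ℝ) * σ * B ≠ 0)]
  have hβ2 : β ^ 2 = a ^ 2 * plow := by
    have h4 : β ^ 2 * (4 * σ * B) ^ 2 = (a ^ 2 * plow) * (4 * σ * B) ^ 2 := by
      rw [show β ^ 2 * (4 * σ * B) ^ 2 = (β * (4 * σ * B)) ^ 2 by ring, hβ',
        show (a ^ 2 * plow) * (4 * σ * B) ^ 2 = (a ^ 2 * (4 * σ * B) ^ 2) * plow by ring, ha2']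
      ring
    exact mul_right_cancel₀ (by positivity) h4
  have hγ' : γ * (16 * σ * B) < k ^ 2 * plow := by
    rwa [lt_div_iff₀ (by positivity : (0:ℝ) < 16 * σ * B)] at hsg
  have hc : 2 * a ^ 2 * σ * B + 2 * γ < k * β := by
    have h3 : (2 * a ^ 2 * σ * B + 2 * γ) * (16 * σ * B) < (k * β) * (16 * σ * B) := by
      rw [show (2 * a ^ 2 * σ * B + 2 * γ) * (16 * σ * B)
          = 2 * (a ^ 2 * (4 * σ * B) ^ 2) + 2 * (γ * (16 * σ * B)) by ring,
        show (k * β) * (16 * σ * B) = 4 * k * (β * (4 * σ * B)) by ring, ha2', hβ']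
      nlinarith [hγ']
    exact lt_of_mul_lt_mul_right h3 (by positivity : (0:ℝ) ≤ 16 * σ * B)
  -- generic fencing helper
  have key : ∀ (g gd C Cd : ℝ → ℝ),
      (∀ s ∈ Set.Ico t₀ T, HasDerivAt g (gd s) s) →
      (∀ s, HasDerivAt C (Cd s) s) →
      g t₀ ≤ C t₀ →
      (∀ s ∈ Set.Ico t₀ T, g s = C s → gd s < Cd s) →
      ∀ t ∈ Set.Ico t₀ T, g t ≤ C t := by
    intro g gd C Cd hg hC h0 hbd t ht
    have hsub : Set.Icc t₀ t ⊆ Set.Ico t₀ T := fun s hs => ⟨hs.1, lt_of_le_of_lt hs.2 ht.2⟩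
    have := image_le_of_deriv_right_lt_deriv_boundary
      (f := g) (f' := gd) (a := t₀) (b := t) (B := C) (B' := Cd)
      (fun s hs => (hg s (hsub hs)).continuousAt.continuousWithinAt)
      (fun s hs => (hg s (hsub (Set.Ico_subset_Icc_self hs))).hasDerivWithinAt)
      h0 hC (fun s hs he => hbd s (hsub (Set.Ico_subset_Icc_self hs)) he)
    exact this (Set.right_mem_Icc.2 ht.1)
  -- epsilon limit helper
  have eps0 : ∀ (u c : ℝ), 0 < c → (∀ ε : ℝ, 0 < ε → u ≤ ε * c) → u ≤ 0 := by
    intro u c hcpos h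
    by_contra hu
    push_neg at hu
    have h1 := h (u / (2 * c)) (by positivity)
    have h2 : u / (2 * c) * c = u / 2 := by field_simp
    rw [h2] at h1
    linarith
  -- Step 1 : the barrier  a² V ≤ λ|λ|
  have hL0 : 0 ≤ lam t₀ := le_trans (by positivity) hinit
  have hinit2 : a ^ 2 * Vt t₀ ≤ lam t₀ * |lam t₀| := by
    rw [abs_of_nonneg hL0]
    have hR2 : (‖x t₀‖ * k * Real.sqrt (plow * phigh) / (4 * σ * B)) ^ 2 * (4 * σ * B) ^ 2
        = k ^ 2 * plow * phigh * ‖x t₀‖ ^ 2 := by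
      rw [div_pow, div_mul_cancel₀ _ (by positivity : ((4:ℝ) * σ * B) ^ 2 ≠ 0),
        mul_pow, mul_pow, Real.sq_sqrt (by positivity : (0:ℝ) ≤ plow * phigh)]
      ring
    have hL2 : a ^ 2 * phigh * ‖x t₀‖ ^ 2 ≤ lam t₀ ^ 2 := by
      have h6 : (‖x t₀‖ * k * Real.sqrt (plow * phigh) / (4 * σ * B)) ^ 2 ≤ lam t₀ ^ 2 :=
        pow_le_pow_left₀ (by positivity) hinit 2
      have h7 := mul_le_mul_of_nonneg_right h6
        (by positivity : (0:ℝ) ≤ (4 * σ * B) ^ 2)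
      rw [hR2] at h7
      have h8 : a ^ 2 * phigh * ‖x t₀‖ ^ 2 * (4 * σ * B) ^ 2
          = k ^ 2 * plow * phigh * ‖x t₀‖ ^ 2 := by
        rw [show a ^ 2 * phigh * ‖x t₀‖ ^ 2 * (4 * σ * B) ^ 2
            = (a ^ 2 * (4 * σ * B) ^ 2) * (phigh * ‖x t₀‖ ^ 2) by ring, ha2']
        ring
      have h9 : a ^ 2 * phigh * ‖x t₀‖ ^ 2 * (4 * σ * B) ^ 2 ≤ lam t₀ ^ 2 * (4 * σ * B) ^ 2 := by
        rw [h8]; exact h7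
      exact le_of_mul_le_mul_right h9 (by positivity : (0:ℝ) < (4 * σ * B) ^ 2)
    have h5 := hV_high (x t₀)
    calc a ^ 2 * Vt t₀ ≤ a ^ 2 * (phigh * ‖x t₀‖ ^ 2) :=
          mul_le_mul_of_nonneg_left h5 (sq_nonneg a)
      _ = a ^ 2 * phigh * ‖x t₀‖ ^ 2 := by ring
      _ ≤ lam t₀ ^ 2 := hL2
      _ = lam t₀ * lam t₀ := by ring
  have step1 : ∀ t ∈ Set.Ico t₀ T, a ^ 2 * Vt t ≤ lam t * |lam t| := by
    intro t ht
    have hcc : 0 < Real.exp (k * (t - t₀)) := Real.exp_pos _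
    have hall : ∀ ε : ℝ, 0 < ε →
        a ^ 2 * Vt t - lam t * |lam t| ≤ ε * Real.exp (k * (t - t₀)) := by
      intro ε hε
      refine key (fun s => a ^ 2 * Vt s - lam s * |lam s|)
        (fun s => a ^ 2 * Vd s - 2 * |lam s| * (-(γ * ‖x s‖)))
        (fun s => ε * Real.exp (k * (s - t₀)))
        (fun s => ε * (Real.exp (k * (s - t₀)) * (k * 1))) ?_ ?_ ?_ ?_ t ht
      · intro s hs
        exact ((hVt s hs).const_mul (a ^ 2)).sub
          (HasDerivAt.comp s (hasDerivAt_mul_abs (lam s)) (hsol s hs).2)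
      · intro s
        exact ((Real.hasDerivAt_exp (k * (s - t₀))).comp s
          (((hasDerivAt_id s).sub_const t₀).const_mul k)).const_mul ε
      · show a ^ 2 * Vt t₀ - lam t₀ * |lam t₀| ≤ ε * Real.exp (k * (t₀ - t₀))
        have : (0:ℝ) < ε * Real.exp (k * (t₀ - t₀)) := by positivity
        linarith [hinit2]
      · intro s hs heq
        have heq' : a ^ 2 * Vt s - lam s * |lam s| = ε * Real.exp (k * (s - t₀)) := heq
        show a ^ 2 * Vd s - 2 * |lam s| * (-(γ * ‖x s‖))
          < ε * (Real.exp (k * (s - t₀)) * (k * 1))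
        have hE : 0 < ε * Real.exp (k * (s - t₀)) := by positivity
        have hVdle := hVd_le s hs
        have hcore := mul_le_mul_of_nonneg_left hVdle (sq_nonneg a)
        have hβX : β ^ 2 * ‖x s‖ ^ 2 ≤ a ^ 2 * Vt s := by
          rw [hβ2]
          nlinarith [mul_le_mul_of_nonneg_left (hV_low (x s)) (sq_nonneg a)]
        have hd : a ^ 2 * Vd s + 2 * γ * (‖x s‖ * |lam s|)
            ≤ -(k * (a ^ 2 * Vt s)) + (2 * a ^ 2 * σ * B + 2 * γ) * (‖x s‖ * |lam s|) := by
          linarith [hcore]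
        have hfin := barrier_arith k β (2 * a ^ 2 * σ * B + 2 * γ) (lam s) (‖x s‖)
          (a ^ 2 * Vt s) (ε * Real.exp (k * (s - t₀)))
          (a ^ 2 * Vd s + 2 * γ * (‖x s‖ * |lam s|))
          hk hβpos hc (norm_nonneg _) hE hβX heq' hd
        linarith [hfin]
    have := eps0 (a ^ 2 * Vt t - lam t * |lam t|) (Real.exp (k * (t - t₀))) hcc hall
    linarith
  -- consequences of step 1
  have hlam_nonneg : ∀ t ∈ Set.Ico t₀ T, 0 ≤ lam t := by
    intro t ht
    by_contra hneg
    push_neg at hneg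
    have h1 := step1 t ht
    rw [abs_of_neg hneg] at h1
    nlinarith [h1, mul_nonneg (sq_nonneg a) (hVtnn t),
      mul_pos (neg_pos.mpr hneg) (neg_pos.mpr hneg)]
  have hlam_ge : ∀ t ∈ Set.Ico t₀ T, β * ‖x t‖ ≤ lam t := by
    intro t ht
    have h1 := step1 t ht
    have h2 := hlam_nonneg t ht
    rw [abs_of_nonneg h2] at h1
    have hβX : β ^ 2 * ‖x t‖ ^ 2 ≤ a ^ 2 * Vt t := by
      rw [hβ2]
      nlinarith [mul_le_mul_of_nonneg_left (hV_low (x t)) (sq_nonneg a)]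
    refine le_of_pow_le_pow_left₀ two_ne_zero h2 ?_
    calc (β * ‖x t‖) ^ 2 = β ^ 2 * ‖x t‖ ^ 2 := by ring
      _ ≤ a ^ 2 * Vt t := hβX
      _ ≤ lam t * lam t := h1
      _ = lam t ^ 2 := by ring
  -- λ is nonincreasing
  have hmono : ∀ t ∈ Set.Ico t₀ T, lam t ≤ lam t₀ := by
    intro t ht
    have hsub : Set.Icc t₀ t ⊆ Set.Ico t₀ T := fun s hs => ⟨hs.1, lt_of_le_of_lt hs.2 ht.2⟩
    have := image_le_of_deriv_right_le_deriv_boundary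
      (f := lam) (f' := fun s => -(γ * ‖x s‖)) (a := t₀) (b := t)
      (B := fun _ => lam t₀) (B' := fun _ => 0)
      (fun s hs => ((hsol s (hsub hs)).2).continuousAt.continuousWithinAt)
      (fun s hs => ((hsol s (hsub (Set.Ico_subset_Icc_self hs))).2).hasDerivWithinAt)
      le_rfl continuousOn_const (fun s _ => hasDerivWithinAt_const s _ _)
      (fun s _ => neg_nonpos.mpr (by positivity))
    exact this (Set.right_mem_Icc.2 ht.1)
  -- Step 3 : boundedness of V
  set M0 : ℝ := max (Vt t₀) ((2 * σ * B * lam t₀) ^ 2 / (k ^ 2 * plow)) with hM0_def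
  have hM0nn : 0 ≤ M0 := le_trans (hVtnn t₀) (le_max_left _ _)
  have hM : (2 * σ * B * lam t₀) ^ 2 ≤ M0 * (k ^ 2 * plow) := by
    have := le_max_right (Vt t₀) ((2 * σ * B * lam t₀) ^ 2 / (k ^ 2 * plow))
    rw [hM0_def]
    calc (2 * σ * B * lam t₀) ^ 2
        = (2 * σ * B * lam t₀) ^ 2 / (k ^ 2 * plow) * (k ^ 2 * plow) := by
          field_simp
      _ ≤ _ := by
          apply mul_le_mul_of_nonneg_right (le_max_right _ _) (by positivity)
  have hVbound : ∀ t ∈ Set.Ico t₀ T, Vt t ≤ M0 := by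
    intro t ht
    have hcc : 0 < Real.exp (t - t₀) := Real.exp_pos _
    have hall : ∀ ε : ℝ, 0 < ε → Vt t - M0 ≤ ε * Real.exp (t - t₀) := by
      intro ε hε
      have h := key Vt Vd (fun s => M0 + ε * Real.exp (s - t₀))
        (fun s => ε * (Real.exp (s - t₀) * 1)) hVt ?_ ?_ ?_ t ht
      · have h' : Vt t ≤ M0 + ε * Real.exp (t - t₀) := h
        linarith [h']
      · intro s
        exact (((Real.hasDerivAt_exp (s - t₀)).comp s
          ((hasDerivAt_id s).sub_const t₀)).const_mul ε).const_add M0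
      · show Vt t₀ ≤ M0 + ε * Real.exp (t₀ - t₀)
        have h1 : 0 < ε * Real.exp (t₀ - t₀) := by positivity
        have h2 : Vt t₀ ≤ M0 := le_max_left _ _
        linarith
      · intro s hs heq
        have heq' : Vt s = M0 + ε * Real.exp (s - t₀) := heq
        show Vd s < ε * (Real.exp (s - t₀) * 1)
        have hE : 0 < ε * Real.exp (s - t₀) := by positivity
        have hVdle := hVd_le s hs
        have hL0s := hlam_nonneg s hs
        have hLΛ := hmono s hs
        rw [abs_of_nonneg hL0s] at hVdle
        have hv1 := hV_low (x s)
        have hXnn : (0:ℝ) ≤ ‖x s‖ := norm_nonneg _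
        have hvM : M0 ≤ Vt s := by rw [heq']; linarith
        have hvpos : 0 < Vt s := by rw [heq']; linarith
        -- show 2σB‖x‖·λ ≤ k·V, hence Vd ≤ 0 < ε·exp'
        have h2 : 2 * σ * B * ‖x s‖ * lam s ≤ 2 * σ * B * ‖x s‖ * lam t₀ := by
          apply mul_le_mul_of_nonneg_left hLΛ (by positivity)
        have h3 : 2 * σ * B * lam t₀ * ‖x s‖ ≤ k * Vt s := by
          have hsq : (2 * σ * B * lam t₀ * ‖x s‖) ^ 2 * plow ≤ (k * Vt s) ^ 2 * plow := by
            calc (2 * σ * B * lam t₀ * ‖x s‖) ^ 2 * plow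
                = (2 * σ * B * lam t₀) ^ 2 * (plow * ‖x s‖ ^ 2) := by ring
              _ ≤ (M0 * (k ^ 2 * plow)) * Vt s := by
                  apply mul_le_mul hM hv1 (by positivity) (by positivity)
              _ ≤ (Vt s * (k ^ 2 * plow)) * Vt s := by
                  apply mul_le_mul_of_nonneg_right _ (hvpos.le)
                  apply mul_le_mul_of_nonneg_right hvM (by positivity)
              _ = (k * Vt s) ^ 2 * plow := by ring
          have hsq2 : (2 * σ * B * lam t₀ * ‖x s‖) ^ 2 ≤ (k * Vt s) ^ 2 :=
            le_of_mul_le_mul_right hsq hplow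
          have := le_of_pow_le_pow_left₀ two_ne_zero (by positivity : (0:ℝ) ≤ k * Vt s) hsq2
          exact this
        have hVd0 : Vd s ≤ 0 := by nlinarith [hVdle, h2, h3]
        calc Vd s ≤ 0 := hVd0
          _ < ε * (Real.exp (s - t₀) * 1) := by rw [mul_one]; exact hE
    have := eps0 (Vt t - M0) (Real.exp (t - t₀)) hcc hall
    linarith
  -- assemble
  constructor
  · refine ⟨max (Real.sqrt (M0 / plow)) (lam t₀), ?_⟩
    intro t ht
    constructor
    · refine le_trans ?_ (le_max_left _ _)
      have h1 := hVbound t ht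
      have h2 := hV_low (x t)
      rw [show Real.sqrt (M0 / plow) = Real.sqrt (M0 / plow) from rfl]
      rw [← Real.sqrt_sq (norm_nonneg (x t))]
      apply Real.sqrt_le_sqrt
      rw [le_div_iff₀ hplow]
      nlinarith
    · rw [abs_of_nonneg (hlam_nonneg t ht)]
      exact le_trans (hmono t ht) (le_max_right _ _)
  · intro t ht
    have := hlam_ge t ht
    calc ‖x t‖ * k * plow / (4 * σ * B) = β * ‖x t‖ := by rw [hβ_def]; ring
      _ ≤ lam t := this
end
end

section
/- Consider the planar system ẋ₁ = −k x₁ + x₁² λ, λ̇ = −γ x₁² with constants k, γ > 0. For every p ≥ γ/(2k), setting a = ((1/p)(k − γ/(2p)))^{2/3}, the cone Ω_a(p) = {(x₁,λ) ∈ ℝ² : p·x₁² ≤ λ ≤ p·a and x₁² ≤ a} is forward invariant: every solution (x₁(·),λ(·)) with (x₁(t₀),λ(t₀)) ∈ Ω_a(p) satisfies (x₁(t),λ(t)) ∈ Ω_a(p) for all t ≥ t₀ in its interval of existence; consequently the union of the sets Ω_a(p) over all p ≥ γ/(2k) is forward invariant. -/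
open Set Filter Topology

noncomputable section

/-- The cone `Ω_a(p) = {(x₁,λ) : p x₁² ≤ λ ≤ p a, x₁² ≤ a}` with
`a = ((1/p)(k − γ/(2p)))^(2/3)`. -/
def OmegaCone (k γ p : ℝ) : Set (ℝ × ℝ) :=
  {q : ℝ × ℝ |
    p * q.1 ^ 2 ≤ q.2 ∧
    q.2 ≤ p * ((1 / p) * (k - γ / (2 * p))) ^ ((2 : ℝ) / 3) ∧
    q.1 ^ 2 ≤ ((1 / p) * (k - γ / (2 * p))) ^ ((2 : ℝ) / 3)}

lemma max_sub_max_le (x y : ℝ) : max x 0 - max y 0 ≤ max (x - y) 0 := by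
  have h1 : x ≤ max (x - y) 0 + max y 0 := by
    have a1 := le_max_left (x - y) (0:ℝ)
    have a2 := le_max_left y (0:ℝ)
    linarith
  have h2 : (0:ℝ) ≤ max (x - y) 0 + max y 0 := by positivity
  have := max_le h1 h2
  linarith

lemma pair_gronwall {w₁ w₂ d₁ d₂ : ℝ → ℝ} {a b K : ℝ} (hK : 0 ≤ K)
    (h₁ : ∀ x ∈ Set.Icc a b, HasDerivAt w₁ (d₁ x) x)
    (h₂ : ∀ x ∈ Set.Icc a b, HasDerivAt w₂ (d₂ x) x)
    (hd₁ : ∀ x ∈ Set.Ico a b, d₁ x ≤ K * (max (w₁ x) 0 + max (w₂ x) 0))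
    (hd₂ : ∀ x ∈ Set.Ico a b, d₂ x ≤ K * (max (w₁ x) 0 + max (w₂ x) 0))
    (ha₁ : w₁ a ≤ 0) (ha₂ : w₂ a ≤ 0) :
    ∀ x ∈ Set.Icc a b, w₁ x ≤ 0 ∧ w₂ x ≤ 0 := by
  set f : ℝ → ℝ := fun x => max (w₁ x) 0 + max (w₂ x) 0 with hf
  have hfnonneg : ∀ x, 0 ≤ f x := by
    intro x
    have := le_max_right (w₁ x) (0:ℝ)
    have := le_max_right (w₂ x) (0:ℝ)
    simp only [hf]
    linarith
  have hc₁ : ContinuousOn w₁ (Set.Icc a b) :=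
    fun x hx => ((h₁ x hx).continuousAt.continuousWithinAt)
  have hc₂ : ContinuousOn w₂ (Set.Icc a b) :=
    fun x hx => ((h₂ x hx).continuousAt.continuousWithinAt)
  have hfc : ContinuousOn f (Set.Icc a b) :=
    (hc₁.sup continuousOn_const).add (hc₂.sup continuousOn_const)
  have key : ∀ x ∈ Set.Icc a b, f x ≤ gronwallBound 0 (2*K) 0 (x - a) := by
    apply le_gronwallBound_of_liminf_deriv_right_le
      (f' := fun x => max (d₁ x) 0 + max (d₂ x) 0) hfc
    · intro x hx r hr
      have hx' : x ∈ Set.Icc a b := Set.Ico_subset_Icc_self hx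
      have T1 : Tendsto (slope w₁ x) (𝓝[>] x) (𝓝 (d₁ x)) :=
        (hasDerivAt_iff_tendsto_slope.mp (h₁ x hx')).mono_left
          (nhdsWithin_mono x (fun z hz => hz.ne'))
      have T2 : Tendsto (slope w₂ x) (𝓝[>] x) (𝓝 (d₂ x)) :=
        (hasDerivAt_iff_tendsto_slope.mp (h₂ x hx')).mono_left
          (nhdsWithin_mono x (fun z hz => hz.ne'))
      have Tg : Tendsto (fun z => max (slope w₁ x z) 0 + max (slope w₂ x z) 0)
          (𝓝[>] x) (𝓝 (max (d₁ x) 0 + max (d₂ x) 0)) :=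
        (T1.max tendsto_const_nhds).add (T2.max tendsto_const_nhds)
      have hev : ∀ᶠ z in 𝓝[>] x,
          max (slope w₁ x z) 0 + max (slope w₂ x z) 0 < r :=
        Tg.eventually_lt_const hr
      apply Filter.Eventually.frequently
      filter_upwards [hev, self_mem_nhdsWithin] with z hz hz'
      have hzx : 0 < z - x := sub_pos.2 hz'
      have hstep : f z - f x ≤ max (w₁ z - w₁ x) 0 + max (w₂ z - w₂ x) 0 := by
        have := max_sub_max_le (w₁ z) (w₁ x)
        have := max_sub_max_le (w₂ z) (w₂ x)
        simp only [hf]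
        linarith
      have hmul : (z - x)⁻¹ * (f z - f x)
          ≤ max (slope w₁ x z) 0 + max (slope w₂ x z) 0 := by
        have h3 : (z - x)⁻¹ * (f z - f x)
            ≤ (z - x)⁻¹ * (max (w₁ z - w₁ x) 0 + max (w₂ z - w₂ x) 0) :=
          mul_le_mul_of_nonneg_left hstep (inv_nonneg.2 hzx.le)
        have h4 : (z - x)⁻¹ * (max (w₁ z - w₁ x) 0 + max (w₂ z - w₂ x) 0)
            = max (slope w₁ x z) 0 + max (slope w₂ x z) 0 := by
          rw [mul_add, mul_max_of_nonneg _ _ (inv_nonneg.2 hzx.le),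
            mul_max_of_nonneg _ _ (inv_nonneg.2 hzx.le), mul_zero,
            slope_def_field, slope_def_field, div_eq_inv_mul, div_eq_inv_mul]
        linarith
      linarith
    · simp only [hf, max_eq_right ha₁, max_eq_right ha₂, add_zero]
      exact le_rfl
    · intro x hx
      have e₁ : max (d₁ x) 0 ≤ K * f x :=
        max_le (hd₁ x hx) (mul_nonneg hK (hfnonneg x))
      have e₂ : max (d₂ x) 0 ≤ K * f x :=
        max_le (hd₂ x hx) (mul_nonneg hK (hfnonneg x))
      linarith
  intro x hx
  have hkx := key x hx
  rw [gronwallBound_ε0, zero_mul] at hkx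
  have a1 := le_max_left (w₁ x) (0:ℝ)
  have a2 := le_max_right (w₁ x) (0:ℝ)
  have a3 := le_max_left (w₂ x) (0:ℝ)
  have a4 := le_max_right (w₂ x) (0:ℝ)
  simp only [hf] at hkx
  constructor <;> linarith

set_option maxHeartbeats 1000000

/-- For the planar system `ẋ₁ = −k x₁ + x₁² λ`, `λ̇ = −γ x₁²` (`k, γ > 0`): for every
`p ≥ γ/(2k)` the cone `Ω_a(p)` is forward invariant, and consequently the union of the
cones `Ω_a(p)` over all `p ≥ γ/(2k)` is forward invariant. -/
theorem cone_forward_invariance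
    (k γ : ℝ) (hk : 0 < k) (hγ : 0 < γ) :
    (∀ p : ℝ, γ / (2 * k) ≤ p →
      ∀ (t₀ T : ℝ) (x₁ lam : ℝ → ℝ),
        (∀ t ∈ Set.Ico t₀ T,
          HasDerivAt x₁ (-(k * x₁ t) + (x₁ t) ^ 2 * lam t) t ∧
          HasDerivAt lam (-(γ * (x₁ t) ^ 2)) t) →
        (x₁ t₀, lam t₀) ∈ OmegaCone k γ p →
        ∀ t ∈ Set.Ico t₀ T, (x₁ t, lam t) ∈ OmegaCone k γ p) ∧
    (∀ (t₀ T : ℝ) (x₁ lam : ℝ → ℝ),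
      (∀ t ∈ Set.Ico t₀ T,
        HasDerivAt x₁ (-(k * x₁ t) + (x₁ t) ^ 2 * lam t) t ∧
        HasDerivAt lam (-(γ * (x₁ t) ^ 2)) t) →
      (x₁ t₀, lam t₀) ∈ ⋃ p ∈ Set.Ici (γ / (2 * k)), OmegaCone k γ p →
      ∀ t ∈ Set.Ico t₀ T,
        (x₁ t, lam t) ∈ ⋃ p ∈ Set.Ici (γ / (2 * k)), OmegaCone k γ p) := by
  have main : ∀ p : ℝ, γ / (2 * k) ≤ p →
      ∀ (t₀ T : ℝ) (x₁ lam : ℝ → ℝ),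
        (∀ t ∈ Set.Ico t₀ T,
          HasDerivAt x₁ (-(k * x₁ t) + (x₁ t) ^ 2 * lam t) t ∧
          HasDerivAt lam (-(γ * (x₁ t) ^ 2)) t) →
        (x₁ t₀, lam t₀) ∈ OmegaCone k γ p →
        ∀ t ∈ Set.Ico t₀ T, (x₁ t, lam t) ∈ OmegaCone k γ p := by
    intro p hpge t₀ T x₁ lam hsol h0 t ht
    have hp : 0 < p := lt_of_lt_of_le (div_pos hγ (by linarith)) hpge
    simp only [OmegaCone, Set.mem_setOf_eq] at h0 ⊢
    obtain ⟨b, hbdef⟩ : ∃ b : ℝ, b = 1 / p * (k - γ / (2 * p)) := ⟨_, rfl⟩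
    rw [← hbdef] at h0 ⊢
    obtain ⟨a, hadef⟩ : ∃ a : ℝ, a = b ^ ((2:ℝ)/3) := ⟨_, rfl⟩
    rw [← hadef] at h0 ⊢
    have hkb : γ / (2*p) ≤ k := by
      rw [div_le_iff₀ (by linarith : (0:ℝ) < 2*p)]
      rw [div_le_iff₀ (by linarith : (0:ℝ) < 2*k)] at hpge
      linarith
    have hb : 0 ≤ b := by
      rw [hbdef]; apply mul_nonneg (by positivity); linarith
    have ha : 0 ≤ a := hadef ▸ Real.rpow_nonneg hb _
    have hsubIcc : Set.Icc t₀ t ⊆ Set.Ico t₀ T :=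
      fun u hu => ⟨hu.1, lt_of_le_of_lt hu.2 ht.2⟩
    have ht₀t : t₀ ≤ t := ht.1
    -- bound on the solution on [t₀,t]
    have hcont : ContinuousOn (fun s => |x₁ s| + |lam s|) (Set.Icc t₀ t) := by
      apply ContinuousOn.add
      · exact fun s hs => (((hsol s (hsubIcc hs)).1.continuousAt).abs).continuousWithinAt
      · exact fun s hs => (((hsol s (hsubIcc hs)).2.continuousAt).abs).continuousWithinAt
    obtain ⟨C, hC⟩ := isCompact_Icc.exists_bound_of_continuousOn hcont
    obtain ⟨M, hMdef⟩ : ∃ M : ℝ, M = max C 1 := ⟨_, rfl⟩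
    have hM1 : (1:ℝ) ≤ M := hMdef ▸ le_max_right _ _
    have hM0 : (0:ℝ) < M := by linarith
    have hCM : C ≤ M := hMdef ▸ le_max_left _ _
    have hxM : ∀ s ∈ Set.Icc t₀ t, |x₁ s| ≤ M := by
      intro s hs
      have h1 := hC s hs
      rw [Real.norm_eq_abs, abs_of_nonneg (by positivity)] at h1
      have h2 := abs_nonneg (lam s)
      linarith
    have hlM : ∀ s ∈ Set.Icc t₀ t, |lam s| ≤ M := by
      intro s hs
      have h1 := hC s hs
      rw [Real.norm_eq_abs, abs_of_nonneg (by positivity)] at h1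
      have h2 := abs_nonneg (x₁ s)
      linarith
    -- lam is nonincreasing on [t₀,t]
    have hlam_mono : ∀ s ∈ Set.Icc t₀ t, lam s ≤ lam t₀ := by
      intro s hs
      have hsub2 : Set.Icc t₀ s ⊆ Set.Ico t₀ T :=
        fun u hu => ⟨hu.1, lt_of_le_of_lt (le_trans hu.2 hs.2) ht.2⟩
      have hres := pair_gronwall (w₁ := fun u => lam u - lam t₀)
        (w₂ := fun u => lam u - lam t₀)
        (d₁ := fun u => -(γ * (x₁ u)^2)) (d₂ := fun u => -(γ * (x₁ u)^2))
        (a := t₀) (b := s) (K := 0) le_rfl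
        (fun u hu => ((hsol u (hsub2 hu)).2).sub_const _)
        (fun u hu => ((hsol u (hsub2 hu)).2).sub_const _)
        (fun u _ => by
          show -(γ * (x₁ u)^2) ≤ 0 * (max (lam u - lam t₀) 0 + max (lam u - lam t₀) 0)
          rw [zero_mul]
          have := mul_nonneg hγ.le (sq_nonneg (x₁ u)); linarith)
        (fun u _ => by
          show -(γ * (x₁ u)^2) ≤ 0 * (max (lam u - lam t₀) 0 + max (lam u - lam t₀) 0)
          rw [zero_mul]
          have := mul_nonneg hγ.le (sq_nonneg (x₁ u)); linarith)
        (by simp) (by simp)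
      have h1 := (hres s ⟨hs.1, le_rfl⟩).1
      linarith
    rcases eq_or_lt_of_le hb with hb0 | hb0
    · -- degenerate case b = 0, the cone is the origin
      have ha0 : a = 0 := by rw [hadef, ← hb0, Real.zero_rpow (by norm_num)]
      have hx₀ : x₁ t₀ = 0 := by
        have h1 := h0.2.2; rw [ha0] at h1
        have h2 : x₁ t₀ ^ 2 = 0 := le_antisymm h1 (sq_nonneg _)
        exact pow_eq_zero_iff two_ne_zero |>.mp h2
      have hl₀ : lam t₀ = 0 := by
        have h1 := h0.1; have h2 := h0.2.1
        rw [ha0, mul_zero] at h2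
        linarith [mul_nonneg hp.le (sq_nonneg (x₁ t₀))]
      have hderiv : ∀ u ∈ Set.Icc t₀ t, HasDerivAt (fun v => (x₁ v)^2)
          (2 * x₁ u * (-(k * x₁ u) + (x₁ u)^2 * lam u)) u := by
        intro u hu
        have h1 := ((hsol u (hsubIcc hu)).1).pow 2
        refine h1.congr_deriv ?_
        push_cast
        ring
      have hbnd : ∀ u ∈ Set.Ico t₀ t, 2 * x₁ u * (-(k * x₁ u) + (x₁ u)^2 * lam u)
          ≤ (k + M^2) * (max ((x₁ u)^2) 0 + max ((x₁ u)^2) 0) := by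
        intro u hu
        have hu' : u ∈ Set.Icc t₀ t := ⟨hu.1, hu.2.le⟩
        have h1 := hxM u hu'
        have h2 := hlM u hu'
        have hmax : max ((x₁ u)^2) 0 = (x₁ u)^2 := max_eq_left (sq_nonneg _)
        rw [hmax]
        have hxl : x₁ u * lam u ≤ M^2 := by
          calc x₁ u * lam u ≤ |x₁ u * lam u| := le_abs_self _
          _ = |x₁ u| * |lam u| := abs_mul _ _
          _ ≤ M * M := mul_le_mul h1 h2 (abs_nonneg _) hM0.le
          _ = M^2 := (sq M).symm
        linarith [mul_nonneg hk.le (sq_nonneg (x₁ u)),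
          mul_le_mul_of_nonneg_left hxl (sq_nonneg (x₁ u))]
      have hzero : ∀ s ∈ Set.Icc t₀ t, x₁ s = 0 := by
        have hres := pair_gronwall (w₁ := fun v => (x₁ v)^2) (w₂ := fun v => (x₁ v)^2)
          (d₁ := fun u => 2 * x₁ u * (-(k * x₁ u) + (x₁ u)^2 * lam u))
          (d₂ := fun u => 2 * x₁ u * (-(k * x₁ u) + (x₁ u)^2 * lam u))
          (a := t₀) (b := t) (K := k + M^2) (by positivity)
          hderiv hderiv hbnd hbnd (by simp [hx₀]) (by simp [hx₀])
        intro s hs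
        have h1 := (hres s hs).1
        have h2 : x₁ s ^ 2 = 0 := le_antisymm h1 (sq_nonneg _)
        exact pow_eq_zero_iff two_ne_zero |>.mp h2
      have hlam_ge : lam t₀ ≤ lam t := by
        have hres := pair_gronwall (w₁ := fun u => lam t₀ - lam u)
          (w₂ := fun u => lam t₀ - lam u)
          (d₁ := fun u => γ * (x₁ u)^2) (d₂ := fun u => γ * (x₁ u)^2)
          (a := t₀) (b := t) (K := 0) le_rfl
          (fun u hu => by simpa using ((hsol u (hsubIcc hu)).2).const_sub (lam t₀))
          (fun u hu => by simpa using ((hsol u (hsubIcc hu)).2).const_sub (lam t₀))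
          (fun u hu => by
            show γ * (x₁ u)^2 ≤ 0 * (max (lam t₀ - lam u) 0 + max (lam t₀ - lam u) 0)
            rw [hzero u ⟨hu.1, hu.2.le⟩]; simp)
          (fun u hu => by
            show γ * (x₁ u)^2 ≤ 0 * (max (lam t₀ - lam u) 0 + max (lam t₀ - lam u) 0)
            rw [hzero u ⟨hu.1, hu.2.le⟩]; simp)
          (by simp) (by simp)
        have h1 := (hres t ⟨ht₀t, le_rfl⟩).1
        linarith
      have hlt : lam t = 0 := by
        have := hlam_mono t ⟨ht₀t, le_rfl⟩
        linarith
      have hxt := hzero t ⟨ht₀t, le_rfl⟩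
      refine ⟨?_, ?_, ?_⟩ <;> simp [hxt, hlt, ha0]
    · -- main case b > 0
      have ha' : 0 < a := hadef ▸ Real.rpow_pos_of_pos hb0 _
      obtain ⟨sa, hsadef⟩ : ∃ sa : ℝ, sa = Real.sqrt a := ⟨_, rfl⟩
      have hsa : 0 < sa := hsadef ▸ Real.sqrt_pos.mpr ha'
      have hsa2 : sa^2 = a := hsadef ▸ Real.sq_sqrt ha
      have hcube : a^3 = b^2 := by
        rw [hadef, ← Real.rpow_natCast (b ^ ((2:ℝ)/3)) 3, ← Real.rpow_mul hb,
          ← Real.rpow_natCast b 2]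
        norm_num
      have hsab : sa * a = b := by
        have h2 : (sa*a)^2 = b^2 := by
          rw [mul_pow, hsa2]
          linear_combination hcube
        exact (pow_left_inj₀ (mul_nonneg hsa.le ha) hb two_ne_zero).mp h2
      have hkey : p * b = k - γ/(2*p) := by
        rw [hbdef]; field_simp
      have hkk : p * (sa*a) = k - γ/(2*p) := by rw [hsab]; exact hkey
      have hhalf : p * (γ / (2*p)) = γ / 2 := by
        rw [mul_div_assoc', show (2:ℝ)*p = p*2 by ring, mul_div_mul_left _ _ hp.ne']
      have hkk2 : p * (p * (sa*a)) = p*k - γ/2 := by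
        rw [hkk, mul_sub, hhalf]
      obtain ⟨K, hKdef⟩ : ∃ K : ℝ, K = (p*sa*M^2 + 2*M^3)*(p+1) := ⟨_, rfl⟩
      have hK : 0 ≤ K := by
        rw [hKdef]
        apply mul_nonneg
        · apply add_nonneg
          · exact mul_nonneg (mul_nonneg hp.le hsa.le) (sq_nonneg M)
          · linarith [pow_nonneg hM0.le 3]
        · linarith
      have hder₁ : ∀ u ∈ Set.Icc t₀ t, HasDerivAt (fun v => p*(x₁ v)^2 - lam v)
          (p * (2 * x₁ u * (-(k * x₁ u) + (x₁ u)^2 * lam u)) + γ * (x₁ u)^2) u := by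
        intro u hu
        have h1 := (((hsol u (hsubIcc hu)).1).pow 2).const_mul p
        have h2 := (hsol u (hsubIcc hu)).2
        refine (h1.sub h2).congr_deriv ?_
        push_cast
        ring
      have hder₂ : ∀ u ∈ Set.Icc t₀ t, HasDerivAt (fun v => (x₁ v)^2 - a)
          (2 * x₁ u * (-(k * x₁ u) + (x₁ u)^2 * lam u)) u := by
        intro u hu
        have h1 := (((hsol u (hsubIcc hu)).1).pow 2).sub_const a
        refine h1.congr_deriv ?_
        push_cast
        ring
      have hbnd : ∀ u ∈ Set.Ico t₀ t,
          (p * (2 * x₁ u * (-(k * x₁ u) + (x₁ u)^2 * lam u)) + γ * (x₁ u)^2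
            ≤ K * (max (p * (x₁ u)^2 - lam u) 0 + max ((x₁ u)^2 - a) 0)) ∧
          (2 * x₁ u * (-(k * x₁ u) + (x₁ u)^2 * lam u)
            ≤ K * (max (p * (x₁ u)^2 - lam u) 0 + max ((x₁ u)^2 - a) 0)) := by
        intro u hu
        have hu' : u ∈ Set.Icc t₀ t := ⟨hu.1, hu.2.le⟩
        obtain ⟨X, hX⟩ : ∃ X : ℝ, X = x₁ u := ⟨_, rfl⟩
        obtain ⟨L, hL⟩ : ∃ L : ℝ, L = lam u := ⟨_, rfl⟩
        rw [← hX, ← hL]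
        obtain ⟨W₁, hW₁def⟩ : ∃ W : ℝ, W = max (p * X^2 - L) 0 := ⟨_, rfl⟩
        obtain ⟨W₂, hW₂def⟩ : ∃ W : ℝ, W = max (X^2 - a) 0 := ⟨_, rfl⟩
        rw [← hW₁def, ← hW₂def]
        have hW₁0 : 0 ≤ W₁ := hW₁def ▸ le_max_right _ _
        have hW₂0 : 0 ≤ W₂ := hW₂def ▸ le_max_right _ _
        have hW₁ : p * X^2 - L ≤ W₁ := hW₁def ▸ le_max_left _ _
        have hW₂ : X^2 - a ≤ W₂ := hW₂def ▸ le_max_left _ _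
        have hXM : |X| ≤ M := hX ▸ hxM u hu'
        have hLM : |L| ≤ M := hL ▸ hlM u hu'
        have hLpa : L ≤ p * a := hL ▸ le_trans (hlam_mono u hu') h0.2.1
        have hX2M : X^2 ≤ M^2 := by
          rw [← sq_abs X]
          exact pow_le_pow_left₀ (abs_nonneg X) hXM 2
        have h2sa : (0:ℝ) < 2*sa := by linarith
        have step1 : 2*sa*|X| ≤ 2*a + W₂ := by
          have hh := sq_nonneg (sa - |X|)
          have habs := sq_abs X
          linarith [hh, habs, hW₂, hsa2]
        have step2 : X*L ≤ |X| * (p*a) + M*W₁ := by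
          rcases le_or_gt 0 L with hL0 | hL0
          · have q1 : 0 ≤ (|X| - X) * L := mul_nonneg (sub_nonneg.2 (le_abs_self X)) hL0
            have q2 : 0 ≤ |X| * (p*a - L) := mul_nonneg (abs_nonneg X) (sub_nonneg.2 hLpa)
            have q3 : 0 ≤ M * W₁ := mul_nonneg hM0.le hW₁0
            linarith [q1, q2, q3]
          · have h1 : X*L ≤ |X| * (-L) := by
              calc X*L ≤ |X*L| := le_abs_self _
              _ = |X| * |L| := abs_mul _ _
              _ = |X| * (-L) := by rw [abs_of_neg hL0]
            have hb2 : -L ≤ W₁ := by linarith [mul_nonneg hp.le (sq_nonneg X), hW₁]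
            have h3 : |X| * (-L) ≤ M*(-L) :=
              mul_le_mul_of_nonneg_right hXM (by linarith)
            have h4 : M*(-L) ≤ M*W₁ := mul_le_mul_of_nonneg_left hb2 hM0.le
            have h5 : 0 ≤ |X| * (p*a) :=
              mul_nonneg (abs_nonneg X) (mul_nonneg hp.le ha)
            linarith
        have he : (2*sa)*(p*(sa*a) + (p*sa/2)*W₂) = 2*p*a^2 + p*a*W₂ := by
          linear_combination (2*p*a + p*W₂) * hsa2
        have step1c : |X| * (p*a) ≤ p*(sa*a) + (p*sa/2)*W₂ := by
          refine le_of_mul_le_mul_left ?_ h2sa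
          calc (2*sa) * (|X| * (p*a)) = (2*sa*|X|)*(p*a) := by ring
          _ ≤ (2*a + W₂)*(p*a) := mul_le_mul_of_nonneg_right step1 (mul_nonneg hp.le ha)
          _ = 2*p*a^2 + p*a*W₂ := by ring
          _ = (2*sa)*(p*(sa*a) + (p*sa/2)*W₂) := he.symm
        have step3 : X*L ≤ p*(sa*a) + (p*sa/2)*W₂ + M*W₁ := by
          linarith [step2, step1c]
        have step4 : X*L ≤ (k - γ/(2*p)) + (p*sa/2)*W₂ + M*W₁ := by
          rw [← hkk]; exact step3
        have step4p : p*(X*L) ≤ (p*k - γ/2) + (p*(p*sa/2))*W₂ + p*(M*W₁) := by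
          linarith [mul_le_mul_of_nonneg_left step3 hp.le, hkk2]
        have g1 : 0 ≤ X^2*(γ/(2*p)) :=
          mul_nonneg (sq_nonneg X) (div_nonneg hγ.le (by linarith))
        have hA' : X^2*(p*sa*W₂) ≤ M^2*(p*sa*W₂) :=
          mul_le_mul_of_nonneg_right hX2M
            (mul_nonneg (mul_nonneg hp.le hsa.le) hW₂0)
        have hB' : X^2*(2*M*W₁) ≤ M^2*(2*M*W₁) :=
          mul_le_mul_of_nonneg_right hX2M
            (by linarith [mul_nonneg hM0.le hW₁0])
        have hA'' : X^2*(p^2*sa*W₂) ≤ M^2*(p^2*sa*W₂) :=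
          mul_le_mul_of_nonneg_right hX2M
            (mul_nonneg (mul_nonneg (sq_nonneg p) hsa.le) hW₂0)
        have hB'' : X^2*(2*p*M*W₁) ≤ M^2*(2*p*M*W₁) :=
          mul_le_mul_of_nonneg_right hX2M
            (by linarith [mul_nonneg (mul_nonneg hp.le hM0.le) hW₁0])
        have m1 : 0 ≤ p*sa*M^2*W₁ :=
          mul_nonneg (mul_nonneg (mul_nonneg hp.le hsa.le) (sq_nonneg M)) hW₁0
        have m2 : 0 ≤ p*sa*M^2*W₂ :=
          mul_nonneg (mul_nonneg (mul_nonneg hp.le hsa.le) (sq_nonneg M)) hW₂0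
        have m3 : 0 ≤ M^3*W₁ := mul_nonneg (pow_nonneg hM0.le 3) hW₁0
        have m4 : 0 ≤ M^3*W₂ := mul_nonneg (pow_nonneg hM0.le 3) hW₂0
        have pm1 : 0 ≤ p*(p*sa*M^2*W₁) := mul_nonneg hp.le m1
        have pm2 : 0 ≤ p*(p*sa*M^2*W₂) := mul_nonneg hp.le m2
        have pm3 : 0 ≤ p*(M^3*W₁) := mul_nonneg hp.le m3
        have pm4 : 0 ≤ p*(M^3*W₂) := mul_nonneg hp.le m4
        constructor
        · -- d₁ bound
          rw [hKdef]
          have c5 : (2*X^2)*(p*(X*L))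
              ≤ (2*X^2)*((p*k - γ/2) + (p*(p*sa/2))*W₂ + p*(M*W₁)) :=
            mul_le_mul_of_nonneg_left step4p (by positivity)
          linarith [c5, hA'', hB'', m1, m2, m3, m4, pm1, pm2, pm3, pm4]
        · -- d₂ bound
          rw [hKdef]
          have c4 : (2*X^2)*(X*L)
              ≤ (2*X^2)*((k - γ/(2*p)) + (p*sa/2)*W₂ + M*W₁) :=
            mul_le_mul_of_nonneg_left step4 (by positivity)
          linarith [c4, hA', hB', m1, m2, m3, m4, g1, pm1, pm2, pm3, pm4]
      have hres := pair_gronwall (w₁ := fun v => p*(x₁ v)^2 - lam v)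
        (w₂ := fun v => (x₁ v)^2 - a)
        (d₁ := fun u => p * (2 * x₁ u * (-(k * x₁ u) + (x₁ u)^2 * lam u)) + γ * (x₁ u)^2)
        (d₂ := fun u => 2 * x₁ u * (-(k * x₁ u) + (x₁ u)^2 * lam u))
        (a := t₀) (b := t) hK hder₁ hder₂
        (fun u hu => (hbnd u hu).1) (fun u hu => (hbnd u hu).2)
        (by have := h0.1; linarith) (by have := h0.2.2; linarith)
      obtain ⟨e1, e2⟩ := hres t ⟨ht₀t, le_rfl⟩
      exact ⟨by linarith, le_trans (hlam_mono t ⟨ht₀t, le_rfl⟩) h0.2.1, by linarith⟩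
  refine ⟨main, ?_⟩
  intro t₀ T x₁ lam hsol h0 t ht
  simp only [Set.mem_iUnion, Set.mem_Ici] at h0 ⊢
  obtain ⟨p, hp, hmem⟩ := h0
  exact ⟨p, hp, main p hp t₀ T x₁ lam hsol hmem t ht⟩
end
end

section
/- Consider the cascade system ẋ₁ = −τ₁ x₁ + c₁ x₂, ẋ₂ = −c₂|x₁| with constants τ₁, c₁, c₂ > 0. If 0 < c₂ < τ₁²/(4c₁), then every solution (x₁(·),x₂(·)) with x₂(t₀) ≥ (τ₁/(2c₁))·|x₁(t₀)| is bounded in forward time and satisfies x₂(t) ≥ (τ₁/(2c₁))·|x₁(t)| for all t ≥ t₀; in particular the system possesses nontrivial bounded forward solutions. -/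
set_option maxHeartbeats 1000000


open Set Filter Topology

noncomputable section

/-- If `g` is positive on `(t₀,t₁)`, vanishes at `t₁ > t₀`, and has derivative `d` at `t₁`,
then `d ≤ 0`. -/
lemma deriv_nonpos_of_left_pos' {g : ℝ → ℝ} {t₀ t₁ d : ℝ} (h : t₀ < t₁)
    (hg : HasDerivAt g d t₁) (hpos : ∀ t ∈ Set.Ioo t₀ t₁, 0 < g t)
    (h0 : g t₁ = 0) : d ≤ 0 := by
  by_contra hd
  push_neg at hd
  have hslope : Tendsto (slope g t₁) (𝓝[<] t₁) (𝓝 d) :=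
    (hasDerivAt_iff_tendsto_slope.1 hg).mono_left
      (nhdsWithin_mono _ (fun x hx => ne_of_lt hx))
  have h1 : ∀ᶠ t in 𝓝[<] t₁, 0 < slope g t₁ t := hslope.eventually (eventually_gt_nhds hd)
  have h2 : ∀ᶠ t in 𝓝[<] t₁, t ∈ Set.Ioo t₀ t₁ :=
    eventually_of_mem (Ioo_mem_nhdsLT_of_mem ⟨h, le_refl _⟩) (fun t ht => ht)
  obtain ⟨t, hts, hti⟩ := (h1.and h2).exists
  have hlt : t < t₁ := hti.2
  have hs : slope g t₁ t = g t / (t - t₁) := by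
    simp [slope_def_field, h0]
  rw [hs] at hts
  have hgt : g t < 0 := by
    by_contra hge
    push_neg at hge
    have : g t / (t - t₁) ≤ 0 := div_nonpos_of_nonneg_of_nonpos hge (by linarith)
    linarith
  exact absurd (hpos t hti) (by linarith)

/-- Forward invariance of the cone `x₂ ≥ (τ₁/(2c₁))|x₁|`. -/
lemma cone_invariant' (τ₁ c₁ c₂ : ℝ) (hτ₁ : 0 < τ₁) (hc₁ : 0 < c₁) (hc₂ : 0 < c₂)
    (hsg : c₂ < τ₁ ^ 2 / (4 * c₁)) (t₀ T : ℝ) (x₁ x₂ : ℝ → ℝ)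
    (hode : ∀ t ∈ Set.Ico t₀ T,
        HasDerivAt x₁ (-(τ₁ * x₁ t) + c₁ * x₂ t) t ∧
        HasDerivAt x₂ (-(c₂ * |x₁ t|)) t)
    (hinit : (τ₁ / (2 * c₁)) * |x₁ t₀| ≤ x₂ t₀) :
    ∀ t ∈ Set.Ico t₀ T, (τ₁ / (2 * c₁)) * |x₁ t| ≤ x₂ t := by
  set k := τ₁ / (2 * c₁) with hk
  have hkpos : 0 < k := div_pos hτ₁ (by linarith)
  have hkc : k * (2 * c₁) = τ₁ := by
    rw [hk]; field_simp
  have hc4 : 4 * c₁ * c₂ < τ₁ ^ 2 := by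
    rw [lt_div_iff₀ (by positivity)] at hsg; linarith
  -- key claim: ε-inflated cones are invariant
  have key : ∀ ε, 0 < ε → ∀ t ∈ Set.Ico t₀ T,
      0 < x₂ t - k * x₁ t + ε * Real.exp (τ₁ * (t - t₀)) ∧
      0 < x₂ t + k * x₁ t + ε * Real.exp (τ₁ * (t - t₀)) := by
    intro ε hε
    set E : ℝ → ℝ := fun t => Real.exp (τ₁ * (t - t₀)) with hE
    set gp : ℝ → ℝ := fun t => x₂ t - k * x₁ t + ε * E t with hgp
    set gm : ℝ → ℝ := fun t => x₂ t + k * x₁ t + ε * E t with hgm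
    have hEpos : ∀ t, 0 < E t := fun t => Real.exp_pos _
    have hE0 : E t₀ = 1 := by simp [hE]
    have hEderiv : ∀ t, HasDerivAt E (τ₁ * E t) t := by
      intro t
      have h1 : HasDerivAt (fun t : ℝ => τ₁ * (t - t₀)) τ₁ t := by
        simpa using ((hasDerivAt_id t).sub_const t₀).const_mul τ₁
      simpa [hE, mul_comm, Function.comp_def] using (Real.hasDerivAt_exp (τ₁ * (t - t₀))).comp t h1
    have hgpderiv : ∀ t ∈ Set.Ico t₀ T,
        HasDerivAt gp (-(c₂ * |x₁ t|) - k * (-(τ₁ * x₁ t) + c₁ * x₂ t) + ε * (τ₁ * E t)) t :=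
      fun t ht => ((hode t ht).2.sub ((hode t ht).1.const_mul k)).add ((hEderiv t).const_mul ε)
    have hgmderiv : ∀ t ∈ Set.Ico t₀ T,
        HasDerivAt gm (-(c₂ * |x₁ t|) + k * (-(τ₁ * x₁ t) + c₁ * x₂ t) + ε * (τ₁ * E t)) t :=
      fun t ht => ((hode t ht).2.add ((hode t ht).1.const_mul k)).add ((hEderiv t).const_mul ε)
    have hgpc : ∀ t ∈ Set.Ico t₀ T, ContinuousAt gp t :=
      fun t ht => (hgpderiv t ht).continuousAt
    have hgmc : ∀ t ∈ Set.Ico t₀ T, ContinuousAt gm t :=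
      fun t ht => (hgmderiv t ht).continuousAt
    have habs1 : x₁ t₀ ≤ |x₁ t₀| := le_abs_self _
    have habs2 : -x₁ t₀ ≤ |x₁ t₀| := neg_le_abs _
    have hinitp : 0 < gp t₀ := by
      have := mul_le_mul_of_nonneg_left habs1 (le_of_lt hkpos)
      simp only [hgp, hE0]
      nlinarith
    have hinitm : 0 < gm t₀ := by
      have := mul_le_mul_of_nonneg_left habs2 (le_of_lt hkpos)
      simp only [hgm, hE0]
      nlinarith
    by_contra hcon
    push_neg at hcon
    obtain ⟨t', ht', hbad⟩ := hcon
    set A : Set ℝ := {t | t ∈ Set.Ico t₀ T ∧ (gp t ≤ 0 ∨ gm t ≤ 0)} with hA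
    have hAne : A.Nonempty := by
      refine ⟨t', ht', ?_⟩
      rcases le_or_gt (gp t') 0 with h | h
      · exact Or.inl h
      rcases le_or_gt (gm t') 0 with h' | h'
      · exact Or.inr h'
      · exact absurd (hbad h) (not_le.2 h')
    have hAbdd : BddBelow A := ⟨t₀, fun t ht => ht.1.1⟩
    set t₁ := sInf A with ht₁
    have ht₁cl : t₁ ∈ closure A := csInf_mem_closure hAne hAbdd
    obtain ⟨ta, hta⟩ := hAne
    have ht₁T : t₁ < T := lt_of_le_of_lt (csInf_le hAbdd hta) hta.1.2
    have ht₁ge : t₀ ≤ t₁ := le_csInf ⟨ta, hta⟩ (fun t ht => ht.1.1)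
    have ht₁Ico : t₁ ∈ Set.Ico t₀ T := ⟨ht₁ge, ht₁T⟩
    have hnb : (𝓝[A] t₁).NeBot := mem_closure_iff_nhdsWithin_neBot.1 ht₁cl
    have hminA : ∀ᶠ t in 𝓝[A] t₁, min (gp t) (gm t) ≤ 0 :=
      eventually_mem_nhdsWithin.mono (fun t (ht : t ∈ A) => min_le_iff.2 ht.2)
    have hmin0 : min (gp t₁) (gm t₁) ≤ 0 :=
      le_of_tendsto (((hgpc _ ht₁Ico).continuousWithinAt).min
        ((hgmc _ ht₁Ico).continuousWithinAt)) hminA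
    have ht₁gt : t₀ < t₁ := by
      rcases eq_or_lt_of_le ht₁ge with heq | h
      · exfalso
        have : 0 < min (gp t₁) (gm t₁) := by rw [← heq]; exact lt_min hinitp hinitm
        linarith
      · exact h
    have hbefore : ∀ t ∈ Set.Ioo t₀ t₁, 0 < gp t ∧ 0 < gm t := by
      intro t ht
      have htA : t ∉ A := notMem_of_lt_csInf ht.2 hAbdd
      have htIco : t ∈ Set.Ico t₀ T := ⟨le_of_lt ht.1, lt_trans ht.2 ht₁T⟩
      by_contra hcc
      apply htA
      refine ⟨htIco, ?_⟩
      rcases le_or_gt (gp t) 0 with h | h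
      · exact Or.inl h
      rcases le_or_gt (gm t) 0 with h' | h'
      · exact Or.inr h'
      · exact absurd ⟨h, h'⟩ hcc
    have hIooMem : Set.Ioo t₀ t₁ ∈ 𝓝[<] t₁ := Ioo_mem_nhdsLT_of_mem ⟨ht₁gt, le_refl _⟩
    have hgp0 : 0 ≤ gp t₁ :=
      ge_of_tendsto ((hgpc _ ht₁Ico).continuousWithinAt)
        (eventually_of_mem hIooMem (fun t ht => le_of_lt (hbefore t ht).1))
    have hgm0 : 0 ≤ gm t₁ :=
      ge_of_tendsto ((hgmc _ ht₁Ico).continuousWithinAt)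
        (eventually_of_mem hIooMem (fun t ht => le_of_lt (hbefore t ht).2))
    have hEp := hEpos t₁
    have hτsq : τ₁ ^ 2 = 4 * k ^ 2 * c₁ ^ 2 := by rw [hk]; field_simp; ring
    have hcoef : 0 < k * τ₁ - k * k * c₁ - c₂ := by nlinarith
    have hkc2 : k * c₁ = τ₁ / 2 := by rw [hk]; field_simp
    rcases min_le_iff.1 hmin0 with hzp | hzm
    · -- gp t₁ = 0
      have heq : gp t₁ = 0 := le_antisymm hzp hgp0
      have hx1 : 0 ≤ x₁ t₁ := by
        have h1 : x₂ t₁ - k * x₁ t₁ + ε * E t₁ = 0 := heq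
        have h2 : 0 ≤ x₂ t₁ + k * x₁ t₁ + ε * E t₁ := hgm0
        by_contra hneg
        push_neg at hneg
        have h3 : 0 < k * -x₁ t₁ := mul_pos hkpos (neg_pos.2 hneg)
        have h4 : k * -x₁ t₁ = -(k * x₁ t₁) := by ring
        linarith [h4 ▸ h3]
      have habs : |x₁ t₁| = x₁ t₁ := abs_of_nonneg hx1
      have hdle : (-(c₂ * |x₁ t₁|) - k * (-(τ₁ * x₁ t₁) + c₁ * x₂ t₁) + ε * (τ₁ * E t₁)) ≤ 0 :=
        deriv_nonpos_of_left_pos' ht₁gt (hgpderiv t₁ ht₁Ico)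
          (fun t ht => (hbefore t ht).1) heq
      have hx2eq : x₂ t₁ = k * x₁ t₁ - ε * E t₁ := by
        have h1 : x₂ t₁ - k * x₁ t₁ + ε * E t₁ = 0 := heq
        linarith
      rw [habs] at hdle
      have hexpand : -(c₂ * x₁ t₁) - k * (-(τ₁ * x₁ t₁) + c₁ * x₂ t₁) + ε * (τ₁ * E t₁)
          = x₁ t₁ * (k * τ₁ - k * k * c₁ - c₂) + ε * E t₁ * (k * c₁ + τ₁) := by
        rw [hx2eq]; ring
      rw [hexpand] at hdle
      have p1 : 0 ≤ x₁ t₁ * (k * τ₁ - k * k * c₁ - c₂) := mul_nonneg hx1 hcoef.le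
      have p2 : 0 < ε * E t₁ * (k * c₁ + τ₁) := by
        apply mul_pos (mul_pos hε hEp); rw [hkc2]; linarith
      linarith
    · -- gm t₁ = 0
      have heq : gm t₁ = 0 := le_antisymm hzm hgm0
      have hx1 : x₁ t₁ ≤ 0 := by
        have h1 : x₂ t₁ + k * x₁ t₁ + ε * E t₁ = 0 := heq
        have h2 : 0 ≤ x₂ t₁ - k * x₁ t₁ + ε * E t₁ := hgp0
        by_contra hneg
        push_neg at hneg
        have h3 : 0 < k * x₁ t₁ := mul_pos hkpos hneg
        linarith
      have habs : |x₁ t₁| = -x₁ t₁ := abs_of_nonpos hx1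
      have hdle : (-(c₂ * |x₁ t₁|) + k * (-(τ₁ * x₁ t₁) + c₁ * x₂ t₁) + ε * (τ₁ * E t₁)) ≤ 0 :=
        deriv_nonpos_of_left_pos' ht₁gt (hgmderiv t₁ ht₁Ico)
          (fun t ht => (hbefore t ht).2) heq
      have hx2eq : x₂ t₁ = -(k * x₁ t₁) - ε * E t₁ := by
        have h1 : x₂ t₁ + k * x₁ t₁ + ε * E t₁ = 0 := heq
        linarith
      rw [habs] at hdle
      have hexpand : -(c₂ * -x₁ t₁) + k * (-(τ₁ * x₁ t₁) + c₁ * x₂ t₁) + ε * (τ₁ * E t₁)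
          = (-x₁ t₁) * (k * τ₁ + k * k * c₁ - c₂) + ε * E t₁ * (τ₁ - k * c₁) := by
        rw [hx2eq]; ring
      rw [hexpand] at hdle
      have p1 : 0 ≤ (-x₁ t₁) * (k * τ₁ + k * k * c₁ - c₂) := by
        apply mul_nonneg (neg_nonneg.2 hx1)
        nlinarith
      have p2 : 0 < ε * E t₁ * (τ₁ - k * c₁) := by
        apply mul_pos (mul_pos hε hEp); rw [hkc2]; linarith
      linarith
  -- let ε → 0
  intro t ht
  have hEt : (0:ℝ) < Real.exp (τ₁ * (t - t₀)) := Real.exp_pos _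
  have h1 : 0 ≤ x₂ t - k * x₁ t := by
    by_contra h
    push_neg at h
    have hε : 0 < (k * x₁ t - x₂ t) / Real.exp (τ₁ * (t - t₀)) := by
      apply div_pos (by linarith) hEt
    have := (key _ hε t ht).1
    rw [div_mul_cancel₀ _ (ne_of_gt hEt)] at this
    linarith
  have h2 : 0 ≤ x₂ t + k * x₁ t := by
    by_contra h
    push_neg at h
    have hε : 0 < (-(k * x₁ t) - x₂ t) / Real.exp (τ₁ * (t - t₀)) := by
      apply div_pos (by linarith) hEt
    have := (key _ hε t ht).2
    rw [div_mul_cancel₀ _ (ne_of_gt hEt)] at this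
    linarith
  rcases le_total 0 (x₁ t) with hx | hx
  · rw [abs_of_nonneg hx]; linarith
  · rw [abs_of_nonpos hx]; nlinarith

/-- For the cascade `ẋ₁ = −τ₁x₁ + c₁x₂`, `ẋ₂ = −c₂|x₁|` with `τ₁, c₁, c₂ > 0` and
`c₂ < τ₁²/(4c₁)`: every solution with `x₂(t₀) ≥ (τ₁/(2c₁))|x₁(t₀)|` is bounded in
forward time and satisfies `x₂(t) ≥ (τ₁/(2c₁))|x₁(t)|` for all `t ≥ t₀`; in particular
the system possesses nontrivial bounded forward solutions. -/
theorem cascade_bounded_solutions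
    (τ₁ c₁ c₂ : ℝ) (hτ₁ : 0 < τ₁) (hc₁ : 0 < c₁) (hc₂ : 0 < c₂)
    (hsg : c₂ < τ₁ ^ 2 / (4 * c₁)) :
    -- boundedness and forward invariance along every solution starting in the cone
    (∀ (t₀ T : ℝ) (x₁ x₂ : ℝ → ℝ),
      (∀ t ∈ Set.Ico t₀ T,
        HasDerivAt x₁ (-(τ₁ * x₁ t) + c₁ * x₂ t) t ∧
        HasDerivAt x₂ (-(c₂ * |x₁ t|)) t) →
      (τ₁ / (2 * c₁)) * |x₁ t₀| ≤ x₂ t₀ →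
      (∃ M : ℝ, ∀ t ∈ Set.Ico t₀ T, |x₁ t| ≤ M ∧ |x₂ t| ≤ M) ∧
      ∀ t ∈ Set.Ico t₀ T, (τ₁ / (2 * c₁)) * |x₁ t| ≤ x₂ t) ∧
    -- in particular, there exists a nontrivial bounded forward solution
    (∃ x₁ x₂ : ℝ → ℝ,
      (∀ t ∈ Set.Ici (0:ℝ),
        HasDerivAt x₁ (-(τ₁ * x₁ t) + c₁ * x₂ t) t ∧
        HasDerivAt x₂ (-(c₂ * |x₁ t|)) t) ∧
      (∃ t ∈ Set.Ici (0:ℝ), (x₁ t, x₂ t) ≠ (0, 0)) ∧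
      (∃ M : ℝ, ∀ t ∈ Set.Ici (0:ℝ), |x₁ t| ≤ M ∧ |x₂ t| ≤ M)) := by
  constructor
  · -- part 1
    intro t₀ T x₁ x₂ hode hinit
    have hcone := cone_invariant' τ₁ c₁ c₂ hτ₁ hc₁ hc₂ hsg t₀ T x₁ x₂ hode hinit
    have hkpos : 0 < τ₁ / (2 * c₁) := div_pos hτ₁ (by linarith)
    refine ⟨⟨max (x₂ t₀) ((2 * c₁ / τ₁) * x₂ t₀), ?_⟩, hcone⟩
    intro t ht
    -- x₂ is nonincreasing on [t₀, t]
    have hmono : x₂ t ≤ x₂ t₀ := by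
      rcases eq_or_lt_of_le ht.1 with heq | hlt
      · rw [← heq]
      · have hsub : Set.Icc t₀ t ⊆ Set.Ico t₀ T := fun s hs => ⟨hs.1, lt_of_le_of_lt hs.2 ht.2⟩
        have hconts : ContinuousOn x₂ (Set.Icc t₀ t) :=
          fun s hs => ((hode s (hsub hs)).2.continuousAt).continuousWithinAt
        have hdiff : DifferentiableOn ℝ x₂ (interior (Set.Icc t₀ t)) := by
          intro s hs
          rw [interior_Icc] at hs
          exact ((hode s (hsub ⟨hs.1.le, hs.2.le⟩)).2.differentiableAt).differentiableWithinAt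
        have hderiv : ∀ s ∈ interior (Set.Icc t₀ t), deriv x₂ s ≤ 0 := by
          intro s hs
          rw [interior_Icc] at hs
          rw [(hode s (hsub ⟨le_of_lt hs.1, le_of_lt hs.2⟩)).2.deriv]
          have : (0:ℝ) ≤ c₂ * |x₁ s| := mul_nonneg (le_of_lt hc₂) (abs_nonneg _)
          linarith
        exact antitoneOn_of_deriv_nonpos (convex_Icc t₀ t) hconts hdiff hderiv
          (Set.left_mem_Icc.2 ht.1) (Set.right_mem_Icc.2 ht.1) ht.1
    -- bounds
    have hc0 : 0 ≤ x₂ t := le_trans (mul_nonneg hkpos.le (abs_nonneg _)) (hcone t ht)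
    have hcx : τ₁ / (2 * c₁) * |x₁ t| ≤ x₂ t₀ := le_trans (hcone t ht) hmono
    constructor
    · -- |x₁ t| ≤ max ...
      have h1 : |x₁ t| ≤ 2 * c₁ / τ₁ * x₂ t₀ := by
        rw [div_mul_eq_mul_div, le_div_iff₀ hτ₁]
        have h := mul_le_mul_of_nonneg_left hcx (show (0:ℝ) ≤ 2 * c₁ by linarith)
        have hxx : 2 * c₁ * (τ₁ / (2 * c₁) * |x₁ t|) = |x₁ t| * τ₁ := by
          field_simp
        rw [hxx] at h
        linarith
      exact le_trans h1 (le_max_right _ _)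
    · have h2 : |x₂ t| = x₂ t := abs_of_nonneg hc0
      rw [h2]
      exact le_trans hmono (le_max_left _ _)
  · -- part 2: explicit exponentially decaying solution
    set s := Real.sqrt (τ₁ ^ 2 - 4 * c₁ * c₂) with hs
    have hD : 0 < τ₁ ^ 2 - 4 * c₁ * c₂ := by
      rw [lt_div_iff₀ (by positivity)] at hsg; linarith
    have hs2 : s ^ 2 = τ₁ ^ 2 - 4 * c₁ * c₂ := Real.sq_sqrt hD.le
    have hspos : 0 < s := Real.sqrt_pos.2 hD
    have hslt : s < τ₁ := by
      rw [hs]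
      exact (Real.sqrt_lt' hτ₁).2 (by nlinarith [mul_pos hc₁ hc₂])
    set lam := (s - τ₁) / 2 with hlam
    have hlamneg : lam < 0 := by rw [hlam]; linarith
    set a := (τ₁ + s) / (2 * c₁) with ha
    have hapos : 0 < a := by positivity
    refine ⟨fun t => Real.exp (lam * t), fun t => a * Real.exp (lam * t), ?_, ?_, ?_⟩
    · intro t _
      have hexp : HasDerivAt (fun t => Real.exp (lam * t)) (lam * Real.exp (lam * t)) t := by
        have h1 : HasDerivAt (fun t : ℝ => lam * t) lam t := by
          simpa using (hasDerivAt_id t).const_mul lam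
        have h2 := (Real.hasDerivAt_exp (lam * t)).comp t h1
        simpa [Function.comp_def, mul_comm] using h2
      have hEp : 0 < Real.exp (lam * t) := Real.exp_pos _
      constructor
      · have heq : lam * Real.exp (lam * t) =
            -(τ₁ * Real.exp (lam * t)) + c₁ * (a * Real.exp (lam * t)) := by
          have : c₁ * a = (τ₁ + s) / 2 := by rw [ha]; field_simp
          rw [hlam]
          nlinarith [this]
        exact heq ▸ hexp
      · have heq2 : a * (lam * Real.exp (lam * t)) =
            -(c₂ * |Real.exp (lam * t)|) := by
          rw [abs_of_pos hEp]
          have hal : a * lam = -c₂ := by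
            rw [ha, hlam]
            field_simp
            nlinarith [hs2]
          nlinarith [hal]
        exact heq2 ▸ (hexp.const_mul a)
    · refine ⟨0, Set.self_mem_Ici, ?_⟩
      simp only [mul_zero, Real.exp_zero, ne_eq, Prod.mk.injEq, not_and]
      intro h
      exact absurd h one_ne_zero
    · refine ⟨max 1 a, fun t ht => ?_⟩
      have hEp : 0 < Real.exp (lam * t) := Real.exp_pos _
      have hle1 : Real.exp (lam * t) ≤ 1 := by
        rw [show (1:ℝ) = Real.exp 0 by simp]
        exact Real.exp_le_exp.2 (mul_nonpos_iff.2 (Or.inr ⟨hlamneg.le, ht⟩))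
      constructor
      · rw [abs_of_pos hEp]; exact le_trans hle1 (le_max_left _ _)
      · rw [abs_of_pos (mul_pos hapos hEp)]
        calc a * Real.exp (lam * t) ≤ a * 1 := by nlinarith
          _ ≤ max 1 a := by rw [mul_one]; exact le_max_right _ _
end
end
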